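/- arXiv:1201.2212 — 5 statements merged into one kernel-verified Lean document; each statement's English description precedes it below -/
import Mathlib

section
/- Let H be a hyperplane arrangement in ℝ^d. Then the number of regions of H (connected components of ℝ^d \ ⋃H) is finite and equals (−1)^d · h_H(−1), where h_H is the characteristic polynomial of H. -/
open scoped Classical

/-- The flats of a hyperplane arrangement `H` in `ℝ^d`: nonempty intersections of
subcollections of `H` (including the empty intersection `ℝ^d`, i.e. `⊤`). -/
noncomputable def flats (d : ℕ) (H : Finset (AffineSubspace ℝ (Fin d → ℝ))) :
    Finset (AffineSubspace ℝ (Fin d → ℝ)) :=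
  (H.powerset.image fun S => S.inf id).filter fun F => ((F : Set (Fin d → ℝ))).Nonempty

open Finset Module

namespace Zas

variable {d : ℕ}

/-- The linear functional `x ↦ ∑ i, c i * x i`. -/
noncomputable def ell (c : Fin d → ℝ) : (Fin d → ℝ) →ₗ[ℝ] ℝ where
  toFun x := ∑ i, c i * x i
  map_add' x y := by simp [mul_add, Finset.sum_add_distrib]
  map_smul' s x := by simp [Finset.mul_sum, mul_left_comm]

variable (a : AffineSubspace ℝ (Fin d → ℝ) → (Fin d → ℝ))
variable (b : AffineSubspace ℝ (Fin d → ℝ) → ℝ)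

/-- The sign condition of a point w.r.t. a hyperplane, sign prescribed by membership in `S`. -/
def cellCond (S : Finset (AffineSubspace ℝ (Fin d → ℝ))) (B : AffineSubspace ℝ (Fin d → ℝ))
    (x : Fin d → ℝ) : Prop :=
  if B ∈ S then b B < ell (a B) x else ell (a B) x < b B

/-- Realizable sign vectors on `H` by points of `E`. -/
noncomputable def signVecs (E : AffineSubspace ℝ (Fin d → ℝ))
    (H : Finset (AffineSubspace ℝ (Fin d → ℝ))) :
    Finset (Finset (AffineSubspace ℝ (Fin d → ℝ))) :=
  H.powerset.filter fun S => ∃ x, x ∈ E ∧ ∀ B ∈ H, cellCond a b S B x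

/-- Hypothesis that `B` is the hyperplane given by `a B`, `b B`. -/
def IsHyp (B : AffineSubspace ℝ (Fin d → ℝ)) : Prop :=
  a B ≠ 0 ∧ (B : Set (Fin d → ℝ)) = {x | ell (a B) x = b B}

lemma IsHyp.mem_iff {B : AffineSubspace ℝ (Fin d → ℝ)} (h : IsHyp a b B) (x : Fin d → ℝ) :
    x ∈ B ↔ ell (a B) x = b B := by
  have : x ∈ (B : Set (Fin d → ℝ)) ↔ x ∈ {x | ell (a B) x = b B} := by rw [h.2]
  simpa using this

lemma IsHyp.ne_top {B : AffineSubspace ℝ (Fin d → ℝ)} (h : IsHyp a b B) : B ≠ ⊤ := by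
  intro hB
  obtain ⟨i, hi⟩ : ∃ i, a B i ≠ 0 := by
    by_contra hc
    push_neg at hc
    exact h.1 (funext hc)
  set x : Fin d → ℝ := fun j => if j = i then (b B + 1) / a B i else 0 with hx
  have hev : ell (a B) x = b B + 1 := by
    have : ∀ j ∈ Finset.univ, j ≠ i → a B j * x j = 0 := by
      intro j _ hj; simp [hx, hj]
    rw [show ell (a B) x = ∑ j, a B j * x j from rfl,
      Finset.sum_eq_single_of_mem i (Finset.mem_univ i) this]
    simp [hx]
    field_simp
  have hxB : x ∈ B := hB ▸ AffineSubspace.mem_top ℝ _ x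
  rw [h.mem_iff a b] at hxB
  rw [hxB] at hev
  linarith

lemma cellCond_ne {S B x} (h : cellCond a b S B x) : ell (a B) x ≠ b B := by
  unfold cellCond at h
  split at h <;> intro hc <;> rw [hc] at h <;> exact lt_irrefl _ h

lemma cellCond_congr {S T B x} (hB : B ∈ S ↔ B ∈ T) :
    cellCond a b S B x ↔ cellCond a b T B x := by
  unfold cellCond
  by_cases h : B ∈ S
  · rw [if_pos h, if_pos (hB.mp h)]
  · rw [if_neg h, if_neg (fun ht => h (hB.mpr ht))]


/-- Small perturbations along a direction of `E` preserve strict sign conditions. -/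
lemma perturb {E : AffineSubspace ℝ (Fin d → ℝ)} {H₀ : Finset (AffineSubspace ℝ (Fin d → ℝ))}
    {T : Finset (AffineSubspace ℝ (Fin d → ℝ))} {z v : Fin d → ℝ}
    (hzE : z ∈ E) (hv : v ∈ E.direction) (hz : ∀ B ∈ H₀, cellCond a b T B z) :
    ∃ δ : ℝ, 0 < δ ∧ ∀ t : ℝ, |t| < δ →
      (z + t • v ∈ E ∧ ∀ B ∈ H₀, cellCond a b T B (z + t • v)) := by
  have hmem : ∀ t : ℝ, z + t • v ∈ E := by
    intro t
    have := AffineSubspace.vadd_mem_of_mem_direction (E.direction.smul_mem t hv) hzE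
    simpa [add_comm] using this
  have hopen : IsOpen {t : ℝ | ∀ B ∈ H₀, cellCond a b T B (z + t • v)} := by
    have : {t : ℝ | ∀ B ∈ H₀, cellCond a b T B (z + t • v)} =
        ⋂ B ∈ H₀, {t : ℝ | cellCond a b T B (z + t • v)} := by
      ext t; simp
    rw [this]
    refine isOpen_biInter_finset fun B _ => ?_
    have hc : Continuous fun t : ℝ => ell (a B) (z + t • v) := by
      have : (fun t : ℝ => ell (a B) (z + t • v)) =
          fun t : ℝ => ell (a B) z + t * ell (a B) v := by
        funext t; simp [map_add, map_smul, smul_eq_mul]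
      rw [this]; continuity
    unfold cellCond
    split
    · exact isOpen_lt continuous_const hc
    · exact isOpen_lt hc continuous_const
  have h0 : (0 : ℝ) ∈ {t : ℝ | ∀ B ∈ H₀, cellCond a b T B (z + t • v)} := by
    simpa using hz
  rw [Metric.isOpen_iff] at hopen
  obtain ⟨δ, hδ, hball⟩ := hopen 0 h0
  refine ⟨δ, hδ, fun t ht => ⟨hmem t, ?_⟩⟩
  have : t ∈ Metric.ball (0 : ℝ) δ := by simpa [Real.dist_eq] using ht
  exact hball this

lemma combo_lt {c1 c2 r t : ℝ} (h1 : r < c1) (h2 : r < c2) (h0 : 0 ≤ t) (ht : t ≤ 1) :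
    r < (1 - t) * c1 + t * c2 := by
  rcases lt_or_ge t 1 with h | h
  · nlinarith
  · have : t = 1 := le_antisymm ht h
    rw [this]; ring_nf; linarith

/-- Convex combination of points satisfying strict sign conditions. -/
lemma combo_cellCond {T : Finset (AffineSubspace ℝ (Fin d → ℝ))}
    {B : AffineSubspace ℝ (Fin d → ℝ)} {x y : Fin d → ℝ} {t : ℝ}
    (hx : cellCond a b T B x) (hy : cellCond a b T B y) (h0 : 0 ≤ t) (h1 : t ≤ 1) :
    cellCond a b T B (x + t • (y - x)) := by
  unfold cellCond at *
  have hev : ell (a B) (x + t • (y - x)) =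
      (1 - t) * ell (a B) x + t * ell (a B) y := by
    simp only [map_add, map_smul, map_sub, smul_eq_mul]; ring
  by_cases hmem : B ∈ T
  · rw [if_pos hmem] at hx hy ⊢
    rw [hev]; exact combo_lt hx hy h0 h1
  · rw [if_neg hmem] at hx hy ⊢
    rw [hev]
    have := combo_lt (neg_lt_neg hx) (neg_lt_neg hy) h0 h1
    linarith

/-- If a cell of `E` has points strictly on both sides of `A`, it meets `A ⊓ E`. -/
lemma midpoint_mem {E A : AffineSubspace ℝ (Fin d → ℝ)}
    {H₀ T : Finset (AffineSubspace ℝ (Fin d → ℝ))} {x y : Fin d → ℝ}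
    (hxE : x ∈ E) (hyE : y ∈ E)
    (hx : ∀ B ∈ H₀, cellCond a b T B x) (hy : ∀ B ∈ H₀, cellCond a b T B y)
    (hAx : b A < ell (a A) x) (hAy : ell (a A) y < b A) :
    ∃ z, z ∈ E ∧ ell (a A) z = b A ∧ ∀ B ∈ H₀, cellCond a b T B z := by
  set t : ℝ := (ell (a A) x - b A) / (ell (a A) x - ell (a A) y) with htdef
  have hden : 0 < ell (a A) x - ell (a A) y := by linarith
  have ht0 : 0 ≤ t := le_of_lt (div_pos (by linarith) hden)
  have ht1 : t ≤ 1 := by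
    rw [htdef, div_le_one hden]; linarith
  refine ⟨x + t • (y - x), ?_, ?_, fun B hB => combo_cellCond a b (hx B hB) (hy B hB) ht0 ht1⟩
  · have := E.smul_vsub_vadd_mem t hyE hxE hxE
    simpa [vsub_eq_sub, vadd_eq_add, add_comm] using this
  · have : ell (a A) (x + t • (y - x)) = ell (a A) x + t * (ell (a A) y - ell (a A) x) := by
      simp [map_add, map_smul, map_sub, smul_eq_mul]
    rw [this, htdef]
    field_simp
    ring

set_option synthInstance.maxHeartbeats 1000000 in
set_option maxHeartbeats 1000000 in
lemma dim_drop {E A : AffineSubspace ℝ (Fin d → ℝ)}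
    (hA : ∀ x : Fin d → ℝ, x ∈ A ↔ ell (a A) x = b A)
    (hEA : ¬ E ≤ A) {z : Fin d → ℝ} (hzE : z ∈ E) (hzA : z ∈ A) :
    finrank ℝ E.direction = finrank ℝ (A ⊓ E).direction + 1 := by
  obtain ⟨w, hwE, hwA⟩ : ∃ w ∈ E, w ∉ A := by
    by_contra hc
    push_neg at hc
    exact hEA hc
  set L : E.direction →ₗ[ℝ] ℝ := (ell (a A)).comp E.direction.subtype with hL
  have hvmem : w - z ∈ E.direction := by
    have := AffineSubspace.vsub_mem_direction hwE hzE
    simpa [vsub_eq_sub] using this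
  have hLv : L ⟨w - z, hvmem⟩ ≠ 0 := by
    have hz' : ell (a A) z = b A := (hA z).mp hzA
    have hw' : ell (a A) w ≠ b A := fun h => hwA ((hA w).mpr h)
    simp only [hL, LinearMap.comp_apply, Submodule.subtype_apply, map_sub]
    intro h
    exact hw' ((sub_eq_zero.mp h).trans hz')
  have hrange : LinearMap.range L = ⊤ := by
    rw [Submodule.eq_top_iff']
    intro r
    set c := L ⟨w - z, hvmem⟩
    refine ⟨(r / c) • ⟨w - z, hvmem⟩, ?_⟩
    rw [map_smul, smul_eq_mul]
    exact div_mul_cancel₀ r hLv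
  have hker : (A ⊓ E).direction = (LinearMap.ker L).map E.direction.subtype := by
    have hne : ((A ⊓ E : AffineSubspace ℝ (Fin d → ℝ)) : Set (Fin d → ℝ)).Nonempty :=
      ⟨z, ⟨hzA, hzE⟩⟩
    ext v
    constructor
    · intro hv
      rw [AffineSubspace.mem_direction_iff_eq_vsub hne] at hv
      obtain ⟨p, hp, q, hq, rfl⟩ := hv
      have hpE : p ∈ E := hp.2
      have hqE : q ∈ E := hq.2
      have hmemdir : p -ᵥ q ∈ E.direction := AffineSubspace.vsub_mem_direction hpE hqE
      refine ⟨⟨p -ᵥ q, hmemdir⟩, ?_, rfl⟩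
      have : ell (a A) (p - q) = 0 := by
        have h1 : ell (a A) p = b A := (hA p).mp hp.1
        have h2 : ell (a A) q = b A := (hA q).mp hq.1
        rw [map_sub, h1, h2, sub_self]
      simpa [hL, LinearMap.mem_ker, vsub_eq_sub] using this
    · rintro ⟨⟨u, hu⟩, hku, rfl⟩
      have hu0 : ell (a A) u = 0 := by simpa [hL, LinearMap.mem_ker] using hku
      have h1 : u +ᵥ z ∈ E := AffineSubspace.vadd_mem_of_mem_direction hu hzE
      have h2 : u +ᵥ z ∈ A := by
        rw [hA]
        have : ell (a A) (u + z) = ell (a A) u + ell (a A) z := map_add _ _ _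
        have hz' : ell (a A) z = b A := (hA z).mp hzA
        simpa [vadd_eq_add, this, hu0] using hz'
      have : (u +ᵥ z) -ᵥ z ∈ (A ⊓ E).direction :=
        AffineSubspace.vsub_mem_direction ⟨h2, h1⟩ ⟨hzA, hzE⟩
      simpa [vadd_vsub] using this
  have hfker : finrank ℝ (A ⊓ E).direction = finrank ℝ (LinearMap.ker L) := by
    rw [hker]
    exact (Submodule.equivMapOfInjective E.direction.subtype
      (Submodule.injective_subtype _) (LinearMap.ker L)).symm.finrank_eq
  have := LinearMap.finrank_range_add_finrank_ker L
  rw [hrange, finrank_top, finrank_self] at this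
  omega

/-- Sign vectors on `H₀` realizable strictly on the positive side of `A`. -/
noncomputable def posVecs (A E : AffineSubspace ℝ (Fin d → ℝ))
    (H₀ : Finset (AffineSubspace ℝ (Fin d → ℝ))) :
    Finset (Finset (AffineSubspace ℝ (Fin d → ℝ))) :=
  H₀.powerset.filter fun T => ∃ x, x ∈ E ∧ b A < ell (a A) x ∧ ∀ B ∈ H₀, cellCond a b T B x

noncomputable def negVecs (A E : AffineSubspace ℝ (Fin d → ℝ))
    (H₀ : Finset (AffineSubspace ℝ (Fin d → ℝ))) :
    Finset (Finset (AffineSubspace ℝ (Fin d → ℝ))) :=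
  H₀.powerset.filter fun T => ∃ x, x ∈ E ∧ ell (a A) x < b A ∧ ∀ B ∈ H₀, cellCond a b T B x

/-- From a realizing point on `A ⊓ E`, perturbation gives realizing points on both sides. -/
lemma both_sides {E A : AffineSubspace ℝ (Fin d → ℝ)}
    {H₀ : Finset (AffineSubspace ℝ (Fin d → ℝ))}
    (hA : ∀ x : Fin d → ℝ, x ∈ A ↔ ell (a A) x = b A) (hEA : ¬ E ≤ A)
    {T : Finset (AffineSubspace ℝ (Fin d → ℝ))} {z : Fin d → ℝ}
    (hzE : z ∈ E) (hzA : ell (a A) z = b A) (hz : ∀ B ∈ H₀, cellCond a b T B z) :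
    (∃ x, x ∈ E ∧ b A < ell (a A) x ∧ ∀ B ∈ H₀, cellCond a b T B x) ∧
    (∃ y, y ∈ E ∧ ell (a A) y < b A ∧ ∀ B ∈ H₀, cellCond a b T B y) := by
  obtain ⟨w, hwE, hwA⟩ : ∃ w ∈ E, w ∉ A := by
    by_contra hc; push_neg at hc; exact hEA hc
  clear hEA
  have hvmem : w - z ∈ E.direction := by
    have := AffineSubspace.vsub_mem_direction hwE hzE
    simpa [vsub_eq_sub] using this
  set c := ell (a A) (w - z) with hc
  have hc0 : c ≠ 0 := by
    rw [hc, map_sub, hzA, sub_ne_zero]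
    exact fun h => hwA ((hA w).mpr h)
  obtain ⟨δ, hδ, hpert⟩ := perturb a b hzE hvmem hz
  have hval : ∀ t : ℝ, ell (a A) (z + t • (w - z)) = b A + t * c := by
    intro t
    simp only [map_add, map_smul, smul_eq_mul, hzA, hc]
  have mk : ∀ t : ℝ, |t| < δ →
      ∃ x, x ∈ E ∧ ell (a A) x = b A + t * c ∧ ∀ B ∈ H₀, cellCond a b T B x := by
    intro t ht
    obtain ⟨hmem, hconds⟩ := hpert t ht
    exact ⟨z + t • (w - z), hmem, hval t, hconds⟩
  have habs1 : |(-(δ/2) : ℝ)| < δ := by rw [abs_neg, abs_of_pos (by linarith)]; linarith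
  have habs2 : |(δ/2 : ℝ)| < δ := by rw [abs_of_pos (by linarith)]; linarith
  rcases lt_or_gt_of_ne hc0 with hcn | hcp
  · obtain ⟨x, hx1, hx2, hx3⟩ := mk (-(δ/2)) habs1
    obtain ⟨y, hy1, hy2, hy3⟩ := mk (δ/2) habs2
    exact ⟨⟨x, hx1, by rw [hx2]; nlinarith, hx3⟩, ⟨y, hy1, by rw [hy2]; nlinarith, hy3⟩⟩
  · obtain ⟨x, hx1, hx2, hx3⟩ := mk (δ/2) habs2
    obtain ⟨y, hy1, hy2, hy3⟩ := mk (-(δ/2)) habs1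
    exact ⟨⟨x, hx1, by rw [hx2]; nlinarith, hx3⟩, ⟨y, hy1, by rw [hy2]; nlinarith, hy3⟩⟩

lemma mem_signVecs {E : AffineSubspace ℝ (Fin d → ℝ)} {H S} :
    S ∈ signVecs a b E H ↔ S ⊆ H ∧ ∃ x, x ∈ E ∧ ∀ B ∈ H, cellCond a b S B x := by
  simp [signVecs]

lemma mem_posVecs {A E : AffineSubspace ℝ (Fin d → ℝ)} {H₀ T} :
    T ∈ posVecs a b A E H₀ ↔
      T ⊆ H₀ ∧ ∃ x, x ∈ E ∧ b A < ell (a A) x ∧ ∀ B ∈ H₀, cellCond a b T B x := by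
  simp [posVecs]

lemma mem_negVecs {A E : AffineSubspace ℝ (Fin d → ℝ)} {H₀ T} :
    T ∈ negVecs a b A E H₀ ↔
      T ⊆ H₀ ∧ ∃ x, x ∈ E ∧ ell (a A) x < b A ∧ ∀ B ∈ H₀, cellCond a b T B x := by
  simp [negVecs]

lemma signVecs_insert_card {E A : AffineSubspace ℝ (Fin d → ℝ)}
    {H₀ : Finset (AffineSubspace ℝ (Fin d → ℝ))}
    (hA : ∀ x : Fin d → ℝ, x ∈ A ↔ ell (a A) x = b A)
    (hAH : A ∉ H₀) (hEA : ¬ E ≤ A) :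
    (signVecs a b E (insert A H₀)).card
      = (signVecs a b E H₀).card + (signVecs a b (A ⊓ E) H₀).card := by
  classical
  set P := posVecs a b A E H₀ with hP
  set M := negVecs a b A E H₀ with hM
  have hMsub : ∀ T ∈ M, T ⊆ H₀ := fun T hT => ((mem_negVecs a b).mp hT).1
  have hPsub : ∀ T ∈ P, T ⊆ H₀ := fun T hT => ((mem_posVecs a b).mp hT).1
  have hsplit : signVecs a b E (insert A H₀) = P.image (insert A) ∪ M := by
    ext S
    rw [Finset.mem_union, Finset.mem_image, mem_signVecs]
    constructor
    · rintro ⟨hSsub, x, hxE, hx⟩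
      by_cases hAS : A ∈ S
      · left
        refine ⟨S.erase A, ?_, Finset.insert_erase hAS⟩
        rw [mem_posVecs]
        have hsub' : S.erase A ⊆ H₀ := by
          intro B hB
          obtain ⟨hBA, hBS⟩ := Finset.mem_erase.mp hB
          rcases Finset.mem_insert.mp (hSsub hBS) with h | h
          · exact absurd h hBA
          · exact h
        refine ⟨hsub', x, hxE, ?_, ?_⟩
        · have := hx A (Finset.mem_insert_self A H₀)
          unfold cellCond at this
          rwa [if_pos hAS] at this
        · intro B hB
          have hBA : B ≠ A := fun h => hAH (h ▸ hB)
          exact (cellCond_congr a b (by simp [Finset.mem_erase, hBA])).mp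
            (hx B (Finset.mem_insert_of_mem hB))
      · right
        rw [mem_negVecs]
        have hsub' : S ⊆ H₀ := by
          intro B hB
          rcases Finset.mem_insert.mp (hSsub hB) with h | h
          · exact absurd (h ▸ hB) hAS
          · exact h
        refine ⟨hsub', x, hxE, ?_, fun B hB => hx B (Finset.mem_insert_of_mem hB)⟩
        have := hx A (Finset.mem_insert_self A H₀)
        unfold cellCond at this
        rwa [if_neg hAS] at this
    · rintro (⟨T, hT, rfl⟩ | hSM)
      · obtain ⟨hTsub, x, hxE, hxA, hx⟩ := (mem_posVecs a b).mp hT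
        have hAT : A ∉ T := fun h => hAH (hTsub h)
        refine ⟨Finset.insert_subset_insert A hTsub, x, hxE, ?_⟩
        intro B hB
        rcases Finset.mem_insert.mp hB with rfl | hB'
        · unfold cellCond
          rwa [if_pos (Finset.mem_insert_self B T)]
        · have hBA : B ≠ A := fun h => hAH (h ▸ hB')
          exact (cellCond_congr a b (by simp [Finset.mem_insert, hBA])).mp (hx B hB')
      · obtain ⟨hSsub, x, hxE, hxA, hx⟩ := (mem_negVecs a b).mp hSM
        have hAS : A ∉ S := fun h => hAH (hSsub h)
        refine ⟨hSsub.trans (Finset.subset_insert A H₀), x, hxE, ?_⟩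
        intro B hB
        rcases Finset.mem_insert.mp hB with rfl | hB'
        · unfold cellCond
          rwa [if_neg hAS]
        · exact hx B hB'
  have hdisj : Disjoint (P.image (insert A)) M := by
    rw [Finset.disjoint_left]
    rintro S hS hSM
    obtain ⟨T, hT, rfl⟩ := Finset.mem_image.mp hS
    exact (fun h => h (Finset.mem_insert_self A T)) (fun h => hAH (hMsub _ hSM h))
  have hinj : (P.image (insert A)).card = P.card := by
    apply Finset.card_image_of_injOn
    intro T1 h1 T2 h2 he
    have hA1 : A ∉ T1 := fun h => hAH (hPsub _ h1 h)
    have hA2 : A ∉ T2 := fun h => hAH (hPsub _ h2 h)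
    rw [← Finset.erase_insert hA1, ← Finset.erase_insert hA2, he]
  have hunion : P ∪ M = signVecs a b E H₀ := by
    ext T
    rw [Finset.mem_union, hP, hM, mem_posVecs, mem_negVecs, mem_signVecs]
    constructor
    · rintro (⟨hs, x, h1, _, h3⟩ | ⟨hs, x, h1, _, h3⟩) <;> exact ⟨hs, x, h1, h3⟩
    · rintro ⟨hs, x, h1, h3⟩
      rcases lt_trichotomy (ell (a A) x) (b A) with h | h | h
      · right; exact ⟨hs, x, h1, h, h3⟩
      · obtain ⟨⟨xp, e1, e2, e3⟩, _⟩ := both_sides a b hA hEA h1 h h3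
        left; exact ⟨hs, xp, e1, e2, e3⟩
      · left; exact ⟨hs, x, h1, h, h3⟩
  have hinter : P ∩ M = signVecs a b (A ⊓ E) H₀ := by
    ext T
    rw [Finset.mem_inter, hP, hM, mem_posVecs, mem_negVecs, mem_signVecs]
    constructor
    · rintro ⟨⟨hs, x, hx1, hx2, hx3⟩, ⟨_, y, hy1, hy2, hy3⟩⟩
      obtain ⟨z, hz1, hz2, hz3⟩ := midpoint_mem a b hx1 hy1 hx3 hy3 hx2 hy2
      exact ⟨hs, z, ⟨(hA z).mpr hz2, hz1⟩, hz3⟩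
    · rintro ⟨hs, z, hz1, hz3⟩
      obtain ⟨hzA', hzE'⟩ := hz1
      obtain ⟨⟨xp, e1, e2, e3⟩, ⟨xm, f1, f2, f3⟩⟩ :=
        both_sides a b hA hEA hzE' ((hA z).mp hzA') hz3
      exact ⟨⟨hs, xp, e1, e2, e3⟩, ⟨hs, xm, f1, f2, f3⟩⟩
  have h1 : (signVecs a b E (insert A H₀)).card = P.card + M.card := by
    rw [hsplit, Finset.card_union_of_disjoint hdisj, hinj]
  have h2 := Finset.card_union_add_card_inter P M
  rw [hunion, hinter] at h2
  omega

/-- The Whitney-sum weight of a subset `S` relative to the ambient flat `E`. -/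
noncomputable def wt (E : AffineSubspace ℝ (Fin d → ℝ))
    (S : Finset (AffineSubspace ℝ (Fin d → ℝ))) : ℤ :=
  if (((S.inf id ⊓ E : AffineSubspace ℝ (Fin d → ℝ)) : Set (Fin d → ℝ))).Nonempty
  then (-1) ^ S.card *
    ((-1) ^ (finrank ℝ E.direction) * (-1) ^ (finrank ℝ (S.inf id ⊓ E).direction))
  else 0

/-- Main counting lemma: the number of cells of the arrangement `H` within the flat `E`
equals the Whitney sum. -/
lemma main_count : ∀ H : Finset (AffineSubspace ℝ (Fin d → ℝ)),
    (∀ B ∈ H, ∀ x : Fin d → ℝ, x ∈ B ↔ ell (a B) x = b B) →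
    ∀ E : AffineSubspace ℝ (Fin d → ℝ), ((E : Set (Fin d → ℝ))).Nonempty →
    ((signVecs a b E H).card : ℤ) = ∑ S ∈ H.powerset, wt E S := by
  intro H
  induction H using Finset.induction_on with
  | empty =>
    intro _ E hE
    have h1 : signVecs a b E ∅ = {∅} := by
      ext S
      rw [mem_signVecs, Finset.mem_singleton]
      constructor
      · rintro ⟨hs, -⟩
        exact Finset.subset_empty.mp hs
      · rintro rfl
        obtain ⟨x, hx⟩ := hE
        exact ⟨Finset.Subset.refl _, x, hx, fun B hB => absurd hB (Finset.notMem_empty B)⟩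
    rw [h1, Finset.powerset_empty, Finset.sum_singleton]
    unfold wt
    rw [Finset.inf_empty, top_inf_eq, if_pos hE]
    simp only [Finset.card_empty, pow_zero, one_mul, ← pow_add]
    rw [Even.neg_one_pow ⟨_, rfl⟩]
    simp
  | @insert A H₀ hAH ih =>
    intro hmem E hE
    have hmem₀ : ∀ B ∈ H₀, ∀ x : Fin d → ℝ, x ∈ B ↔ ell (a B) x = b B :=
      fun B hB => hmem B (Finset.mem_insert_of_mem hB)
    have hmemA : ∀ x : Fin d → ℝ, x ∈ A ↔ ell (a A) x = b A :=
      hmem A (Finset.mem_insert_self A H₀)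
    rw [Finset.sum_powerset_insert hAH]
    have hAnotin : ∀ S ∈ H₀.powerset, A ∉ S := fun S hS h =>
      hAH (Finset.mem_powerset.mp hS h)
    have hinf : ∀ S : Finset (AffineSubspace ℝ (Fin d → ℝ)),
        ((insert A S).inf id ⊓ E : AffineSubspace ℝ (Fin d → ℝ))
          = S.inf id ⊓ (A ⊓ E : AffineSubspace ℝ (Fin d → ℝ)) := by
      intro S
      rw [Finset.inf_insert]
      show (A ⊓ S.inf id) ⊓ E = S.inf id ⊓ (A ⊓ E)
      rw [inf_comm A (S.inf id), inf_assoc]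
    by_cases hEA : E ≤ A
    · -- E inside A : no cells, and the two halves of the sum cancel
      have hL : signVecs a b E (insert A H₀) = ∅ := by
        rw [Finset.eq_empty_iff_forall_notMem]
        intro S hS
        obtain ⟨hs, x, hx1, hx2⟩ := (mem_signVecs a b).mp hS
        exact cellCond_ne a b (hx2 A (Finset.mem_insert_self A H₀))
          ((hmemA x).mp (hEA hx1))
      have hAE : (A ⊓ E : AffineSubspace ℝ (Fin d → ℝ)) = E := inf_eq_right.mpr hEA
      have hterm : ∀ S ∈ H₀.powerset, wt E (insert A S) = - wt E S := by
        intro S hS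
        unfold wt
        rw [hinf S, hAE, Finset.card_insert_of_notMem (hAnotin S hS)]
        by_cases hne : (((S.inf id ⊓ E : AffineSubspace ℝ (Fin d → ℝ)) : Set (Fin d → ℝ))).Nonempty
        · rw [if_pos hne, if_pos hne, pow_succ]
          ring
        · rw [if_neg hne, if_neg hne, neg_zero]
      rw [Finset.sum_congr rfl hterm, Finset.sum_neg_distrib]
      rw [hL]
      simp
    · -- E not inside A
      rw [signVecs_insert_card a b hmemA hAH hEA]
      push_cast
      have hterm : ∀ S ∈ H₀.powerset, wt E (insert A S)
          = wt (A ⊓ E : AffineSubspace ℝ (Fin d → ℝ)) S := by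
        intro S hS
        unfold wt
        rw [hinf S, Finset.card_insert_of_notMem (hAnotin S hS)]
        by_cases hne : (((S.inf id ⊓ (A ⊓ E : AffineSubspace ℝ (Fin d → ℝ)) :
            AffineSubspace ℝ (Fin d → ℝ)) : Set (Fin d → ℝ))).Nonempty
        · rw [if_pos hne, if_pos hne]
          obtain ⟨z, hz⟩ := hne
          have hz' : z ∈ S.inf id ⊓ (A ⊓ E : AffineSubspace ℝ (Fin d → ℝ)) := hz
          have hzA : z ∈ A := hz'.2.1
          have hzE : z ∈ E := hz'.2.2
          have hdim := dim_drop a b hmemA hEA hzE hzA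
          rw [hdim, pow_succ, pow_succ]
          ring
        · rw [if_neg hne, if_neg hne]
      rw [Finset.sum_congr rfl hterm]
      rw [← ih hmem₀ E hE]
      by_cases hAE : (((A ⊓ E : AffineSubspace ℝ (Fin d → ℝ)) : Set (Fin d → ℝ))).Nonempty
      · rw [← ih hmem₀ _ hAE]
      · have h0 : signVecs a b (A ⊓ E : AffineSubspace ℝ (Fin d → ℝ)) H₀ = ∅ := by
          rw [Finset.eq_empty_iff_forall_notMem]
          intro S hS
          obtain ⟨-, x, hx1, -⟩ := (mem_signVecs a b).mp hS
          exact hAE ⟨x, hx1⟩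
        have h0' : ∀ S ∈ H₀.powerset,
            wt (A ⊓ E : AffineSubspace ℝ (Fin d → ℝ)) S = 0 := by
          intro S hS
          unfold wt
          rw [if_neg]
          rintro ⟨z, hz⟩
          have hz' : z ∈ S.inf id ⊓ (A ⊓ E : AffineSubspace ℝ (Fin d → ℝ)) := hz
          exact hAE ⟨z, hz'.2⟩
        rw [Finset.sum_congr rfl h0', h0]
        simp

section Topology

variable (H : Finset (AffineSubspace ℝ (Fin d → ℝ)))

/-- The open cell with sign vector `S`. -/
def cellSet (S : Finset (AffineSubspace ℝ (Fin d → ℝ))) : Set (Fin d → ℝ) :=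
  {x | ∀ B ∈ H, cellCond a b S B x}

lemma cellSet_eq (S) : cellSet a b H S = ⋂ B ∈ H, {x | cellCond a b S B x} := by
  ext x; simp [cellSet]

lemma isOpen_cellSet (S) : IsOpen (cellSet a b H S) := by
  rw [cellSet_eq]
  refine isOpen_biInter_finset fun B _ => ?_
  unfold cellCond
  have hc : Continuous (ell (a B)) := LinearMap.continuous_of_finiteDimensional _
  split
  · exact isOpen_lt continuous_const hc
  · exact isOpen_lt hc continuous_const

lemma convex_cellSet (S) : Convex ℝ (cellSet a b H S) := by
  rw [cellSet_eq]
  refine convex_iInter fun B => convex_iInter fun _ => ?_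
  unfold cellCond
  split
  · exact convex_halfSpace_gt (ell (a B)).isLinear _
  · exact convex_halfSpace_lt (ell (a B)).isLinear _

/-- The sign vector of a point. -/
noncomputable def sig (x : Fin d → ℝ) : Finset (AffineSubspace ℝ (Fin d → ℝ)) :=
  H.filter fun B => b B < ell (a B) x

lemma mem_cellSet_sig (hmem : ∀ B ∈ H, ∀ x : Fin d → ℝ, x ∈ B ↔ ell (a B) x = b B)
    {x : Fin d → ℝ} (hx : ∀ B ∈ H, x ∉ B) :
    x ∈ cellSet a b H (sig a b H x) := by
  intro B hB
  unfold cellCond sig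
  by_cases h : b B < ell (a B) x
  · rw [if_pos (Finset.mem_filter.mpr ⟨hB, h⟩)]
    exact h
  · have hnot : B ∉ Finset.filter (fun B => b B < ell (a B) x) H :=
      fun hc => h (Finset.mem_filter.mp hc).2
    rw [if_neg hnot]
    refine lt_of_le_of_ne (not_lt.mp h) ?_
    exact fun hc => hx B hB ((hmem B hB x).mpr hc)

lemma cellSet_subset_compl (hmem : ∀ B ∈ H, ∀ x : Fin d → ℝ, x ∈ B ↔ ell (a B) x = b B)
    {S : Finset (AffineSubspace ℝ (Fin d → ℝ))}
    {x : Fin d → ℝ} (hx : x ∈ cellSet a b H S) : ∀ B ∈ H, x ∉ B := by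
  intro B hB hxB
  exact cellCond_ne a b (hx B hB) ((hmem B hB x).mp hxB)

lemma cellSet_disjoint {S T : Finset (AffineSubspace ℝ (Fin d → ℝ))}
    (hS : S ⊆ H) (hT : T ⊆ H) (hST : S ≠ T) {x : Fin d → ℝ}
    (hxS : x ∈ cellSet a b H S) (hxT : x ∈ cellSet a b H T) : False := by
  obtain ⟨B, hB⟩ : ∃ B, (B ∈ S ∧ B ∉ T) ∨ (B ∈ T ∧ B ∉ S) := by
    by_contra hc
    push_neg at hc
    exact hST (Finset.ext fun B => ⟨(hc B).1, (hc B).2⟩)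
  rcases hB with ⟨h1, h2⟩ | ⟨h1, h2⟩
  · have hBH : B ∈ H := hS h1
    have c1 := hxS B hBH
    have c2 := hxT B hBH
    unfold cellCond at c1 c2
    rw [if_pos h1] at c1
    rw [if_neg h2] at c2
    linarith
  · have hBH : B ∈ H := hT h1
    have c1 := hxS B hBH
    have c2 := hxT B hBH
    unfold cellCond at c1 c2
    rw [if_neg h2] at c1
    rw [if_pos h1] at c2
    linarith


lemma components_count (hmem : ∀ B ∈ H, ∀ x : Fin d → ℝ, x ∈ B ↔ ell (a B) x = b B) :
    Finite (ConnectedComponents {x : Fin d → ℝ // ∀ A ∈ H, x ∉ A}) ∧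
    Nat.card (ConnectedComponents {x : Fin d → ℝ // ∀ A ∈ H, x ∉ A})
      = (signVecs a b ⊤ H).card := by
  set X := {x : Fin d → ℝ // ∀ A ∈ H, x ∉ A} with hX
  set cellX : Finset (AffineSubspace ℝ (Fin d → ℝ)) → Set X :=
    fun S => Subtype.val ⁻¹' cellSet a b H S with hcellX
  have hopenX : ∀ S, IsOpen (cellX S) :=
    fun S => (isOpen_cellSet a b H S).preimage continuous_subtype_val
  have hsig : ∀ x : X, x.1 ∈ cellSet a b H (sig a b H x.1) :=
    fun x => mem_cellSet_sig a b H hmem x.2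
  have hsig_sub : ∀ x : X, sig a b H x.1 ⊆ H := fun x => Finset.filter_subset _ _
  have hdisX : ∀ S T, S ⊆ H → T ⊆ H → S ≠ T → ∀ x : X, x ∈ cellX S → x ∈ cellX T → False :=
    fun S T hS hT hST x hxS hxT => cellSet_disjoint a b H hS hT hST hxS hxT
  have hclopen : ∀ S ∈ H.powerset, IsClopen (cellX S) := by
    intro S hS
    refine ⟨?_, hopenX S⟩
    have hcompl : (cellX S)ᶜ = ⋃ T ∈ H.powerset.erase S, cellX T := by
      ext x
      simp only [Set.mem_compl_iff, Set.mem_iUnion]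
      constructor
      · intro hx
        refine ⟨sig a b H x.1, ?_, hsig x⟩
        rw [Finset.mem_erase]
        refine ⟨?_, Finset.mem_powerset.mpr (hsig_sub x)⟩
        rintro rfl
        exact hx (hsig x)
      · rintro ⟨T, hT, hxT⟩ hxS
        rw [Finset.mem_erase, Finset.mem_powerset] at hT
        exact hdisX T S hT.2 (Finset.mem_powerset.mp hS) hT.1 x hxT hxS
    rw [← isOpen_compl_iff, hcompl]
    exact isOpen_biUnion fun T _ => hopenX T
  have hpreconn : ∀ S, IsPreconnected (cellX S) := by
    intro S
    have himg : Subtype.val '' cellX S = cellSet a b H S := by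
      apply Set.eq_of_subset_of_subset
      · exact Set.image_preimage_subset _ _
      · intro x hx
        exact ⟨⟨x, cellSet_subset_compl a b H hmem hx⟩, hx, rfl⟩
    have := (convex_cellSet a b H S).isPreconnected
    rw [← himg] at this
    exact Topology.IsInducing.subtypeVal.isPreconnected_image.mp this
  -- witness choice
  have hwit : ∀ S ∈ signVecs a b ⊤ H, ∃ x : X, x ∈ cellX S := by
    intro S hS
    obtain ⟨-, x, -, hx⟩ := (mem_signVecs a b).mp hS
    have hx' : x ∈ cellSet a b H S := hx
    exact ⟨⟨x, cellSet_subset_compl a b H hmem hx'⟩, hx'⟩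
  set φ : {S // S ∈ signVecs a b ⊤ H} → ConnectedComponents X :=
    fun S => ConnectedComponents.mk (Classical.choose (hwit S.1 S.2)) with hφ
  have hφspec : ∀ S : {S // S ∈ signVecs a b ⊤ H},
      (Classical.choose (hwit S.1 S.2)) ∈ cellX S.1 :=
    fun S => Classical.choose_spec (hwit S.1 S.2)
  have hbij : Function.Bijective φ := by
    constructor
    · rintro S T hST
      rw [hφ] at hST
      have h1 := ConnectedComponents.coe_eq_coe.mp hST
      set xS := Classical.choose (hwit S.1 S.2)
      set xT := Classical.choose (hwit T.1 T.2)
      have hsubS : connectedComponent xS ⊆ cellX S.1 :=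
        (hclopen S.1 (Finset.mem_powerset.mpr
          ((mem_signVecs a b).mp S.2).1)).connectedComponent_subset (hφspec S)
      have hxT_in : xT ∈ cellX S.1 := by
        rw [h1] at hsubS
        exact hsubS mem_connectedComponent
      by_contra hne
      have hne' : S.1 ≠ T.1 := fun h => hne (Subtype.ext h)
      exact hdisX S.1 T.1 ((mem_signVecs a b).mp S.2).1 ((mem_signVecs a b).mp T.2).1
        hne' xT hxT_in (hφspec T)
    · intro c
      obtain ⟨x, rfl⟩ := ConnectedComponents.surjective_coe c
      have hSmem : sig a b H x.1 ∈ signVecs a b ⊤ H := by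
        rw [mem_signVecs]
        exact ⟨hsig_sub x, x.1, AffineSubspace.mem_top ℝ _ _, hsig x⟩
      refine ⟨⟨sig a b H x.1, hSmem⟩, ?_⟩
      rw [hφ]
      apply ConnectedComponents.coe_eq_coe.mpr
      apply connectedComponent_eq
      exact (hpreconn (sig a b H x.1)).subset_connectedComponent
        (hφspec ⟨sig a b H x.1, hSmem⟩) (hsig x)
  constructor
  · exact Finite.of_surjective φ hbij.2
  · rw [← Nat.card_eq_of_bijective φ hbij, Nat.card_eq_finsetCard]

end Topology

lemma mem_flats {H : Finset (AffineSubspace ℝ (Fin d → ℝ))} {F} :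
    F ∈ flats d H ↔ (∃ S ⊆ H, S.inf id = F) ∧ ((F : Set (Fin d → ℝ))).Nonempty := by
  simp [flats]

lemma top_mem_flats {H : Finset (AffineSubspace ℝ (Fin d → ℝ))} : ⊤ ∈ flats d H := by
  rw [mem_flats]
  exact ⟨⟨∅, Finset.empty_subset H, Finset.inf_empty⟩, ⟨0, trivial⟩⟩

/-- The combinatorial Möbius values: `ν F = ∑_{S ⊆ H, ∩S = F} (-1)^|S|`. -/
noncomputable def nu (H : Finset (AffineSubspace ℝ (Fin d → ℝ)))
    (F : AffineSubspace ℝ (Fin d → ℝ)) : ℤ :=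
  ∑ S ∈ H.powerset.filter (fun S => S.inf id = F), (-1 : ℤ) ^ S.card

variable {H : Finset (AffineSubspace ℝ (Fin d → ℝ))}

lemma filter_le_eq_empty_iff (hne : ∀ B ∈ H, B ≠ ⊤) {F} (hF : F ∈ flats d H) :
    H.filter (fun B => F ≤ B) = ∅ ↔ F = ⊤ := by
  constructor
  · intro h
    obtain ⟨⟨S, hSH, hSinf⟩, -⟩ := mem_flats.mp hF
    by_contra hFt
    have hSne : S ≠ ∅ := by
      rintro rfl
      exact hFt (hSinf.symm.trans Finset.inf_empty ▸ rfl)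
    obtain ⟨B, hB⟩ := Finset.nonempty_of_ne_empty hSne
    have : B ∈ H.filter (fun B => F ≤ B) :=
      Finset.mem_filter.mpr ⟨hSH hB, hSinf ▸ Finset.inf_le hB⟩
    rw [h] at this
    exact absurd this (Finset.notMem_empty B)
  · rintro rfl
    rw [Finset.filter_eq_empty_iff]
    intro B hB hle
    exact hne B hB (top_le_iff.mp hle)

lemma sum_nu (hne : ∀ B ∈ H, B ≠ ⊤) {F} (hF : F ∈ flats d H) :
    ∑ G ∈ (flats d H).filter (fun G => F ≤ G), nu H G = if F = ⊤ then 1 else 0 := by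
  obtain ⟨-, hFne⟩ := mem_flats.mp hF
  obtain ⟨z, hz⟩ := hFne
  have hz' : z ∈ F := hz
  have hmaps : ∀ S ∈ H.powerset.filter (fun S => F ≤ S.inf id),
      S.inf id ∈ (flats d H).filter (fun G => F ≤ G) := by
    intro S hS
    obtain ⟨hSH, hFS⟩ := Finset.mem_filter.mp hS
    rw [Finset.mem_powerset] at hSH
    refine Finset.mem_filter.mpr ⟨?_, hFS⟩
    rw [mem_flats]
    exact ⟨⟨S, hSH, rfl⟩, ⟨z, hFS hz'⟩⟩
  have key : ∑ G ∈ (flats d H).filter (fun G => F ≤ G), nu H G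
      = ∑ S ∈ H.powerset.filter (fun S => F ≤ S.inf id), (-1 : ℤ) ^ S.card := by
    rw [← Finset.sum_fiberwise_of_maps_to hmaps (fun S => (-1 : ℤ) ^ S.card)]
    apply Finset.sum_congr rfl
    intro G hG
    obtain ⟨hGf, hFG⟩ := Finset.mem_filter.mp hG
    unfold nu
    apply Finset.sum_congr ?_ (fun _ _ => rfl)
    ext S
    simp only [Finset.mem_filter, Finset.mem_powerset, and_assoc]
    constructor
    · rintro ⟨h1, h3⟩
      exact ⟨h1, by rw [h3]; exact hFG, h3⟩
    · rintro ⟨h1, h2, h3⟩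
      exact ⟨h1, h3⟩
  rw [key]
  have hps : H.powerset.filter (fun S => F ≤ S.inf id)
      = (H.filter (fun B => F ≤ B)).powerset := by
    ext S
    simp only [Finset.mem_filter, Finset.mem_powerset]
    constructor
    · rintro ⟨h1, h2⟩
      intro B hB
      exact Finset.mem_filter.mpr ⟨h1 hB, le_trans h2 (Finset.inf_le hB)⟩
    · intro h
      refine ⟨fun B hB => (Finset.mem_filter.mp (h hB)).1, ?_⟩
      exact Finset.le_inf fun B hB => (Finset.mem_filter.mp (h hB)).2
  rw [hps, Finset.sum_powerset_neg_one_pow_card]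
  by_cases hFt : F = ⊤
  · rw [if_pos ((filter_le_eq_empty_iff hne hF).mpr hFt), if_pos hFt]
  · rw [if_neg (fun h => hFt ((filter_le_eq_empty_iff hne hF).mp h)), if_neg hFt]

lemma nu_rec (hne : ∀ B ∈ H, B ≠ ⊤) {F} (hF : F ∈ flats d H) (hFt : F ≠ ⊤) :
    nu H F = -∑ G ∈ (flats d H).filter (fun G => F < G), nu H G := by
  have hsplit : (flats d H).filter (fun G => F ≤ G)
      = insert F ((flats d H).filter (fun G => F < G)) := by
    ext G
    simp only [Finset.mem_filter, Finset.mem_insert]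
    constructor
    · rintro ⟨h1, h2⟩
      rcases eq_or_lt_of_le h2 with h | h
      · exact Or.inl h.symm
      · exact Or.inr ⟨h1, h⟩
    · rintro (h | ⟨h1, h2⟩)
      · subst h
        exact ⟨hF, le_rfl⟩
      · exact ⟨h1, le_of_lt h2⟩
  have hnotin : F ∉ (flats d H).filter (fun G => F < G) := by
    simp [lt_irrefl]
  have := sum_nu hne hF
  rw [hsplit, Finset.sum_insert hnotin, if_neg hFt] at this
  linarith

lemma mu_eq_nu (hne : ∀ B ∈ H, B ≠ ⊤)
    (μ : AffineSubspace ℝ (Fin d → ℝ) → ℤ) (hμtop : μ ⊤ = 1)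
    (hμ : ∀ F ∈ flats d H, F ≠ ⊤ →
      μ F = -∑ G ∈ (flats d H).filter (fun G => F < G), μ G) :
    ∀ F ∈ flats d H, μ F = nu H F := by
  have nu_top : nu H ⊤ = 1 := by
    unfold nu
    have : H.powerset.filter (fun S => S.inf id = ⊤) = {∅} := by
      ext S
      simp only [Finset.mem_filter, Finset.mem_powerset, Finset.mem_singleton]
      constructor
      · rintro ⟨h1, h2⟩
        by_contra hS
        obtain ⟨B, hB⟩ := Finset.nonempty_of_ne_empty hS
        have : (⊤ : AffineSubspace ℝ (Fin d → ℝ)) ≤ B := h2 ▸ Finset.inf_le hB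
        exact hne B (h1 hB) (top_le_iff.mp this)
      · rintro rfl
        exact ⟨Finset.empty_subset H, Finset.inf_empty⟩
    rw [this, Finset.sum_singleton]
    simp
  have main : ∀ n : ℕ, ∀ F ∈ flats d H,
      ((flats d H).filter (fun G => F < G)).card < n → μ F = nu H F := by
    intro n
    induction n with
    | zero => intro F _ h; omega
    | succ n ih =>
      intro F hF hcard
      by_cases hFt : F = ⊤
      · rw [hFt, hμtop, nu_top]
      · rw [hμ F hF hFt, nu_rec hne hF hFt, neg_inj]
        apply Finset.sum_congr rfl
        intro G hG
        obtain ⟨hGf, hFG⟩ := Finset.mem_filter.mp hG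
        apply ih G hGf
        have hsub : (flats d H).filter (fun G' => G < G')
            ⊆ ((flats d H).filter (fun G' => F < G')).erase G := by
          intro G' hG'
          obtain ⟨h1, h2⟩ := Finset.mem_filter.mp hG'
          exact Finset.mem_erase.mpr ⟨ne_of_gt h2, Finset.mem_filter.mpr ⟨h1, lt_trans hFG h2⟩⟩
        have h1 := Finset.card_le_card hsub
        have h2 := Finset.card_erase_of_mem hG
        have h3 : 0 < ((flats d H).filter (fun G' => F < G')).card :=
          Finset.card_pos.mpr ⟨G, hG⟩
        omega
  intro F hF
  exact main (((flats d H).filter (fun G => F < G)).card + 1) F hF (Nat.lt_succ_self _)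

/-- Möbius/Whitney: the characteristic-polynomial sum equals the subset expansion. -/
lemma mobius_whitney (hne : ∀ B ∈ H, B ≠ ⊤)
    (μ : AffineSubspace ℝ (Fin d → ℝ) → ℤ) (hμtop : μ ⊤ = 1)
    (hμ : ∀ F ∈ flats d H, F ≠ ⊤ →
      μ F = -∑ G ∈ (flats d H).filter (fun G => F < G), μ G) :
    ∑ F ∈ flats d H, μ F * (-1) ^ (finrank ℝ F.direction)
      = ∑ S ∈ H.powerset, (if (((S.inf id : AffineSubspace ℝ (Fin d → ℝ)) :
          Set (Fin d → ℝ))).Nonempty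
          then (-1 : ℤ) ^ S.card * (-1) ^ (finrank ℝ (S.inf id :
            AffineSubspace ℝ (Fin d → ℝ)).direction) else 0) := by
  rw [← Finset.sum_filter]
  have hmaps : ∀ S ∈ H.powerset.filter (fun S =>
      (((S.inf id : AffineSubspace ℝ (Fin d → ℝ)) : Set (Fin d → ℝ))).Nonempty),
      S.inf id ∈ flats d H := by
    intro S hS
    obtain ⟨hSH, hSne⟩ := Finset.mem_filter.mp hS
    rw [Finset.mem_powerset] at hSH
    rw [mem_flats]
    exact ⟨⟨S, hSH, rfl⟩, hSne⟩
  rw [← Finset.sum_fiberwise_of_maps_to hmaps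
    (fun S => (-1 : ℤ) ^ S.card * (-1) ^ (finrank ℝ (S.inf id :
      AffineSubspace ℝ (Fin d → ℝ)).direction))]
  apply Finset.sum_congr rfl
  intro F hF
  rw [mu_eq_nu hne μ hμtop hμ F hF]
  have hfib : (H.powerset.filter (fun S =>
        (((S.inf id : AffineSubspace ℝ (Fin d → ℝ)) : Set (Fin d → ℝ))).Nonempty)).filter
      (fun S => S.inf id = F) = H.powerset.filter (fun S => S.inf id = F) := by
    ext S
    simp only [Finset.mem_filter, Finset.mem_powerset]
    constructor
    · rintro ⟨⟨h1, h2⟩, h3⟩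
      exact ⟨h1, h3⟩
    · rintro ⟨h1, h3⟩
      exact ⟨⟨h1, h3 ▸ (mem_flats.mp hF).2⟩, h3⟩
  rw [hfib]
  unfold nu
  rw [Finset.sum_mul]
  apply Finset.sum_congr rfl
  intro S hS
  rw [(Finset.mem_filter.mp hS).2]


end Zas

/-- **Zaslavsky's theorem.** The number of regions of a hyperplane arrangement `H` in `ℝ^d`
is finite and equals `(-1)^d * h_H(-1)`, where `h_H` is the characteristic polynomial of `H`,
defined via the Möbius function `μ` of the poset of flats (ordered by reverse inclusion). -/
theorem zaslavsky (d : ℕ) (H : Finset (AffineSubspace ℝ (Fin d → ℝ)))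
    (hH : ∀ A ∈ H, ∃ (a : Fin d → ℝ) (b : ℝ), a ≠ 0 ∧
      (A : Set (Fin d → ℝ)) = {x | ∑ i, a i * x i = b})
    (μ : AffineSubspace ℝ (Fin d → ℝ) → ℤ)
    (hμtop : μ ⊤ = 1)
    (hμ : ∀ F ∈ flats d H, F ≠ ⊤ →
      μ F = -∑ G ∈ (flats d H).filter (fun G => F < G), μ G) :
    Finite (ConnectedComponents {x : Fin d → ℝ // ∀ A ∈ H, x ∉ A}) ∧
    (Nat.card (ConnectedComponents {x : Fin d → ℝ // ∀ A ∈ H, x ∉ A}) : ℤ)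
      = (-1) ^ d * ∑ F ∈ flats d H, μ F * (-1) ^ (Module.finrank ℝ F.direction) := by
  classical
  have hch : ∀ B : AffineSubspace ℝ (Fin d → ℝ), B ∈ H → ∃ p : (Fin d → ℝ) × ℝ, p.1 ≠ 0 ∧
      (B : Set (Fin d → ℝ)) = {x | Zas.ell p.1 x = p.2} := by
    intro B hB
    obtain ⟨aa, bb, h1, h2⟩ := hH B hB
    exact ⟨(aa, bb), h1, h2⟩
  set a : AffineSubspace ℝ (Fin d → ℝ) → (Fin d → ℝ) :=
    fun B => if h : B ∈ H then (hch B h).choose.1 else 0 with ha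
  set b : AffineSubspace ℝ (Fin d → ℝ) → ℝ :=
    fun B => if h : B ∈ H then (hch B h).choose.2 else 0 with hb
  have hprop : ∀ B ∈ H, a B ≠ 0 ∧ (B : Set (Fin d → ℝ)) = {x | Zas.ell (a B) x = b B} := by
    intro B hB
    have := (hch B hB).choose_spec
    rw [ha, hb]
    simp only [dif_pos hB]
    exact this
  have hmem : ∀ B ∈ H, ∀ x : Fin d → ℝ, x ∈ B ↔ Zas.ell (a B) x = b B := by
    intro B hB x
    have h2 := (hprop B hB).2
    constructor
    · intro h
      have hx : x ∈ (B : Set (Fin d → ℝ)) := h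
      rw [h2] at hx
      exact hx
    · intro h
      have hx : x ∈ (B : Set (Fin d → ℝ)) := by rw [h2]; exact h
      exact hx
  have hne : ∀ B ∈ H, B ≠ ⊤ :=
    fun B hB => Zas.IsHyp.ne_top a b ⟨(hprop B hB).1, (hprop B hB).2⟩
  obtain ⟨hfin, hcard⟩ := Zas.components_count a b H hmem
  refine ⟨hfin, ?_⟩
  rw [hcard]
  rw [Zas.main_count a b H hmem ⊤ ⟨0, trivial⟩]
  rw [Zas.mobius_whitney hne μ hμtop hμ]
  rw [Finset.mul_sum]
  apply Finset.sum_congr rfl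
  intro S hS
  unfold Zas.wt
  rw [inf_top_eq]
  have hdir : Module.finrank ℝ ((⊤ : AffineSubspace ℝ (Fin d → ℝ)).direction) = d := by
    rw [AffineSubspace.direction_top, finrank_top, Module.finrank_pi]
    simp
  rw [hdir]
  split
  · ring
  · rw [mul_zero]
end

section
/- Let G = (V,E) be a finite simple graph. There exists a polynomial c_G with integer coefficients such that for every positive integer t, c_G(t) equals the number of proper t-colorings of G; moreover, for every positive integer t, (−1)^{|V|} · c_G(−t) equals the number of pairs (x, σ) where x : V → {1,…,t} is a (not necessarily proper) t-coloring and σ is an acyclic orientation of G compatible with x. -/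
/-- `o` is an orientation of the simple graph `G`: it directs each edge of `G` in exactly
one of the two possible ways, and directs nothing else. -/
def IsOrientationOf {V : Type*} (G : SimpleGraph V) (o : V → V → Prop) : Prop :=
  (∀ i j, o i j → G.Adj i j) ∧ (∀ i j, G.Adj i j → (o i j ↔ ¬ o j i))

/-- An orientation is acyclic if it has no directed cycle, i.e. its transitive closure is
irreflexive. -/
def IsAcyclicOrientation {V : Type*} (G : SimpleGraph V) (o : V → V → Prop) : Prop :=
  IsOrientationOf G o ∧ ∀ i, ¬ Relation.TransGen o i i

open Relation

namespace ChromRec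


variable {V : Type*}

lemma le_of_rtg {σ : V → V → Prop} {t : ℕ} {x : V → Fin t}
    (h : ∀ i j, σ i j → x i ≤ x j) {a b : V} (hab : ReflTransGen σ a b) : x a ≤ x b := by
  induction hab with
  | refl => exact le_refl _
  | tail _ h2 ih => exact le_trans ih (h _ _ h2)

/-- decomposition of paths after adding a single arc `u → v`. -/
lemma tg_arc_decompose {σ' : V → V → Prop} {u v : V} {a b : V}
    (h : TransGen (fun p q => σ' p q ∨ (p = u ∧ q = v)) a b) :
    TransGen σ' a b ∨ (ReflTransGen σ' a u ∧ ReflTransGen σ' v b) := by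
  induction h with
  | single h1 =>
    rcases h1 with h1 | ⟨rfl, rfl⟩
    · exact Or.inl (TransGen.single h1)
    · exact Or.inr ⟨ReflTransGen.refl, ReflTransGen.refl⟩
  | tail h1 h2 ih =>
    rcases h2 with h2 | ⟨rfl, rfl⟩
    · rcases ih with ih | ⟨ih1, ih2⟩
      · exact Or.inl (ih.tail h2)
      · exact Or.inr ⟨ih1, ih2.tail h2⟩
    · rcases ih with ih | ⟨ih1, _⟩
      · exact Or.inr ⟨ih.to_reflTransGen, ReflTransGen.refl⟩
      · exact Or.inr ⟨ih1, ReflTransGen.refl⟩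

lemma acyclic_extend {σ' : V → V → Prop} {u v : V}
    (hcyc : ∀ i, ¬ TransGen σ' i i) (hvu : ¬ ReflTransGen σ' v u) :
    ∀ i, ¬ TransGen (fun p q => σ' p q ∨ (p = u ∧ q = v)) i i := by
  intro i hi
  rcases tg_arc_decompose hi with h | ⟨h1, h2⟩
  · exact hcyc i h
  · exact hvu (h2.trans h1)

lemma rtg_of_not {σ' : V → V → Prop} {u v : V} (huv : u ≠ v)
    (h : ReflTransGen σ' v u) : TransGen σ' v u := by
  rcases (reflTransGen_iff_eq_or_transGen.mp h) with rfl | h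
  · exact absurd rfl huv.symm
  · exact h



variable {V : Type*}

def mset (u v : V) : Setoid V :=
  ⟨fun a b => a = b ∨ (a = u ∧ b = v) ∨ (a = v ∧ b = u), by
    constructor
    · intro a; exact Or.inl rfl
    · rintro a b (rfl | ⟨rfl, rfl⟩ | ⟨rfl, rfl⟩)
      · exact Or.inl rfl
      · exact Or.inr (Or.inr ⟨rfl, rfl⟩)
      · exact Or.inr (Or.inl ⟨rfl, rfl⟩)
    · intro a b c hab hbc
      rcases hab with rfl | ⟨rfl, rfl⟩ | ⟨rfl, rfl⟩ <;>
        rcases hbc with rfl | ⟨h1, rfl⟩ | ⟨h1, rfl⟩ <;> tauto⟩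

abbrev Qt (u v : V) := Quotient (mset u v)

lemma mset_rel {u v a b : V} (h : (mset u v).r a b) :
    a = b ∨ (a = u ∧ b = v) ∨ (a = v ∧ b = u) := h

lemma qmk_eq_iff {u v a b : V} :
    (Quotient.mk (mset u v) a = Quotient.mk (mset u v) b) ↔
      (a = b ∨ (a = u ∧ b = v) ∨ (a = v ∧ b = u)) := by
  constructor
  · intro h; exact Quotient.exact h
  · intro h; exact Quotient.sound h

/-- contraction graph -/
def cgraph (G : SimpleGraph V) (u v : V) : SimpleGraph (Qt u v) where
  Adj a b := a ≠ b ∧ ∃ x y, Quotient.mk (mset u v) x = a ∧ Quotient.mk (mset u v) y = b ∧ G.Adj x y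
  symm := by
    constructor; rintro a b ⟨hab, x, y, hx, hy, hadj⟩
    exact ⟨hab.symm, y, x, hy, hx, hadj.symm⟩
  loopless := by constructor; rintro a ⟨hne, _⟩; exact hne rfl

/-- the quotient is equivalent to the complement of `v`. -/
noncomputable def qtEquiv {u v : V} (huv : u ≠ v) : Qt u v ≃ {x : V // x ≠ v} := by
  classical
  let f : V → {x : V // x ≠ v} := fun x => if h : x = v then ⟨u, huv⟩ else ⟨x, h⟩
  have hresp : ∀ a b, (mset u v).r a b → f a = f b := by
    rintro a b (rfl | ⟨rfl, rfl⟩ | ⟨rfl, rfl⟩)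
    · rfl
    · simp [f, huv, huv.symm]
    · simp [f, huv, huv.symm]
  refine Equiv.ofBijective (Quotient.lift f hresp) ⟨?_, ?_⟩
  · rintro ⟨a⟩ ⟨b⟩ h
    have h' : f a = f b := h
    apply Quotient.sound
    by_cases ha : a = v <;> by_cases hb : b = v <;>
      simp only [f, ha, hb, dif_pos, dif_neg, not_false_iff, Subtype.mk.injEq] at h'
    · exact Or.inl (ha.trans hb.symm)
    · subst ha; exact Or.inr (Or.inr ⟨rfl, h'.symm⟩)
    · subst hb; exact Or.inr (Or.inl ⟨h', rfl⟩)
    · exact Or.inl h'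
  · rintro ⟨x, hx⟩
    refine ⟨Quotient.mk _ x, ?_⟩
    show f x = _
    simp [f, hx]

lemma card_qt {u v : V} [Fintype V] (huv : u ≠ v) :
    Fintype.card V = Nat.card (Qt u v) + 1 := by
  letI := Classical.decEq V
  rw [Nat.card_congr (qtEquiv huv)]
  rw [Nat.card_eq_fintype_card, Fintype.card_subtype_compl, ← Nat.card_eq_fintype_card]
  have : 1 ≤ Fintype.card V := Fintype.card_pos_iff.mpr ⟨u⟩
  simp only [Nat.card_eq_fintype_card]
  have h1 : Fintype.card {x : V // x = v} = 1 := Fintype.card_subtype_eq v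
  omega


/-- the descended relation on the quotient. -/
def qbar (u v : V) (σ' : V → V → Prop) : Qt u v → Qt u v → Prop :=
  fun a b => ∃ i j, Quotient.mk (mset u v) i = a ∧ Quotient.mk (mset u v) j = b ∧ σ' i j

def nu (u v : V) (σ' : V → V → Prop) : V → V → Prop :=
  fun p q => σ' p q ∨ (p = u ∧ σ' v q) ∨ (p = v ∧ σ' u q)

lemma tg_qbar_to_nu {u v : V} {σ' : V → V → Prop} {a b : Qt u v}
    (h : TransGen (qbar u v σ') a b) :
    ∃ i j, Quotient.mk (mset u v) i = a ∧ Quotient.mk (mset u v) j = b ∧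
      TransGen (nu u v σ') i j := by
  induction h with
  | single h1 =>
    obtain ⟨i, j, hi, hj, hs⟩ := h1
    exact ⟨i, j, hi, hj, TransGen.single (Or.inl hs)⟩
  | tail h1 h2 ih =>
    obtain ⟨i, j', hi, hj', htg⟩ := ih
    obtain ⟨p, q, hp, hq, hs⟩ := h2
    refine ⟨i, q, hi, hq, TransGen.tail htg ?_⟩
    have : Quotient.mk (mset u v) p = Quotient.mk (mset u v) j' := hp.trans hj'.symm
    rcases qmk_eq_iff.mp this with rfl | ⟨rfl, rfl⟩ | ⟨rfl, rfl⟩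
    · exact Or.inl hs
    · exact Or.inr (Or.inr ⟨rfl, hs⟩)
    · exact Or.inr (Or.inl ⟨rfl, hs⟩)

lemma nu_good {u v : V} {σ' : V → V → Prop} {i j : V}
    (h : TransGen (nu u v σ') i j)
    (hBad : ¬ (TransGen σ' u v ∨ TransGen σ' v u ∨ ∃ k, TransGen σ' k k)) :
    TransGen σ' i j ∨ (ReflTransGen σ' i u ∧ TransGen σ' v j) ∨
      (ReflTransGen σ' i v ∧ TransGen σ' u j) := by
  induction h with
  | single h1 =>
    rcases h1 with h1 | ⟨rfl, h1⟩ | ⟨rfl, h1⟩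
    · exact Or.inl (TransGen.single h1)
    · exact Or.inr (Or.inl ⟨ReflTransGen.refl, TransGen.single h1⟩)
    · exact Or.inr (Or.inr ⟨ReflTransGen.refl, TransGen.single h1⟩)
  | tail h1 h2 ih =>
    rcases h2 with h2 | ⟨he, h2⟩ | ⟨he, h2⟩ <;> rcases ih with ih | ⟨ih1, ih2⟩ | ⟨ih1, ih2⟩
    · exact Or.inl (ih.tail h2)
    · exact Or.inr (Or.inl ⟨ih1, ih2.tail h2⟩)
    · exact Or.inr (Or.inr ⟨ih1, ih2.tail h2⟩)
    · exact Or.inr (Or.inl ⟨(he ▸ ih).to_reflTransGen, TransGen.single h2⟩)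
    · exact absurd (Or.inr (Or.inl (he ▸ ih2))) hBad
    · exact absurd (Or.inr (Or.inr ⟨u, he ▸ ih2⟩)) hBad
    · exact Or.inr (Or.inr ⟨(he ▸ ih).to_reflTransGen, TransGen.single h2⟩)
    · exact absurd (Or.inr (Or.inr ⟨v, he ▸ ih2⟩)) hBad
    · exact absurd (Or.inl (he ▸ ih2)) hBad

lemma qbar_acyclic {u v : V} {σ' : V → V → Prop} (huv : u ≠ v)
    (hcyc : ∀ i, ¬ TransGen σ' i i) (huv' : ¬ TransGen σ' u v) (hvu' : ¬ TransGen σ' v u) :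
    ∀ a, ¬ TransGen (qbar u v σ') a a := by
  intro a ha
  have hBad : ¬ (TransGen σ' u v ∨ TransGen σ' v u ∨ ∃ k, TransGen σ' k k) := by
    rintro (h | h | ⟨k, h⟩)
    · exact huv' h
    · exact hvu' h
    · exact hcyc k h
  obtain ⟨i, j, hi, hj, htg⟩ := tg_qbar_to_nu ha
  have hij : Quotient.mk (mset u v) i = Quotient.mk (mset u v) j := hi.trans hj.symm
  rcases nu_good htg hBad with h | ⟨h1, h2⟩ | ⟨h1, h2⟩ <;>
    rcases qmk_eq_iff.mp hij with he | ⟨he1, he2⟩ | ⟨he1, he2⟩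
  · exact hcyc j (he ▸ h)
  · exact huv' (he1 ▸ he2 ▸ h)
  · exact hvu' (he1 ▸ he2 ▸ h)
  · exact hvu' (h2.trans_left (he ▸ h1))
  · exact hcyc v (he2 ▸ h2)
  · exact hvu' (rtg_of_not huv (he1 ▸ h1))
  · exact huv' (h2.trans_left (he ▸ h1))
  · exact huv' (rtg_of_not huv.symm (he1 ▸ h1))
  · exact hcyc u (he2 ▸ h2)

def res (u v : V) (σ : V → V → Prop) : V → V → Prop :=
  fun i j => σ i j ∧ s(i, j) ≠ s(u, v)

def ext (a b : V) (σ : V → V → Prop) : V → V → Prop :=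
  fun i j => σ i j ∨ (i = a ∧ j = b)

lemma Hadj {G : SimpleGraph V} {u v i j : V} :
    (G.deleteEdges {s(u, v)}).Adj i j ↔ G.Adj i j ∧ s(i, j) ≠ s(u, v) := by
  simp [SimpleGraph.deleteEdges_adj]

section oriented
variable {G : SimpleGraph V} {u v : V}

lemma res_orient {σ : V → V → Prop} (h : IsOrientationOf G σ) :
    IsOrientationOf (G.deleteEdges {s(u, v)}) (res u v σ) := by
  obtain ⟨h1, h2⟩ := h
  constructor
  · intro i j ⟨hs, hne⟩
    exact Hadj.mpr ⟨h1 _ _ hs, hne⟩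
  · intro i j hij
    obtain ⟨hadj, hne⟩ := Hadj.mp hij
    have hne' : s(j, i) ≠ s(u, v) := by rwa [Sym2.eq_swap]
    simp only [res, hne, hne', not_false_iff, and_true]
    rw [h2 _ _ hadj]
    tauto

lemma res_acyclic {σ : V → V → Prop} (h : ∀ i, ¬ TransGen σ i i) :
    ∀ i, ¬ TransGen (res u v σ) i i := by
  intro i hi
  exact h i (TransGen.mono (fun a b hab => hab.1) _ _ hi)

lemma ext_eq_arc {a b : V} {σ : V → V → Prop} :
    ext a b σ = fun p q => σ p q ∨ (p = a ∧ q = b) := rfl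

lemma ext_orient {a b : V} (hab : G.Adj a b) (hs : s(a, b) = s(u, v))
    {σ' : V → V → Prop} (h : IsOrientationOf (G.deleteEdges {s(u, v)}) σ') :
    IsOrientationOf G (ext a b σ') := by
  obtain ⟨h1, h2⟩ := h
  constructor
  · rintro i j (hij | ⟨rfl, rfl⟩)
    · exact ((Hadj.mp (h1 _ _ hij))).1
    · exact hab
  · intro i j hij
    by_cases hsij : s(i, j) = s(u, v)
    · -- i j is the special edge
      have : (i = a ∧ j = b) ∨ (i = b ∧ j = a) := by
        rw [← hs] at hsij
        exact Sym2.eq_iff.mp hsij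
      have hnσab : ¬ σ' a b := fun hc => ((Hadj.mp (h1 _ _ hc)).2) hs
      have hnσba : ¬ σ' b a := fun hc => ((Hadj.mp (h1 _ _ hc)).2) (by rwa [Sym2.eq_swap])
      have hne : a ≠ b := hab.ne
      rcases this with ⟨rfl, rfl⟩ | ⟨rfl, rfl⟩ <;>
        simp [ext, hnσab, hnσba, hne, hne.symm]
    · have hH : (G.deleteEdges {s(u, v)}).Adj i j := Hadj.mpr ⟨hij, hsij⟩
      have hsji : s(j, i) ≠ s(u, v) := by rwa [Sym2.eq_swap]
      have hija : ¬ (i = a ∧ j = b) := by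
        rintro ⟨rfl, rfl⟩; exact hsij hs
      have hjia : ¬ (j = a ∧ i = b) := by
        rintro ⟨rfl, rfl⟩; rw [Sym2.eq_swap] at hs; exact hsij hs
      simp only [ext, hija, hjia, or_false]
      exact h2 _ _ hH

lemma ext_acyclic {a b : V} {σ' : V → V → Prop}
    (hcyc : ∀ i, ¬ TransGen σ' i i) (hba : ¬ ReflTransGen σ' b a) :
    ∀ i, ¬ TransGen (ext a b σ') i i :=
  acyclic_extend hcyc hba

lemma ext_compat {a b : V} {σ' : V → V → Prop} {t : ℕ} {x : V → Fin t}
    (h : ∀ i j, σ' i j → x i ≤ x j) (hab : x a ≤ x b) :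
    ∀ i j, ext a b σ' i j → x i ≤ x j := by
  rintro i j (hij | ⟨rfl, rfl⟩)
  · exact h _ _ hij
  · exact hab

lemma res_ext {a b : V} (hs : s(a, b) = s(u, v)) {σ' : V → V → Prop}
    (h1 : ∀ i j, σ' i j → (G.deleteEdges {s(u, v)}).Adj i j) :
    res u v (ext a b σ') = σ' := by
  funext i j
  apply propext
  constructor
  · rintro ⟨hij | ⟨rfl, rfl⟩, hne⟩
    · exact hij
    · exact absurd hs hne
  · intro hij
    exact ⟨Or.inl hij, (Hadj.mp (h1 _ _ hij)).2⟩

lemma ext_res {a b : V} (hs : s(a, b) = s(u, v)) {σ : V → V → Prop}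
    (h : IsOrientationOf G σ) (hσab : σ a b) :
    ext a b (res u v σ) = σ := by
  obtain ⟨h1, h2⟩ := h
  funext i j
  apply propext
  constructor
  · rintro (⟨hij, _⟩ | ⟨rfl, rfl⟩)
    · exact hij
    · exact hσab
  · intro hij
    by_cases hsij : s(i, j) = s(u, v)
    · rw [← hs] at hsij
      rcases Sym2.eq_iff.mp hsij with ⟨rfl, rfl⟩ | ⟨rfl, rfl⟩
      · exact Or.inr ⟨rfl, rfl⟩
      · exfalso
        have := (h2 _ _ (h1 _ _ hij)).mp hij
        exact this hσab
    · exact Or.inl ⟨hij, hsij⟩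

end oriented

section quotientOrient
variable {G : SimpleGraph V} {u v : V}

def liftR (u v : V) (G : SimpleGraph V) (o : Qt u v → Qt u v → Prop) : V → V → Prop :=
  fun i j => o (Quotient.mk (mset u v) i) (Quotient.mk (mset u v) j) ∧
    (G.deleteEdges {s(u, v)}).Adj i j

lemma qmk_ne {u v i j : V} (hij : i ≠ j) (hs : s(i, j) ≠ s(u, v)) :
    Quotient.mk (mset u v) i ≠ Quotient.mk (mset u v) j := by
  intro h
  rcases qmk_eq_iff.mp h with h' | ⟨rfl, rfl⟩ | ⟨rfl, rfl⟩
  · exact hij h'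
  · exact hs rfl
  · exact hs Sym2.eq_swap

lemma qbar_adj {σ' : V → V → Prop}
    (h1 : ∀ i j, σ' i j → (G.deleteEdges {s(u, v)}).Adj i j) {a b : Qt u v}
    (h : qbar u v σ' a b) : (cgraph G u v).Adj a b := by
  obtain ⟨i, j, hi, hj, hs⟩ := h
  obtain ⟨hadj, hne⟩ := Hadj.mp (h1 _ _ hs)
  exact ⟨hi ▸ hj ▸ qmk_ne hadj.ne hne, i, j, hi, hj, hadj⟩

lemma qbar_asymm {σ' : V → V → Prop}
    (hcyc : ∀ i, ¬ TransGen σ' i i) (huv' : ¬ TransGen σ' u v) (hvu' : ¬ TransGen σ' v u)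
    {a b : Qt u v} (hab : a ≠ b) :
    ¬ (qbar u v σ' a b ∧ qbar u v σ' b a) := by
  rintro ⟨⟨p, q, hp, hq, h1⟩, ⟨r, s0, hr, hs0, h2⟩⟩
  have hqr : Quotient.mk (mset u v) q = Quotient.mk (mset u v) r := hq.trans hr.symm
  have hsp : Quotient.mk (mset u v) s0 = Quotient.mk (mset u v) p := hs0.trans hp.symm
  rcases qmk_eq_iff.mp hqr with h3 | ⟨h3, h4⟩ | ⟨h3, h4⟩
  · subst h3
    have htg : TransGen σ' p s0 := (TransGen.single h1).tail h2
    rcases qmk_eq_iff.mp hsp with h5 | ⟨h5, h6⟩ | ⟨h5, h6⟩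
    · subst h5; exact hcyc _ htg
    · subst h5; subst h6; exact hvu' ((TransGen.single h1).tail h2)
    · subst h5; subst h6; exact huv' ((TransGen.single h1).tail h2)
  · subst h3; subst h4
    rcases qmk_eq_iff.mp hsp with h5 | ⟨h5, h6⟩ | ⟨h5, h6⟩
    · subst h5; exact hvu' ((TransGen.single h2).tail h1)
    · subst h5; subst h6
      exact hab (hp.symm.trans ((Quotient.sound (Or.inr (Or.inr ⟨rfl, rfl⟩))).trans hq))
    · subst h5; subst h6
      exact hab (hp.symm.trans hq)
  · subst h3; subst h4
    rcases qmk_eq_iff.mp hsp with h5 | ⟨h5, h6⟩ | ⟨h5, h6⟩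
    · subst h5; exact huv' ((TransGen.single h2).tail h1)
    · subst h5; subst h6
      exact hab (hp.symm.trans hq)
    · subst h5; subst h6
      exact hab (hp.symm.trans ((Quotient.sound (Or.inr (Or.inl ⟨rfl, rfl⟩))).trans hq))

lemma qbar_exists {σ' : V → V → Prop}
    (ho : IsOrientationOf (G.deleteEdges {s(u, v)}) σ') {a b : Qt u v}
    (h : (cgraph G u v).Adj a b) : qbar u v σ' a b ∨ qbar u v σ' b a := by
  obtain ⟨hab, x0, y0, hx, hy, hadj⟩ := h
  have hs : s(x0, y0) ≠ s(u, v) := by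
    intro hs
    rcases Sym2.eq_iff.mp hs with ⟨rfl, rfl⟩ | ⟨rfl, rfl⟩
    · exact hab (hx.symm.trans ((Quotient.sound (Or.inr (Or.inl ⟨rfl, rfl⟩))).trans hy))
    · exact hab (hx.symm.trans ((Quotient.sound (Or.inr (Or.inr ⟨rfl, rfl⟩))).trans hy))
  have hH : (G.deleteEdges {s(u, v)}).Adj x0 y0 := Hadj.mpr ⟨hadj, hs⟩
  by_cases hσ : σ' x0 y0
  · exact Or.inl ⟨x0, y0, hx, hy, hσ⟩
  · have := (ho.2 _ _ hH.symm).mpr (by simpa using hσ)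
    exact Or.inr ⟨y0, x0, hy, hx, this⟩

lemma qbar_orient {σ' : V → V → Prop}
    (ho : IsOrientationOf (G.deleteEdges {s(u, v)}) σ')
    (hcyc : ∀ i, ¬ TransGen σ' i i) (huv' : ¬ TransGen σ' u v) (hvu' : ¬ TransGen σ' v u) :
    IsOrientationOf (cgraph G u v) (qbar u v σ') := by
  refine ⟨fun a b h => qbar_adj ho.1 h, fun a b hab => ⟨fun h hba => ?_, fun hnba => ?_⟩⟩
  · exact qbar_asymm hcyc huv' hvu' hab.ne ⟨h, hba⟩
  · rcases qbar_exists ho hab with h | h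
    · exact h
    · exact absurd h hnba

lemma liftR_orient {o : Qt u v → Qt u v → Prop}
    (ho : IsOrientationOf (cgraph G u v) o) :
    IsOrientationOf (G.deleteEdges {s(u, v)}) (liftR u v G o) := by
  refine ⟨fun i j h => h.2, fun i j hij => ?_⟩
  obtain ⟨hadj, hne⟩ := Hadj.mp hij
  have hG' : (cgraph G u v).Adj (Quotient.mk (mset u v) i) (Quotient.mk (mset u v) j) :=
    ⟨qmk_ne hadj.ne hne, i, j, rfl, rfl, hadj⟩
  simp only [liftR, hij, hij.symm, and_true]
  exact ho.2 _ _ hG'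

lemma liftR_tg {o : Qt u v → Qt u v → Prop} {i j : V}
    (h : TransGen (liftR u v G o) i j) :
    TransGen o (Quotient.mk (mset u v) i) (Quotient.mk (mset u v) j) :=
  TransGen.lift (Quotient.mk (mset u v)) (fun _ _ hab => hab.1) _ _ h

lemma liftR_acyclic {o : Qt u v → Qt u v → Prop} (hcyc : ∀ a, ¬ TransGen o a a) :
    ∀ i, ¬ TransGen (liftR u v G o) i i :=
  fun i h => hcyc _ (liftR_tg h)

lemma quv_eq : (Quotient.mk (mset u v) u : Qt u v) = Quotient.mk (mset u v) v :=
  Quotient.sound (Or.inr (Or.inl ⟨rfl, rfl⟩))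

lemma liftR_no_uv {o : Qt u v → Qt u v → Prop} (hcyc : ∀ a, ¬ TransGen o a a) :
    ¬ TransGen (liftR u v G o) u v := by
  intro h
  have := liftR_tg h
  rw [quv_eq] at this
  exact hcyc _ this

lemma liftR_no_vu {o : Qt u v → Qt u v → Prop} (hcyc : ∀ a, ¬ TransGen o a a) :
    ¬ TransGen (liftR u v G o) v u := by
  intro h
  have := liftR_tg h
  rw [quv_eq] at this
  exact hcyc _ this

lemma liftR_qbar {σ' : V → V → Prop}
    (ho : IsOrientationOf (G.deleteEdges {s(u, v)}) σ')
    (hcyc : ∀ i, ¬ TransGen σ' i i) (huv' : ¬ TransGen σ' u v) (hvu' : ¬ TransGen σ' v u) :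
    liftR u v G (qbar u v σ') = σ' := by
  funext i j
  apply propext
  constructor
  · rintro ⟨hq, hH⟩
    by_cases hσ : σ' i j
    · exact hσ
    · exfalso
      have hji : σ' j i := (ho.2 _ _ hH.symm).mpr (by simpa using hσ)
      have hb : qbar u v σ' (Quotient.mk (mset u v) j) (Quotient.mk (mset u v) i) :=
        ⟨j, i, rfl, rfl, hji⟩
      obtain ⟨hadj, hne⟩ := Hadj.mp hH
      exact qbar_asymm hcyc huv' hvu' (qmk_ne hadj.ne hne) ⟨hq, hb⟩
  · intro hσ
    exact ⟨⟨i, j, rfl, rfl, hσ⟩, ho.1 _ _ hσ⟩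

lemma qbar_liftR {o : Qt u v → Qt u v → Prop}
    (ho : IsOrientationOf (cgraph G u v) o) :
    qbar u v (liftR u v G o) = o := by
  funext a b
  apply propext
  constructor
  · rintro ⟨i, j, hi, hj, hq, _⟩
    exact hi ▸ hj ▸ hq
  · intro hab
    obtain ⟨hne, x0, y0, hx, hy, hadj⟩ := ho.1 _ _ hab
    have hs : s(x0, y0) ≠ s(u, v) := by
      intro hs
      rcases Sym2.eq_iff.mp hs with ⟨rfl, rfl⟩ | ⟨rfl, rfl⟩
      · exact hne (hx.symm.trans (quv_eq.trans hy))
      · exact hne (hx.symm.trans (quv_eq.symm.trans hy))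
    exact ⟨x0, y0, hx, hy, ⟨hx.symm ▸ hy.symm ▸ hab, Hadj.mpr ⟨hadj, hs⟩⟩⟩

end quotientOrient

def Cols (G : SimpleGraph V) (t : ℕ) :=
  {x : V → Fin t // ∀ i j, G.Adj i j → x i ≠ x j}

def Pairs (G : SimpleGraph V) (t : ℕ) :=
  {p : (V → Fin t) × (V → V → Prop) //
    IsAcyclicOrientation G p.2 ∧ ∀ i j, p.2 i j → p.1 i ≤ p.1 j}

section colorings
variable {G : SimpleGraph V} {u v : V} {t : ℕ}

/-- proper colorings of `G − e` with different endpoint colors are proper colorings of `G`. -/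
def colEquivG (hadj : G.Adj u v) :
    {x : Cols (G.deleteEdges {s(u, v)}) t // ¬ x.1 u = x.1 v} ≃ Cols G t where
  toFun x := ⟨x.1.1, by
    intro i j hij
    by_cases hs : s(i, j) = s(u, v)
    · rcases Sym2.eq_iff.mp hs with ⟨rfl, rfl⟩ | ⟨rfl, rfl⟩
      · exact x.2
      · exact fun h => x.2 h.symm
    · exact x.1.2 i j (Hadj.mpr ⟨hij, hs⟩)⟩
  invFun y := ⟨⟨y.1, fun i j hij => y.2 i j (Hadj.mp hij).1⟩, y.2 u v hadj⟩
  left_inv x := rfl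
  right_inv y := rfl

/-- proper colorings of `G − e` with equal endpoint colors are proper colorings of `G/e`. -/
def colEquivC (hadj : G.Adj u v) :
    {x : Cols (G.deleteEdges {s(u, v)}) t // x.1 u = x.1 v} ≃ Cols (cgraph G u v) t where
  toFun x := ⟨Quotient.lift x.1.1 (by
      rintro a b (rfl | ⟨rfl, rfl⟩ | ⟨rfl, rfl⟩)
      · rfl
      · exact x.2
      · exact x.2.symm), by
    rintro a b ⟨hne, x0, y0, hx, hy, hadj'⟩ heq
    have hs : s(x0, y0) ≠ s(u, v) := by
      intro hs
      rcases Sym2.eq_iff.mp hs with ⟨rfl, rfl⟩ | ⟨rfl, rfl⟩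
      · exact hne (hx.symm.trans (quv_eq.trans hy))
      · exact hne (hx.symm.trans (quv_eq.symm.trans hy))
    subst hx; subst hy
    exact x.1.2 x0 y0 (Hadj.mpr ⟨hadj', hs⟩) heq⟩
  invFun w := ⟨⟨w.1 ∘ Quotient.mk (mset u v), by
      intro i j hij h
      obtain ⟨hadj', hs⟩ := Hadj.mp hij
      exact w.2 _ _ ⟨qmk_ne hadj'.ne hs, i, j, rfl, rfl, hadj'⟩ h⟩,
    congrArg w.1 quv_eq⟩
  left_inv x := by
    apply Subtype.ext; apply Subtype.ext; rfl
  right_inv w := by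
    apply Subtype.ext
    funext a
    induction a using Quotient.ind
    rfl

lemma card_cols [Finite V] (hadj : G.Adj u v) :
    Nat.card (Cols (G.deleteEdges {s(u, v)}) t)
      = Nat.card (Cols G t) + Nat.card (Cols (cgraph G u v) t) := by
  classical
  haveI : Finite (Qt u v) := Quotient.finite _
  haveI : Finite (Cols (G.deleteEdges {s(u, v)}) t) := by unfold Cols; infer_instance
  haveI : Finite (Cols G t) := by unfold Cols; infer_instance
  haveI : Finite (Cols (cgraph G u v) t) := by unfold Cols; infer_instance
  have e1 := (Equiv.sumCompl (fun x : Cols (G.deleteEdges {s(u, v)}) t => x.1 u = x.1 v)).symm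
  rw [Nat.card_congr e1, Nat.card_sum, Nat.card_congr (colEquivC hadj),
    Nat.card_congr (colEquivG hadj), Nat.add_comm]

end colorings

section pairs
variable {G : SimpleGraph V} {u v : V} {t : ℕ}

/-- the "non-canonically oriented" pairs. -/
def BB (u v : V) (p : Pairs G t) : Prop :=
  p.1.2 v u ∧ p.1.1 u = p.1.1 v ∧ ¬ TransGen (res u v p.1.2) v u

lemma pair_props (p : Pairs G t) :
    IsOrientationOf G p.1.2 ∧ (∀ i, ¬ TransGen p.1.2 i i) ∧
      ∀ i j, p.1.2 i j → p.1.1 i ≤ p.1.1 j :=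
  ⟨p.2.1.1, p.2.1.2, p.2.2⟩

/-- restriction of a compatible pair to `G − e`. -/
def resPair (u v : V) (p : Pairs G t) : Pairs (G.deleteEdges {s(u, v)}) t :=
  ⟨(p.1.1, res u v p.1.2),
    ⟨⟨res_orient p.2.1.1, res_acyclic p.2.1.2⟩, fun i j h => p.2.2 i j h.1⟩⟩

/-- extension of a pair on `G − e` across the edge `a → b`. -/
def extPair {a b : V} (hab : G.Adj a b) (hs : s(a, b) = s(u, v))
    (q : Pairs (G.deleteEdges {s(u, v)}) t)
    (hr : ¬ ReflTransGen q.1.2 b a) (hle : q.1.1 a ≤ q.1.1 b) : Pairs G t :=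
  ⟨(q.1.1, ext a b q.1.2),
    ⟨⟨ext_orient hab hs q.2.1.1, ext_acyclic q.2.1.2 hr⟩, ext_compat q.2.2 hle⟩⟩

lemma sigma_not_uv {σ' : V → V → Prop}
    (h1 : ∀ i j, σ' i j → (G.deleteEdges {s(u, v)}).Adj i j) : ¬ σ' u v :=
  fun hc => (Hadj.mp (h1 _ _ hc)).2 rfl

lemma sigma_not_vu {σ' : V → V → Prop}
    (h1 : ∀ i j, σ' i j → (G.deleteEdges {s(u, v)}).Adj i j) : ¬ σ' v u :=
  fun hc => (Hadj.mp (h1 _ _ hc)).2 Sym2.eq_swap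

noncomputable def pairEquivA (hadj : G.Adj u v) :
    {p : Pairs G t // ¬ BB u v p} ≃ Pairs (G.deleteEdges {s(u, v)}) t := by
  classical
  have hne : u ≠ v := hadj.ne
  refine
    { toFun := fun p => resPair u v p.1
      invFun := fun q =>
        if hC : q.1.1 u < q.1.1 v ∨ (q.1.1 u = q.1.1 v ∧ ¬ TransGen q.1.2 v u) then
          ⟨extPair hadj rfl q (fun hr => ?_) ?_, fun hB => ?_⟩
        else
          ⟨extPair hadj.symm Sym2.eq_swap q (fun hr => ?_) ?_, fun hB => ?_⟩
      left_inv := ?_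
      right_inv := ?_ }
  · -- ¬ RTG q v u in case C
    rcases hC with hlt | ⟨heq, hnT⟩
    · exact absurd (le_of_rtg q.2.2 hr) (not_le_of_gt hlt)
    · exact hnT (rtg_of_not hne hr)
  · -- x u ≤ x v in case C
    rcases hC with hlt | ⟨heq, _⟩
    · exact le_of_lt hlt
    · exact le_of_eq heq
  · -- ¬ BB of the C extension
    exact sigma_not_vu q.2.1.1.1 (by
      rcases hB.1 with h | ⟨h1, h2⟩
      · exact h
      · exact absurd h1 hne.symm)
  · -- ¬ RTG q u v in case ¬C
    push_neg at hC
    rcases (reflTransGen_iff_eq_or_transGen.mp hr) with h | h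
    · exact hne (h.symm)
    · have heq : q.1.1 u = q.1.1 v :=
        le_antisymm (le_of_rtg q.2.2 hr) hC.1
      exact q.2.1.2 u (h.trans (hC.2 heq))
  · -- x v ≤ x u in case ¬C
    exact not_lt.mp (fun h => hC (Or.inl h))
  · -- ¬ BB of the ¬C extension
    push_neg at hC
    have hres : res u v (ext v u q.1.2) = q.1.2 := res_ext Sym2.eq_swap q.2.1.1.1
    rcases hB with ⟨_, heq, hnT⟩
    have hnT' : ¬ TransGen (res u v (ext v u q.1.2)) v u := hnT
    rw [hres] at hnT'
    exact hnT' (hC.2 heq)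
  · -- left inverse
    intro p
    beta_reduce
    by_cases hσuv : p.1.1.2 u v
    · have hle : p.1.1.1 u ≤ p.1.1.1 v := p.1.2.2 u v hσuv
      have hC : (resPair u v p.1).1.1 u < (resPair u v p.1).1.1 v ∨
          ((resPair u v p.1).1.1 u = (resPair u v p.1).1.1 v ∧
            ¬ TransGen (resPair u v p.1).1.2 v u) := by
        rcases lt_or_eq_of_le hle with hlt | heq
        · exact Or.inl hlt
        · refine Or.inr ⟨heq, fun hT => ?_⟩
          have hT' : TransGen p.1.1.2 v u := TransGen.mono (fun a b h => h.1) _ _ hT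
          exact p.1.2.1.2 v (hT'.tail hσuv)
      rw [dif_pos hC]
      apply Subtype.ext; apply Subtype.ext
      exact Prod.ext rfl (ext_res rfl p.1.2.1.1 hσuv)
    · have hσvu : p.1.1.2 v u := by
        by_contra hc
        exact hσuv ((p.1.2.1.1.2 u v hadj).mpr hc)
      have hnC : ¬ ((resPair u v p.1).1.1 u < (resPair u v p.1).1.1 v ∨
          ((resPair u v p.1).1.1 u = (resPair u v p.1).1.1 v ∧
            ¬ TransGen (resPair u v p.1).1.2 v u)) := by
        rintro (hlt | ⟨heq, hnT⟩)
        · exact not_lt_of_ge (p.1.2.2 v u hσvu) hlt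
        · exact p.2 ⟨hσvu, heq, hnT⟩
      rw [dif_neg hnC]
      apply Subtype.ext; apply Subtype.ext
      exact Prod.ext rfl (ext_res Sym2.eq_swap p.1.2.1.1 hσvu)
  · -- right inverse
    intro q
    beta_reduce
    by_cases hC : q.1.1 u < q.1.1 v ∨ (q.1.1 u = q.1.1 v ∧ ¬ TransGen q.1.2 v u)
    · rw [dif_pos hC]
      apply Subtype.ext
      exact Prod.ext rfl (res_ext rfl q.2.1.1.1)
    · rw [dif_neg hC]
      apply Subtype.ext
      exact Prod.ext rfl (res_ext Sym2.eq_swap q.2.1.1.1)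
end pairs

section pairsB
variable {G : SimpleGraph V} {u v : V} {t : ℕ}

lemma BB_huv' {p : Pairs G t} (hB : BB u v p) :
    ¬ TransGen (res u v p.1.2) u v :=
  fun hT => p.2.1.2 u ((TransGen.mono (fun a b h => h.1) _ _ hT).tail hB.1)

noncomputable def pairEquivB (hadj : G.Adj u v) :
    {p : Pairs G t // BB u v p} ≃ Pairs (cgraph G u v) t := by
  classical
  refine
    { toFun := fun p =>
        ⟨(Quotient.lift p.1.1.1 (fun a b hab => by
            rcases mset_rel hab with h | ⟨h1, h2⟩ | ⟨h1, h2⟩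
            · rw [h]
            · rw [h1, h2]; exact p.2.2.1
            · rw [h1, h2]; exact p.2.2.1.symm), qbar u v (res u v p.1.1.2)), ?_⟩
      invFun := fun w =>
        ⟨⟨(w.1.1 ∘ Quotient.mk (mset u v), ext v u (liftR u v G w.1.2)), ?_⟩, ?_⟩
      left_inv := ?_
      right_inv := ?_ }
  · -- toFun property
    obtain ⟨hσvu, heq, hvu'⟩ := p.2
    have huv' := BB_huv' p.2
    have horient' := res_orient (u := u) (v := v) p.1.2.1.1
    have hcyc' := res_acyclic (u := u) (v := v) p.1.2.1.2
    refine ⟨⟨qbar_orient horient' hcyc' huv' hvu', qbar_acyclic hadj.ne hcyc' huv' hvu'⟩, ?_⟩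
    rintro a b ⟨i, j, rfl, rfl, h⟩
    exact p.1.2.2 i j h.1
  · -- invFun Pairs property
    have ho := w.2.1.1
    have hocyc := w.2.1.2
    refine ⟨⟨ext_orient hadj.symm Sym2.eq_swap (liftR_orient ho),
      ext_acyclic (liftR_acyclic hocyc) ?_⟩,
      ext_compat (fun i j h => w.2.2 _ _ h.1) (le_of_eq (congrArg w.1.1 quv_eq.symm))⟩
    intro hr
    rcases reflTransGen_iff_eq_or_transGen.mp hr with h | h
    · exact hadj.ne h.symm
    · exact liftR_no_uv hocyc h
  · -- invFun BB property
    refine ⟨Or.inr ⟨rfl, rfl⟩, congrArg w.1.1 quv_eq, ?_⟩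
    have hres : res u v (ext v u (liftR u v G w.1.2)) = liftR u v G w.1.2 :=
      res_ext Sym2.eq_swap (liftR_orient w.2.1.1).1
    show ¬ TransGen (res u v (ext v u (liftR u v G w.1.2))) v u
    rw [hres]
    exact liftR_no_vu w.2.1.2
  · -- left inverse
    intro p
    obtain ⟨hσvu, heq, hvu'⟩ := p.2
    have huv' := BB_huv' p.2
    have horient' := res_orient (u := u) (v := v) p.1.2.1.1
    have hcyc' := res_acyclic (u := u) (v := v) p.1.2.1.2
    apply Subtype.ext; apply Subtype.ext
    refine Prod.ext (funext fun i => rfl) ?_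
    show ext v u (liftR u v G (qbar u v (res u v p.1.1.2))) = p.1.1.2
    rw [liftR_qbar horient' hcyc' huv' hvu', ext_res Sym2.eq_swap p.1.2.1.1 hσvu]
  · -- right inverse
    intro w
    apply Subtype.ext
    refine Prod.ext ?_ ?_
    · show Quotient.lift (w.1.1 ∘ Quotient.mk (mset u v)) _ = w.1.1
      funext a
      induction a using Quotient.ind
      rfl
    · show qbar u v (res u v (ext v u (liftR u v G w.1.2))) = w.1.2
      rw [res_ext Sym2.eq_swap (liftR_orient w.2.1.1).1, qbar_liftR w.2.1.1]

lemma card_pairs [Finite V] (hadj : G.Adj u v) :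
    Nat.card (Pairs G t)
      = Nat.card (Pairs (G.deleteEdges {s(u, v)}) t) + Nat.card (Pairs (cgraph G u v) t) := by
  classical
  haveI : Finite (Qt u v) := Quotient.finite _
  haveI : Finite (Pairs G t) := by unfold Pairs; infer_instance
  haveI : Finite (Pairs (G.deleteEdges {s(u, v)}) t) := by unfold Pairs; infer_instance
  haveI : Finite (Pairs (cgraph G u v) t) := by unfold Pairs; infer_instance
  have e1 := (Equiv.sumCompl (fun p : Pairs G t => BB u v p)).symm
  rw [Nat.card_congr e1, Nat.card_sum, Nat.card_congr (pairEquivB hadj),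
    Nat.card_congr (pairEquivA hadj)]
  omega

end pairsB

section base
variable {G : SimpleGraph V} {t : ℕ}

def colsBotEquiv (h : ∀ i j, ¬ G.Adj i j) : Cols G t ≃ (V → Fin t) where
  toFun x := x.1
  invFun x := ⟨x, fun i j hij _ => h i j hij⟩
  left_inv x := rfl
  right_inv x := rfl

def pairsBotEquiv (h : ∀ i j, ¬ G.Adj i j) : Pairs G t ≃ (V → Fin t) where
  toFun p := p.1.1
  invFun x := ⟨(x, fun _ _ => False),
    ⟨⟨⟨fun i j hf => hf.elim, fun i j hij => absurd hij (h i j)⟩,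
      fun i hT => by cases hT with
        | single h' => exact h'
        | tail _ h' => exact h'⟩, fun i j hf => hf.elim⟩⟩
  left_inv p := by
    apply Subtype.ext
    refine Prod.ext rfl ?_
    show (fun _ _ => False) = p.1.2
    funext i j
    exact (propext ⟨False.elim, fun hs => absurd (p.2.1.1.1 i j hs) (h i j)⟩)
  right_inv x := rfl

lemma cols_bot [Fintype V] (h : ∀ i j, ¬ G.Adj i j) :
    Nat.card (Cols G t) = t ^ Fintype.card V := by
  rw [Nat.card_congr (colsBotEquiv h), Nat.card_fun, Nat.card_eq_fintype_card,
    Nat.card_eq_fintype_card, Fintype.card_fin]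

lemma pairs_bot [Fintype V] (h : ∀ i j, ¬ G.Adj i j) :
    Nat.card (Pairs G t) = t ^ Fintype.card V := by
  rw [Nat.card_congr (pairsBotEquiv h), Nat.card_fun, Nat.card_eq_fintype_card,
    Nat.card_eq_fintype_card, Fintype.card_fin]

end base

section counts
variable [Fintype V] {G : SimpleGraph V} {u v : V}

lemma card_edges_delete (he : s(u, v) ∈ G.edgeSet) :
    Nat.card (G.deleteEdges {s(u, v)}).edgeSet = Nat.card G.edgeSet - 1 := by
  rw [SimpleGraph.edgeSet_deleteEdges, Nat.card_coe_set_eq, Nat.card_coe_set_eq,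
    Set.ncard_diff_singleton_of_mem he]

lemma card_edges_pos (he : s(u, v) ∈ G.edgeSet) : 1 ≤ Nat.card G.edgeSet := by
  rw [Nat.card_coe_set_eq]
  have : G.edgeSet.Nonempty := ⟨_, he⟩
  have hfin : G.edgeSet.Finite := Set.toFinite _
  rw [Nat.one_le_iff_ne_zero, Ne, Set.ncard_eq_zero hfin]
  exact Set.nonempty_iff_ne_empty.mp this

lemma card_edges_cgraph (hadj : G.Adj u v) :
    Nat.card (cgraph G u v).edgeSet ≤ Nat.card (G.deleteEdges {s(u, v)}).edgeSet := by
  classical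
  haveI : Finite (Qt u v) := Quotient.finite _
  have hsub : (cgraph G u v).edgeSet ⊆
      Sym2.map (Quotient.mk (mset u v)) '' (G.deleteEdges {s(u, v)}).edgeSet := by
    intro e he
    induction e using Sym2.ind with
    | _ a b =>
      obtain ⟨hne, x0, y0, hx, hy, hadj'⟩ := (SimpleGraph.mem_edgeSet _).mp he
      have hs : s(x0, y0) ≠ s(u, v) := by
        intro hs
        rcases Sym2.eq_iff.mp hs with ⟨rfl, rfl⟩ | ⟨rfl, rfl⟩
        · exact hne (hx.symm.trans (quv_eq.trans hy))
        · exact hne (hx.symm.trans (quv_eq.symm.trans hy))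
      exact ⟨s(x0, y0), (SimpleGraph.mem_edgeSet _).mpr (Hadj.mpr ⟨hadj', hs⟩),
        by rw [Sym2.map_pair_eq, hx, hy]⟩
  rw [Nat.card_coe_set_eq, Nat.card_coe_set_eq]
  calc (cgraph G u v).edgeSet.ncard
      ≤ (Sym2.map (Quotient.mk (mset u v)) '' (G.deleteEdges {s(u, v)}).edgeSet).ncard :=
        Set.ncard_le_ncard hsub (Set.Finite.image _ (Set.toFinite _))
    _ ≤ (G.deleteEdges {s(u, v)}).edgeSet.ncard := Set.ncard_image_le (Set.toFinite _)

end counts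

universe u

theorem main : ∀ (k : ℕ) (V : Type u) [Fintype V] (G : SimpleGraph V),
    Fintype.card V + Nat.card G.edgeSet ≤ k →
    ∃ c : Polynomial ℤ,
      (∀ t : ℕ, 0 < t → c.eval (t : ℤ) = (Nat.card (Cols G t) : ℤ)) ∧
      (∀ t : ℕ, 0 < t → (-1) ^ (Fintype.card V) * c.eval (-(t : ℤ))
          = (Nat.card (Pairs G t) : ℤ)) := by
  intro k
  induction k using Nat.strong_induction_on with
  | _ k IH =>
    intro V _ G hk
    by_cases hE : ∀ i j, ¬ G.Adj i j
    · refine ⟨Polynomial.X ^ Fintype.card V, fun t ht => ?_, fun t ht => ?_⟩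
      · rw [cols_bot hE]
        simp only [Polynomial.eval_pow, Polynomial.eval_X]
        push_cast
        ring
      · rw [pairs_bot hE]
        simp only [Polynomial.eval_pow, Polynomial.eval_X, ← mul_pow]
        push_cast
        ring
    · push_neg at hE
      obtain ⟨u, v, hadj⟩ := hE
      have he : s(u, v) ∈ G.edgeSet := (SimpleGraph.mem_edgeSet _).mpr hadj
      have hm1 : 1 ≤ Nat.card G.edgeSet := card_edges_pos he
      have hn1 : 1 ≤ Fintype.card V := Fintype.card_pos_iff.mpr ⟨u⟩
      have hdel : Nat.card (G.deleteEdges {s(u, v)}).edgeSet = Nat.card G.edgeSet - 1 :=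
        card_edges_delete he
      obtain ⟨c₁, h11, h12⟩ := IH (k - 1) (by omega) V (G.deleteEdges {s(u, v)}) (by omega)
      haveI : Fintype (Qt u v) := @Fintype.ofFinite _ (Quotient.finite _)
      have hq : Fintype.card V = Fintype.card (Qt u v) + 1 := by
        rw [← Nat.card_eq_fintype_card (α := Qt u v)]; exact card_qt hadj.ne
      have hcg : Nat.card (cgraph G u v).edgeSet ≤ Nat.card G.edgeSet - 1 := by
        have := card_edges_cgraph hadj
        omega
      obtain ⟨c₂, h21, h22⟩ := IH (k - 1) (by omega) (Qt u v) (cgraph G u v) (by omega)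
      refine ⟨c₁ - c₂, fun t ht => ?_, fun t ht => ?_⟩
      · have hcc : (Nat.card (Cols (G.deleteEdges {s(u, v)}) t) : ℤ)
            = (Nat.card (Cols G t) : ℤ) + (Nat.card (Cols (cgraph G u v) t) : ℤ) := by
          exact_mod_cast congrArg (Nat.cast : ℕ → ℤ) (card_cols hadj)
        rw [Polynomial.eval_sub]
        have e1 := h11 t ht
        have e2 := h21 t ht
        linarith
      · have hsum : (Nat.card (Pairs G t) : ℤ)
            = (Nat.card (Pairs (G.deleteEdges {s(u, v)}) t) : ℤ)
              + (Nat.card (Pairs (cgraph G u v) t) : ℤ) := by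
          exact_mod_cast congrArg (Nat.cast : ℕ → ℤ) (card_pairs hadj)
        have e1 := h12 t ht
        have e2 := h22 t ht
        rw [Polynomial.eval_sub, mul_sub, hsum, ← e1, ← e2, hq, pow_succ]
        ring

end ChromRec

/-- **Stanley's reciprocity theorem for chromatic polynomials.** For a finite simple graph
`G = (V,E)` there is an integer polynomial `c_G` counting the proper `t`-colorings for every
positive integer `t`, and `(-1)^{|V|} c_G(-t)` counts the pairs consisting of a `t`-coloring
and a compatible acyclic orientation of `G`. -/
theorem chromatic_reciprocity {V : Type*} [Fintype V] (G : SimpleGraph V) :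
    ∃ c : Polynomial ℤ,
      (∀ t : ℕ, 0 < t → c.eval (t : ℤ)
        = (Nat.card {x : V → Fin t // ∀ i j, G.Adj i j → x i ≠ x j} : ℤ)) ∧
      (∀ t : ℕ, 0 < t → (-1) ^ (Fintype.card V) * c.eval (-(t : ℤ))
        = (Nat.card {p : (V → Fin t) × (V → V → Prop) //
            IsAcyclicOrientation G p.2 ∧ ∀ i j, p.2 i j → p.1 i ≤ p.1 j} : ℤ)) := by
  obtain ⟨c, h1, h2⟩ := ChromRec.main (Fintype.card V + Nat.card G.edgeSet) V G le_rfl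
  exact ⟨c, h1, h2⟩
end

section
/- Let G = (V,E) be a finite simple graph and let c_G be the polynomial with c_G(t) equal to the number of proper t-colorings of G for every positive integer t. Then (−1)^{|V|} · c_G(−1) equals the number of acyclic orientations of G. -/
open Relation
section
variable {V : Type*}

def Gdel (G : SimpleGraph V) (a b : V) : SimpleGraph V where
  Adj i j := G.Adj i j ∧ ¬((i = a ∧ j = b) ∨ (i = b ∧ j = a))
  symm := ⟨by rintro i j ⟨h1, h2⟩; exact ⟨h1.symm, by tauto⟩⟩
  loopless := ⟨by rintro i ⟨h1, _⟩; exact G.loopless.irrefl i h1⟩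

def Gcon (G : SimpleGraph V) (a b : V) : SimpleGraph {x : V // x ≠ b} where
  Adj i j := i ≠ j ∧ (G.Adj i j ∨ (↑i = a ∧ G.Adj b j) ∨ ((j : V) = a ∧ G.Adj i b))
  symm := ⟨by
    rintro i j ⟨h1, h2⟩
    refine ⟨h1.symm, ?_⟩
    rcases h2 with h | ⟨h3, h4⟩ | ⟨h3, h4⟩
    · exact Or.inl h.symm
    · exact Or.inr (Or.inr ⟨h3, h4.symm⟩)
    · exact Or.inr (Or.inl ⟨h3, h4.symm⟩)⟩
  loopless := ⟨by rintro i ⟨h1, _⟩; exact h1 rfl⟩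

lemma Gdel_symm (G : SimpleGraph V) (a b : V) : Gdel G a b = Gdel G b a := by
  ext i j
  simp only [Gdel]
  tauto

variable {G : SimpleGraph V} {a b : V}

/-- the canonical retraction `V → {x // x ≠ b}` sending `b` to `a`. -/
noncomputable def rho (hne : a ≠ b) : V → {x : V // x ≠ b} := fun v =>
  letI := Classical.dec (v = b)
  if h : v = b then ⟨a, hne⟩ else ⟨v, h⟩

lemma rho_ne (hne : a ≠ b) {v : V} (h : v ≠ b) : rho hne v = ⟨v, h⟩ := by
  simp only [rho]
  exact dif_neg h

lemma rho_b (hne : a ≠ b) : rho hne b = ⟨a, hne⟩ := by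
  simp [rho]

lemma rho_coe (hne : a ≠ b) (i : {x : V // x ≠ b}) : rho hne (↑i) = i := by
  rw [rho_ne hne i.2]

lemma coe_ne_coe {i j : {x : V // x ≠ b}} (h : (i : V) ≠ (j : V)) : i ≠ j :=
  fun hc => h (congrArg Subtype.val hc)

/-- colorings of `Gdel` with `x a = x b` correspond to colorings of `Gcon`. -/
noncomputable def colorEquiv (hab : G.Adj a b) (t : ℕ) :
    {x : V → Fin t // (∀ i j, (Gdel G a b).Adj i j → x i ≠ x j) ∧ x a = x b}
      ≃ {y : {v : V // v ≠ b} → Fin t // ∀ i j, (Gcon G a b).Adj i j → y i ≠ y j} where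
  toFun x := ⟨fun i => x.1 ↑i, by
    obtain ⟨x, hx, hxab⟩ := x
    rintro i j ⟨hij, hadj⟩
    show x ↑i ≠ x ↑j
    rcases hadj with h | ⟨h1, h2⟩ | ⟨h1, h2⟩
    · exact hx _ _ ⟨h, by rintro (⟨_, h2⟩ | ⟨h2, _⟩) <;> [exact j.2 h2; exact i.2 h2]⟩
    · have hj : (j : V) ≠ a := fun hj => hij (Subtype.ext (h1.trans hj.symm))
      have := hx b j ⟨h2, by rintro (⟨h3, _⟩ | ⟨_, h3⟩) <;> [exact hab.ne' h3; exact hj h3]⟩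
      rw [h1, hxab]; exact this
    · have hi : (i : V) ≠ a := fun hi => hij (Subtype.ext (hi.trans h1.symm))
      have := hx i b ⟨h2, by rintro (⟨h3, _⟩ | ⟨_, h3⟩) <;> [exact hi h3; exact hab.ne' h3]⟩
      rw [h1]; intro hc; exact this (hc.trans hxab)⟩
  invFun y := ⟨fun v => y.1 (rho hab.ne v), by
    obtain ⟨y, hy⟩ := y
    constructor
    · rintro u w ⟨hadj, hP⟩
      show y (rho hab.ne u) ≠ y (rho hab.ne w)
      have huw := G.ne_of_adj hadj
      by_cases hu : u = b
      · have hw : w ≠ b := fun h => huw (hu.trans h.symm)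
        have hwa : w ≠ a := fun h => hP (Or.inr ⟨hu, h⟩)
        rw [hu, rho_b, rho_ne hab.ne hw]
        exact hy _ _ ⟨coe_ne_coe (fun h => hwa (h.symm)), Or.inr (Or.inl ⟨rfl, hu ▸ hadj⟩)⟩
      · by_cases hw : w = b
        · have hua : u ≠ a := fun h => hP (Or.inl ⟨h, hw⟩)
          rw [hw, rho_b, rho_ne hab.ne hu]
          exact hy _ _ ⟨coe_ne_coe hua, Or.inr (Or.inr ⟨rfl, hw ▸ hadj⟩)⟩
        · rw [rho_ne hab.ne hu, rho_ne hab.ne hw]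
          exact hy _ _ ⟨coe_ne_coe huw, Or.inl hadj⟩
    · show y (rho hab.ne a) = y (rho hab.ne b)
      rw [rho_b, rho_ne hab.ne hab.ne]⟩
  left_inv := by
    rintro ⟨x, hx, hxab⟩
    apply Subtype.ext
    funext v
    show x ↑(rho hab.ne v) = x v
    by_cases hv : v = b
    · subst hv; rw [rho_b]; exact hxab
    · rw [rho_ne hab.ne hv]
  right_inv := by
    rintro ⟨y, hy⟩
    apply Subtype.ext
    funext i
    show y (rho hab.ne ↑i) = y i
    rw [rho_coe]

lemma proper_del_iff (hab : G.Adj a b) (t : ℕ) (x : V → Fin t) :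
    ((∀ i j, (Gdel G a b).Adj i j → x i ≠ x j) ∧ ¬ x a = x b)
      ↔ (∀ i j, G.Adj i j → x i ≠ x j) := by
  constructor
  · rintro ⟨hx, hne⟩ i j hadj
    by_cases hP : (i = a ∧ j = b) ∨ (i = b ∧ j = a)
    · rcases hP with ⟨h1, h2⟩ | ⟨h1, h2⟩
      · subst h1; subst h2; exact hne
      · subst h1; subst h2; exact fun h => hne h.symm
    · exact hx i j ⟨hadj, hP⟩
  · intro hx
    exact ⟨fun i j h => hx i j h.1, hx a b hab⟩

lemma card_partition {α : Type*} [Finite α] (Q R : α → Prop) :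
    Nat.card {x // Q x} = Nat.card {x // Q x ∧ R x} + Nat.card {x // Q x ∧ ¬ R x} := by
  classical
  have e : {x // Q x} ≃ {x // Q x ∧ R x} ⊕ {x // Q x ∧ ¬ R x} :=
    (Equiv.sumCompl (fun y : {x // Q x} => R y.1)).symm.trans
      (Equiv.sumCongr (Equiv.subtypeSubtypeEquivSubtypeInter Q R)
        (Equiv.subtypeSubtypeEquivSubtypeInter Q (fun x => ¬ R x)))
  rw [Nat.card_congr e, Nat.card_sum]

open Relation in
lemma trans_dichot {o : V → V → Prop} (hba : ¬ TransGen o b a) (hne : a ≠ b)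
    {u v : V} (h : TransGen (fun i j => o i j ∨ (i = a ∧ j = b)) u v) :
    TransGen o u v ∨ (ReflTransGen o u a ∧ ReflTransGen o b v) := by
  induction h with
  | single h' =>
    rcases h' with h' | ⟨rfl, rfl⟩
    · exact Or.inl (TransGen.single h')
    · exact Or.inr ⟨ReflTransGen.refl, ReflTransGen.refl⟩
  | tail hs h' ih =>
    rcases ih with t | ⟨r1, r2⟩
    · rcases h' with h' | ⟨rfl, rfl⟩
      · exact Or.inl (t.tail h')
      · exact Or.inr ⟨t.to_reflTransGen, ReflTransGen.refl⟩
    · rcases h' with h' | ⟨rfl, rfl⟩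
      · exact Or.inr ⟨r1, r2.tail h'⟩
      · rcases Relation.reflTransGen_iff_eq_or_transGen.mp r2 with heq | ht
        · exact absurd heq hne
        · exact absurd ht hba

open Relation in
/-- Extending an acyclic orientation across the edge `{a,b}`. -/
noncomputable def extEquiv (hab : G.Adj a b) :
    {o : V → V → Prop // IsAcyclicOrientation G o ∧ o a b}
      ≃ {o : V → V → Prop //
          IsAcyclicOrientation (Gdel G a b) o ∧ ¬ TransGen o b a} where
  toFun := fun ⟨o, ⟨⟨ho1, ho2⟩, ho3⟩, hoab⟩ =>
    ⟨fun i j => o i j ∧ ¬((i = a ∧ j = b) ∨ (i = b ∧ j = a)), by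
      refine ⟨⟨⟨fun i j h => ⟨ho1 i j h.1, h.2⟩, ?_⟩, ?_⟩, ?_⟩
      · rintro i j ⟨hadj, hP⟩
        have h2 := ho2 i j hadj
        constructor
        · rintro ⟨h, _⟩ ⟨h', _⟩
          exact h2.mp h h'
        · intro hn
          refine ⟨h2.mpr (fun h' => hn ⟨h', fun hP' => hP (by tauto)⟩), hP⟩
      · intro i h
        exact ho3 i (TransGen.mono (fun x y hxy => hxy.1) _ _ h)
      · intro h
        have ht : TransGen o b a := TransGen.mono (fun x y hxy => hxy.1) _ _ h
        exact ho3 a (TransGen.head hoab ht)⟩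
  invFun := fun ⟨o, ⟨⟨ho1, ho2⟩, ho3⟩, hba⟩ =>
    ⟨fun i j => o i j ∨ (i = a ∧ j = b), by
      have hne : a ≠ b := G.ne_of_adj hab
      have hnoba : ¬ o b a := fun h => (ho1 b a h).2 (Or.inr ⟨rfl, rfl⟩)
      have hnoab : ¬ o a b := fun h => (ho1 a b h).2 (Or.inl ⟨rfl, rfl⟩)
      refine ⟨⟨⟨?_, ?_⟩, ?_⟩, Or.inr ⟨rfl, rfl⟩⟩
      · rintro i j (h | ⟨rfl, rfl⟩)
        · exact (ho1 i j h).1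
        · exact hab
      · intro i j hadj
        by_cases hP : (i = a ∧ j = b) ∨ (i = b ∧ j = a)
        · rcases hP with ⟨rfl, rfl⟩ | ⟨rfl, rfl⟩
          · constructor
            · rintro - (h | ⟨h1, -⟩)
              · exact hnoba h
              · exact hne h1.symm
            · intro _
              exact Or.inr ⟨rfl, rfl⟩
          · constructor
            · rintro (h | ⟨h1, -⟩)
              · exact absurd h hnoba
              · exact absurd h1.symm hne
            · intro hn
              exact absurd (Or.inr ⟨rfl, rfl⟩) hn
        · have h2 := ho2 i j ⟨hadj, hP⟩
          constructor
          · rintro (h | hab') (h' | hab'')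
            · exact h2.mp h h'
            · exact hP (Or.inr ⟨hab''.2, hab''.1⟩)
            · exact hP (Or.inl hab')
            · exact hP (Or.inl hab')
          · intro hn
            exact Or.inl (h2.mpr (fun h' => hn (Or.inl h')))
      · intro i h
        rcases trans_dichot hba hne h with t | ⟨r1, r2⟩
        · exact ho3 i t
        · rcases Relation.reflTransGen_iff_eq_or_transGen.mp (r2.trans r1) with heq | ht
          · exact hne heq
          · exact hba ht⟩
  left_inv := by
    rintro ⟨o, ⟨⟨ho1, ho2⟩, ho3⟩, hoab⟩
    apply Subtype.ext
    funext i j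
    apply propext
    constructor
    · rintro (⟨h, -⟩ | ⟨rfl, rfl⟩)
      · exact h
      · exact hoab
    · intro h
      by_cases hP : (i = a ∧ j = b) ∨ (i = b ∧ j = a)
      · rcases hP with ⟨rfl, rfl⟩ | ⟨h1, h2⟩
        · exact Or.inr ⟨rfl, rfl⟩
        · rw [h1, h2] at h
          exact absurd h ((ho2 a b hab).mp hoab)
      · exact Or.inl ⟨h, hP⟩
  right_inv := by
    rintro ⟨o, ⟨⟨ho1, ho2⟩, ho3⟩, hba⟩
    apply Subtype.ext
    funext i j
    apply propext
    constructor
    · rintro ⟨h | ⟨rfl, rfl⟩, hP⟩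
      · exact h
      · exact absurd (Or.inl ⟨rfl, rfl⟩) hP
    · intro h
      exact ⟨Or.inl h, fun hP => (ho1 i j h).2 hP⟩

/-- Push an orientation of `Gdel G a b` down to the contraction. -/
def conDown (o : V → V → Prop) (a b : V) :
    {x : V // x ≠ b} → {x : V // x ≠ b} → Prop :=
  fun i j => o ↑i ↑j ∨ ((i : V) = a ∧ o b ↑j) ∨ ((j : V) = a ∧ o ↑i b)

/-- Pull an orientation of the contraction up to `Gdel G a b`. -/
noncomputable def conUp (G : SimpleGraph V) (a b : V) (hne : a ≠ b)
    (p : {x : V // x ≠ b} → {x : V // x ≠ b} → Prop) : V → V → Prop :=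
  fun u v => (Gdel G a b).Adj u v ∧ p (rho hne u) (rho hne v)

/-- "endpoints" in `V` of a contracted vertex. -/
def Ee (a b : V) (i : {x : V // x ≠ b}) (u : V) : Prop :=
  u = ↑i ∨ ((i : V) = a ∧ u = b)

lemma conDown_step {o : V → V → Prop} {a b : V} {i j : {x : V // x ≠ b}}
    (h : conDown o a b i j) : ∃ u v, Ee a b i u ∧ Ee a b j v ∧ o u v := by
  rcases h with h | ⟨e, h⟩ | ⟨e, h⟩
  · exact ⟨↑i, ↑j, Or.inl rfl, Or.inl rfl, h⟩
  · exact ⟨b, ↑j, Or.inr ⟨e, rfl⟩, Or.inl rfl, h⟩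
  · exact ⟨↑i, b, Or.inl rfl, Or.inr ⟨e, rfl⟩, h⟩

open Relation in
lemma conDown_lift {o : V → V → Prop} {a b : V}
    (hacy : ∀ x, ¬ TransGen o x x) (hTab : ¬ TransGen o a b) (hTba : ¬ TransGen o b a)
    {i j : {x : V // x ≠ b}} (h : TransGen (conDown o a b) i j) :
    ∃ u v, Ee a b i u ∧ Ee a b j v ∧
      (TransGen o u v ∨ (TransGen o u a ∧ TransGen o b v)
        ∨ (TransGen o u b ∧ TransGen o a v)) := by
  induction h with
  | single h' =>
    obtain ⟨u, v, hu, hv, huv⟩ := conDown_step h'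
    exact ⟨u, v, hu, hv, Or.inl (TransGen.single huv)⟩
  | tail hs h' ih =>
    obtain ⟨u, v, hu, hv, hcase⟩ := ih
    obtain ⟨v', w, hv', hw, hvw⟩ := conDown_step h'
    by_cases hvv : v = v'
    · refine ⟨u, w, hu, hw, ?_⟩
      rw [hvv] at hcase
      rcases hcase with t | ⟨t1, t2⟩ | ⟨t1, t2⟩
      · exact Or.inl (t.tail hvw)
      · exact Or.inr (Or.inl ⟨t1, t2.tail hvw⟩)
      · exact Or.inr (Or.inr ⟨t1, t2.tail hvw⟩)
    · rcases hv with hv1 | ⟨hja, hv2⟩ <;> rcases hv' with hv1' | ⟨hja', hv2'⟩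
      · exact absurd (hv1.trans hv1'.symm) hvv
      · rw [hv2'] at hvw
        rw [hv1, hja'] at hcase
        rcases hcase with t | ⟨t1, t2⟩ | ⟨t1, t2⟩
        · exact ⟨u, w, hu, hw, Or.inr (Or.inl ⟨t, TransGen.single hvw⟩)⟩
        · exact absurd t2 hTba
        · exact absurd t2 (hacy a)
      · rw [hv1', hja] at hvw
        rw [hv2] at hcase
        rcases hcase with t | ⟨t1, t2⟩ | ⟨t1, t2⟩
        · exact ⟨u, w, hu, hw, Or.inr (Or.inr ⟨t, TransGen.single hvw⟩)⟩
        · exact absurd t2 (hacy b)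
        · exact absurd t2 hTab
      · exact absurd (hv2.trans hv2'.symm) hvv

open Relation in
lemma conDown_acyclic {o : V → V → Prop} {a b : V}
    (hacy : ∀ x, ¬ TransGen o x x) (hTab : ¬ TransGen o a b) (hTba : ¬ TransGen o b a) :
    ∀ i, ¬ TransGen (conDown o a b) i i := by
  intro i h
  obtain ⟨u, v, hu, hv, hcase⟩ := conDown_lift hacy hTab hTba h
  rcases hu with hu1 | ⟨hia, hu2⟩ <;> rcases hv with hv1 | ⟨hia', hv2⟩
  · rw [hu1] at hcase; rw [hv1] at hcase
    rcases hcase with t | ⟨t1, t2⟩ | ⟨t1, t2⟩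
    · exact hacy _ t
    · exact hTba (t2.trans t1)
    · exact hTab (t2.trans t1)
  · rw [hu1, hia'] at hcase; rw [hv2] at hcase
    rcases hcase with t | ⟨t1, t2⟩ | ⟨t1, t2⟩
    · exact hTab t
    · exact hacy b t2
    · exact hTab t2
  · rw [hv1, hia] at hcase; rw [hu2] at hcase
    rcases hcase with t | ⟨t1, t2⟩ | ⟨t1, t2⟩
    · exact hTba t
    · exact hTba t1
    · exact hacy b t1
  · rw [hu2, hv2] at hcase
    rcases hcase with t | ⟨t1, t2⟩ | ⟨t1, t2⟩
    · exact hacy b t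
    · exact hTba t1
    · exact hacy b t1

open Relation in
lemma conDown_excl {o : V → V → Prop} {a b : V}
    (hacy : ∀ x, ¬ TransGen o x x) (hTab : ¬ TransGen o a b) (hTba : ¬ TransGen o b a)
    {i j : {x : V // x ≠ b}} (hij : i ≠ j)
    (h1 : conDown o a b i j) (h2 : conDown o a b j i) : False := by
  rcases h1 with h1 | ⟨e1, h1⟩ | ⟨e1, h1⟩ <;> rcases h2 with h2 | ⟨e2, h2⟩ | ⟨e2, h2⟩
  · exact hacy _ ((TransGen.single h1).tail h2)
  · rw [e2] at h1
    exact hTba ((TransGen.single h2).tail h1)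
  · rw [e2] at h1
    exact hTab ((TransGen.single h1).tail h2)
  · rw [e1] at h2
    exact hTba ((TransGen.single h1).tail h2)
  · exact hij (Subtype.ext (e1.trans e2.symm))
  · exact hacy b ((TransGen.single h1).tail h2)
  · rw [e1] at h2
    exact hTab ((TransGen.single h2).tail h1)
  · exact hacy b ((TransGen.single h2).tail h1)
  · exact hij (Subtype.ext (e2.trans e1.symm))

lemma conDown_total {o : V → V → Prop} (hab : G.Adj a b)
    (ho2 : ∀ i j, (Gdel G a b).Adj i j → (o i j ↔ ¬ o j i))
    {i j : {x : V // x ≠ b}} (hadj : (Gcon G a b).Adj i j) :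
    conDown o a b i j ∨ conDown o a b j i := by
  obtain ⟨hij, hd⟩ := hadj
  rcases hd with h | ⟨h1, h2⟩ | ⟨h1, h2⟩
  · have hGdel : (Gdel G a b).Adj ↑i ↑j :=
      ⟨h, by rintro (⟨-, hb⟩ | ⟨hb, -⟩) <;> [exact j.2 hb; exact i.2 hb]⟩
    by_cases hc : o ↑i ↑j
    · exact Or.inl (Or.inl hc)
    · exact Or.inr (Or.inl ((ho2 _ _ hGdel.symm).mpr hc))
  · have hja : (j : V) ≠ a := fun h => hij (Subtype.ext (h1.trans h.symm))
    have hGdel : (Gdel G a b).Adj b ↑j :=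
      ⟨h2, by rintro (⟨hb, -⟩ | ⟨-, hb⟩) <;> [exact hab.ne' hb; exact hja hb]⟩
    by_cases hc : o b ↑j
    · exact Or.inl (Or.inr (Or.inl ⟨h1, hc⟩))
    · exact Or.inr (Or.inr (Or.inr ⟨h1, (ho2 _ _ hGdel.symm).mpr hc⟩))
  · have hia : (i : V) ≠ a := fun h => hij (Subtype.ext (h.trans h1.symm))
    have hGdel : (Gdel G a b).Adj ↑i b :=
      ⟨h2, by rintro (⟨hb, -⟩ | ⟨hb, -⟩) <;> [exact hia hb; exact i.2 hb]⟩
    by_cases hc : o ↑i b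
    · exact Or.inl (Or.inr (Or.inr ⟨h1, hc⟩))
    · exact Or.inr (Or.inr (Or.inl ⟨h1, (ho2 _ _ hGdel.symm).mpr hc⟩))

lemma rho_adj (hab : G.Adj a b) {u v : V} (hadj : (Gdel G a b).Adj u v) :
    (Gcon G a b).Adj (rho hab.ne u) (rho hab.ne v) := by
  obtain ⟨hG, hP⟩ := hadj
  have huv := G.ne_of_adj hG
  by_cases hu : u = b
  · have hv : v ≠ b := fun h => huv (hu.trans h.symm)
    have hva : v ≠ a := fun h => hP (Or.inr ⟨hu, h⟩)
    rw [hu, rho_b, rho_ne hab.ne hv]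
    exact ⟨coe_ne_coe (fun h => hva h.symm), Or.inr (Or.inl ⟨rfl, hu ▸ hG⟩)⟩
  · by_cases hv : v = b
    · have hua : u ≠ a := fun h => hP (Or.inl ⟨h, hv⟩)
      rw [hv, rho_b, rho_ne hab.ne hu]
      exact ⟨coe_ne_coe hua, Or.inr (Or.inr ⟨rfl, hv ▸ hG⟩)⟩
    · rw [rho_ne hab.ne hu, rho_ne hab.ne hv]
      exact ⟨coe_ne_coe huv, Or.inl hG⟩

open Relation in
/-- Acyclic orientations of `Gdel G a b` with no path between `a` and `b` correspond to
acyclic orientations of the contraction `Gcon G a b`. -/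
noncomputable def conEquiv (hab : G.Adj a b) :
    {o : V → V → Prop // IsAcyclicOrientation (Gdel G a b) o
        ∧ ¬ TransGen o a b ∧ ¬ TransGen o b a}
      ≃ {p : {x : V // x ≠ b} → {x : V // x ≠ b} → Prop //
          IsAcyclicOrientation (Gcon G a b) p} where
  toFun := fun ⟨o, ⟨⟨ho1, ho2⟩, ho3⟩, hTab, hTba⟩ =>
    ⟨conDown o a b, by
      refine ⟨⟨?_, ?_⟩, conDown_acyclic ho3 hTab hTba⟩
      · rintro i j (h | ⟨e, h⟩ | ⟨e, h⟩)
        · have hG := ho1 _ _ h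
          exact ⟨coe_ne_coe (G.ne_of_adj hG.1), Or.inl hG.1⟩
        · have hG := ho1 _ _ h
          have hja : (j : V) ≠ a := fun hj => hG.2 (Or.inr ⟨rfl, hj⟩)
          refine ⟨fun hc => hja ((congrArg Subtype.val hc).symm.trans e), ?_⟩
          exact Or.inr (Or.inl ⟨e, hG.1⟩)
        · have hG := ho1 _ _ h
          have hia : (i : V) ≠ a := fun hi => hG.2 (Or.inl ⟨hi, rfl⟩)
          refine ⟨fun hc => hia ((congrArg Subtype.val hc).trans e), ?_⟩
          exact Or.inr (Or.inr ⟨e, hG.1⟩)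
      · intro i j hadj
        constructor
        · intro h h'
          exact conDown_excl ho3 hTab hTba hadj.1 h h'
        · intro hn
          exact (conDown_total hab ho2 hadj).resolve_right hn⟩
  invFun := fun ⟨p, ⟨⟨hp1, hp2⟩, hp3⟩⟩ =>
    ⟨conUp G a b hab.ne p, by
      refine ⟨⟨⟨fun u v h => h.1, ?_⟩, ?_⟩, ?_, ?_⟩
      · intro u v hadj
        have h2 := hp2 _ _ (rho_adj hab hadj)
        constructor
        · rintro ⟨-, hpp⟩ ⟨-, hpp'⟩
          exact h2.mp hpp hpp'
        · intro hn
          exact ⟨hadj, h2.mpr (fun hpp' => hn ⟨hadj.symm, hpp'⟩)⟩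
      · intro u h
        exact hp3 _ (Relation.TransGen.lift (rho hab.ne) (fun x y hxy => hxy.2) _ _ h)
      · intro h
        have : TransGen p (rho hab.ne a) (rho hab.ne b) :=
          Relation.TransGen.lift (rho hab.ne) (fun x y hxy => hxy.2) _ _ h
        rw [rho_ne hab.ne hab.ne, rho_b] at this
        exact hp3 _ this
      · intro h
        have : TransGen p (rho hab.ne b) (rho hab.ne a) :=
          Relation.TransGen.lift (rho hab.ne) (fun x y hxy => hxy.2) _ _ h
        rw [rho_ne hab.ne hab.ne, rho_b] at this
        exact hp3 _ this⟩
  left_inv := by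
    rintro ⟨o, ⟨⟨ho1, ho2⟩, ho3⟩, hTab, hTba⟩
    apply Subtype.ext
    funext u v
    apply propext
    show (Gdel G a b).Adj u v ∧ conDown o a b (rho hab.ne u) (rho hab.ne v) ↔ o u v
    constructor
    · rintro ⟨hadj, hd⟩
      by_cases hu : u = b
      · have hv : v ≠ b := fun h => G.ne_of_adj hadj.1 (hu.trans h.symm)
        have hva : v ≠ a := fun h => hadj.2 (Or.inr ⟨hu, h⟩)
        rw [hu, rho_b, rho_ne hab.ne hv] at hd
        rw [hu]
        rcases hd with h | ⟨-, h⟩ | ⟨hva', -⟩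
        · -- h : o a v, want o b v
          by_contra hn
          have hGbv : (Gdel G a b).Adj b v := hu ▸ hadj
          have hvb : o v b := (ho2 v b hGbv.symm).mpr hn
          exact hTab ((TransGen.single h).tail hvb)
        · exact h
        · exact absurd hva' hva
      · by_cases hv : v = b
        · have hua : u ≠ a := fun h => hadj.2 (Or.inl ⟨h, hv⟩)
          rw [rho_ne hab.ne hu, hv, rho_b] at hd
          rw [hv]
          rcases hd with h | ⟨hua', -⟩ | ⟨-, h⟩
          · -- h : o u a, want o u b
            by_contra hn
            have hGub : (Gdel G a b).Adj u b := hv ▸ hadj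
            have hbu : o b u := (ho2 b u hGub.symm).mpr hn
            exact hTba ((TransGen.single hbu).tail h)
          · exact absurd hua' hua
          · exact h
        · rw [rho_ne hab.ne hu, rho_ne hab.ne hv] at hd
          rcases hd with h | ⟨hua, h⟩ | ⟨hva, h⟩
          · exact h
          · -- hua : u = a, h : o b v, want o u v
            by_contra hn
            have hvu : o v u := (ho2 v u hadj.symm).mpr hn
            have hua2 : u = a := hua
            rw [hua2] at hvu
            exact hTba ((TransGen.single h).tail hvu)
          · -- hva : v = a, h : o u b, want o u v
            by_contra hn
            have hvu : o v u := (ho2 v u hadj.symm).mpr hn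
            have hva2 : v = a := hva
            rw [hva2] at hvu
            exact hTab ((TransGen.single hvu).tail h)
    · intro ho
      have hadj := ho1 u v ho
      refine ⟨hadj, ?_⟩
      by_cases hu : u = b
      · have hv : v ≠ b := fun h => G.ne_of_adj hadj.1 (hu.trans h.symm)
        rw [hu, rho_b, rho_ne hab.ne hv]
        exact Or.inr (Or.inl ⟨rfl, hu ▸ ho⟩)
      · by_cases hv : v = b
        · rw [rho_ne hab.ne hu, hv, rho_b]
          exact Or.inr (Or.inr ⟨rfl, hv ▸ ho⟩)
        · rw [rho_ne hab.ne hu, rho_ne hab.ne hv]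
          exact Or.inl ho
  right_inv := by
    rintro ⟨p, ⟨⟨hp1, hp2⟩, hp3⟩⟩
    apply Subtype.ext
    funext i j
    apply propext
    show conDown (conUp G a b hab.ne p) a b i j ↔ p i j
    constructor
    · rintro (⟨-, h2⟩ | ⟨e, -, h2⟩ | ⟨e, -, h2⟩)
      · rwa [rho_coe, rho_coe] at h2
      · rw [rho_b, rho_coe] at h2
        have hi : (⟨a, hab.ne⟩ : {x : V // x ≠ b}) = i := Subtype.ext e.symm
        rwa [hi] at h2
      · rw [rho_coe, rho_b] at h2
        have hj : (⟨a, hab.ne⟩ : {x : V // x ≠ b}) = j := Subtype.ext e.symm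
        rwa [hj] at h2
    · intro hp
      obtain ⟨hij, hd⟩ := hp1 _ _ hp
      rcases hd with h | ⟨e1, hG⟩ | ⟨e1, hG⟩
      · refine Or.inl ⟨⟨h, ?_⟩, ?_⟩
        · rintro (⟨-, hb⟩ | ⟨hb, -⟩) <;> [exact j.2 hb; exact i.2 hb]
        · rwa [rho_coe, rho_coe]
      · have hja : (j : V) ≠ a := fun h => hij (Subtype.ext (e1.trans h.symm))
        refine Or.inr (Or.inl ⟨e1, ⟨hG, ?_⟩, ?_⟩)
        · rintro (⟨hb, -⟩ | ⟨-, hb⟩) <;> [exact hab.ne' hb; exact hja hb]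
        · rw [rho_b, rho_coe]
          have hi : i = (⟨a, hab.ne⟩ : {x : V // x ≠ b}) := Subtype.ext e1
          rwa [hi] at hp
      · have hia : (i : V) ≠ a := fun h => hij (Subtype.ext (h.trans e1.symm))
        refine Or.inr (Or.inr ⟨e1, ⟨hG, ?_⟩, ?_⟩)
        · rintro (⟨hb, -⟩ | ⟨hb, -⟩) <;> [exact hia hb; exact i.2 hb]
        · rw [rho_coe, rho_b]
          have hj : j = (⟨a, hab.ne⟩ : {x : V // x ≠ b}) := Subtype.ext e1
          rwa [hj] at hp

lemma coloring_count [Finite V] (hab : G.Adj a b) (t : ℕ) :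
    Nat.card {x : V → Fin t // ∀ i j, (Gdel G a b).Adj i j → x i ≠ x j}
      = Nat.card {x : V → Fin t // ∀ i j, G.Adj i j → x i ≠ x j}
        + Nat.card {y : {v : V // v ≠ b} → Fin t //
            ∀ i j, (Gcon G a b).Adj i j → y i ≠ y j} := by
  rw [card_partition (fun x : V → Fin t => ∀ i j, (Gdel G a b).Adj i j → x i ≠ x j)
    (fun x => x a = x b)]
  rw [Nat.add_comm]
  congr 1
  · exact Nat.card_congr (Equiv.subtypeEquivRight (fun x => proper_del_iff hab t x))
  · exact Nat.card_congr (colorEquiv hab t)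


open Relation in
lemma orient_count [Finite V] (hab : G.Adj a b) :
    Nat.card {o : V → V → Prop // IsAcyclicOrientation G o}
      = Nat.card {o : V → V → Prop // IsAcyclicOrientation (Gdel G a b) o}
        + Nat.card {p : {x : V // x ≠ b} → {x : V // x ≠ b} → Prop //
            IsAcyclicOrientation (Gcon G a b) p} := by
  classical
  have hmain : Nat.card {o : V → V → Prop // IsAcyclicOrientation G o}
      = Nat.card {o : V → V → Prop // IsAcyclicOrientation G o ∧ o a b}
        + Nat.card {o : V → V → Prop // IsAcyclicOrientation G o ∧ ¬ o a b} :=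
    card_partition _ _
  have e2 : Nat.card {o : V → V → Prop // IsAcyclicOrientation G o ∧ ¬ o a b}
      = Nat.card {o : V → V → Prop // IsAcyclicOrientation G o ∧ o b a} :=
    Nat.card_congr (Equiv.subtypeEquivRight (fun o => by
      constructor
      · rintro ⟨ho, hn⟩
        refine ⟨ho, ?_⟩
        by_contra hn2
        exact hn ((ho.1.2 a b hab).mpr hn2)
      · rintro ⟨ho, hba⟩
        exact ⟨ho, fun hab' => (ho.1.2 a b hab).mp hab' hba⟩))
  have e3 : Nat.card {o : V → V → Prop // IsAcyclicOrientation G o ∧ o a b}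
      = Nat.card {o : V → V → Prop //
          IsAcyclicOrientation (Gdel G a b) o ∧ ¬ TransGen o b a} :=
    Nat.card_congr (extEquiv hab)
  have e4 : Nat.card {o : V → V → Prop // IsAcyclicOrientation G o ∧ o b a}
      = Nat.card {o : V → V → Prop //
          IsAcyclicOrientation (Gdel G a b) o ∧ ¬ TransGen o a b} := by
    have e := extEquiv hab.symm
    rw [← Gdel_symm] at e
    exact Nat.card_congr e
  have hA : Nat.card {o : V → V → Prop // IsAcyclicOrientation (Gdel G a b) o}
      = Nat.card {o : V → V → Prop //
            IsAcyclicOrientation (Gdel G a b) o ∧ TransGen o a b}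
        + Nat.card {o : V → V → Prop //
            IsAcyclicOrientation (Gdel G a b) o ∧ ¬ TransGen o a b} :=
    card_partition _ _
  have hB : Nat.card {o : V → V → Prop //
          IsAcyclicOrientation (Gdel G a b) o ∧ ¬ TransGen o a b}
      = Nat.card {o : V → V → Prop //
            (IsAcyclicOrientation (Gdel G a b) o ∧ ¬ TransGen o a b) ∧ TransGen o b a}
        + Nat.card {o : V → V → Prop //
            (IsAcyclicOrientation (Gdel G a b) o ∧ ¬ TransGen o a b) ∧ ¬ TransGen o b a} :=
    card_partition _ _
  have hC : Nat.card {o : V → V → Prop //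
          IsAcyclicOrientation (Gdel G a b) o ∧ ¬ TransGen o b a}
      = Nat.card {o : V → V → Prop //
            (IsAcyclicOrientation (Gdel G a b) o ∧ ¬ TransGen o b a) ∧ TransGen o a b}
        + Nat.card {o : V → V → Prop //
            (IsAcyclicOrientation (Gdel G a b) o ∧ ¬ TransGen o b a) ∧ ¬ TransGen o a b} :=
    card_partition _ _
  have hD : Nat.card {o : V → V → Prop //
          (IsAcyclicOrientation (Gdel G a b) o ∧ ¬ TransGen o b a) ∧ TransGen o a b}
      = Nat.card {o : V → V → Prop //
          IsAcyclicOrientation (Gdel G a b) o ∧ TransGen o a b} :=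
    Nat.card_congr (Equiv.subtypeEquivRight (fun o => by
      constructor
      · rintro ⟨⟨ho, -⟩, ht⟩
        exact ⟨ho, ht⟩
      · rintro ⟨ho, ht⟩
        exact ⟨⟨ho, fun hba => ho.2 a (ht.trans hba)⟩, ht⟩))
  have hE : Nat.card {o : V → V → Prop //
          (IsAcyclicOrientation (Gdel G a b) o ∧ ¬ TransGen o b a) ∧ ¬ TransGen o a b}
      = Nat.card {o : V → V → Prop //
          (IsAcyclicOrientation (Gdel G a b) o ∧ ¬ TransGen o a b) ∧ ¬ TransGen o b a} :=
    Nat.card_congr (Equiv.subtypeEquivRight (fun o => by tauto))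
  have hZ : Nat.card {o : V → V → Prop //
          (IsAcyclicOrientation (Gdel G a b) o ∧ ¬ TransGen o a b) ∧ ¬ TransGen o b a}
      = Nat.card {p : {x : V // x ≠ b} → {x : V // x ≠ b} → Prop //
          IsAcyclicOrientation (Gcon G a b) p} := by
    refine Nat.card_congr ((Equiv.subtypeEquivRight (fun o => ?_)).trans (conEquiv hab))
    tauto
  rw [hmain, e2, e3, e4, hA, hB, hC, hD, hE, hZ]
  ring

lemma pairs_del_lt [Finite V] (hab : G.Adj a b) :
    Nat.card {p : V × V // (Gdel G a b).Adj p.1 p.2}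
      < Nat.card {p : V × V // G.Adj p.1 p.2} := by
  have h1 : {p : V × V | (Gdel G a b).Adj p.1 p.2} ⊂ {p : V × V | G.Adj p.1 p.2} := by
    constructor
    · rintro ⟨i, j⟩ h
      exact h.1
    · intro hsub
      have := hsub (show (a, b) ∈ {p : V × V | G.Adj p.1 p.2} from hab)
      exact this.2 (Or.inl ⟨rfl, rfl⟩)
  have h2 := Set.ncard_lt_ncard h1 (Set.toFinite _)
  rw [← Nat.card_coe_set_eq, ← Nat.card_coe_set_eq] at h2
  exact h2

noncomputable def conInj (G : SimpleGraph V) (a b : V)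
    (q : {p : {x : V // x ≠ b} × {x : V // x ≠ b} // (Gcon G a b).Adj p.1 p.2}) :
    {p : V × V // G.Adj p.1 p.2} := by
  classical
  refine if hG : G.Adj (↑q.1.1) (↑q.1.2) then ⟨((q.1.1 : V), (q.1.2 : V)), hG⟩
    else if hi : (q.1.1 : V) = a then ⟨(b, (q.1.2 : V)), ?_⟩
    else ⟨((q.1.1 : V), b), ?_⟩
  · rcases q.2.2 with h | ⟨e, h⟩ | ⟨e, h⟩
    · exact absurd h hG
    · exact h
    · exact absurd (Subtype.ext (hi.trans e.symm)) q.2.1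
  · rcases q.2.2 with h | ⟨e, h⟩ | ⟨e, h⟩
    · exact absurd h hG
    · exact absurd e hi
    · exact h

lemma conInj_injective (G : SimpleGraph V) (a b : V) :
    Function.Injective (conInj G a b) := by
  classical
  rintro ⟨⟨i, j⟩, hq⟩ ⟨⟨i', j'⟩, hq'⟩ heq
  unfold conInj at heq
  split_ifs at heq
  all_goals simp only [Subtype.mk.injEq, Prod.mk.injEq] at heq
  all_goals obtain ⟨e1, e2⟩ := heq
  all_goals first
    | exact Subtype.ext (Prod.ext (Subtype.ext e1) (Subtype.ext e2))
    | exact absurd e1 i.2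
    | exact absurd e1.symm i.2
    | exact absurd e1 i'.2
    | exact absurd e1.symm i'.2
    | exact absurd e2 j.2
    | exact absurd e2.symm j.2
    | exact absurd e2 j'.2
    | exact absurd e2.symm j'.2
    | (refine Subtype.ext (Prod.ext (Subtype.ext ?_) (Subtype.ext e2))
       have h1 : (i : V) = a := by assumption
       have h2 : (i' : V) = a := by assumption
       exact h1.trans h2.symm)
    | (refine Subtype.ext (Prod.ext (Subtype.ext e1) (Subtype.ext ?_))
       have hja : (j : V) = a := by
         rcases hq.2 with h | ⟨e, h⟩ | ⟨e, h⟩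
         · exact absurd h (by assumption)
         · exact absurd e (by assumption)
         · exact e
       have hja' : (j' : V) = a := by
         rcases hq'.2 with h | ⟨e, h⟩ | ⟨e, h⟩
         · exact absurd h (by assumption)
         · exact absurd e (by assumption)
         · exact e
       exact hja.trans hja'.symm)

lemma pairs_con_le [Finite V] (G : SimpleGraph V) (a b : V) :
    Nat.card {p : {x : V // x ≠ b} × {x : V // x ≠ b} // (Gcon G a b).Adj p.1 p.2}
      ≤ Nat.card {p : V × V // G.Adj p.1 p.2} :=
  Nat.card_le_card_of_injective _ (conInj_injective G a b)


lemma card_vertex [Finite V] (b : V) :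
    Nat.card {x : V // x ≠ b} + 1 = Nat.card V := by
  classical
  letI := Fintype.ofFinite V
  rw [Nat.card_eq_fintype_card, Nat.card_eq_fintype_card]
  have h1 : Fintype.card {x : V // ¬ x = b} = Fintype.card V - Fintype.card {x : V // x = b} :=
    Fintype.card_subtype_compl _
  have h2 : Fintype.card {x : V // x = b} = 1 := Fintype.card_subtype_eq b
  have h3 : 0 < Fintype.card V := Fintype.card_pos_iff.mpr ⟨b⟩
  have h4 : Fintype.card {x : V // x ≠ b} = Fintype.card {x : V // ¬ x = b} := rfl
  omega

lemma key_noedge (V : Type u) [Finite V] (G : SimpleGraph V) (hE : ∀ i j, ¬ G.Adj i j) :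
    ∃ q : Polynomial ℤ,
      (∀ t : ℕ, 0 < t → q.eval (t : ℤ)
          = (Nat.card {x : V → Fin t // ∀ i j, G.Adj i j → x i ≠ x j} : ℤ)) ∧
      (-1) ^ (Nat.card V) * q.eval (-1)
          = (Nat.card {o : V → V → Prop // IsAcyclicOrientation G o} : ℤ) := by
  classical
  refine ⟨Polynomial.X ^ (Nat.card V), ?_, ?_⟩
  · intro t ht
    have e : {x : V → Fin t // ∀ i j, G.Adj i j → x i ≠ x j} ≃ (V → Fin t) :=
      Equiv.subtypeUnivEquiv (fun x i j h => absurd h (hE i j))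
    rw [Nat.card_congr e, Nat.card_fun, Nat.card_eq_fintype_card (α := Fin t),
      Fintype.card_fin]
    rw [Polynomial.eval_pow, Polynomial.eval_X]
    push_cast
    ring
  · have hU : ∀ o : V → V → Prop, IsAcyclicOrientation G o → o = fun _ _ => False := by
      intro o ho
      funext i j
      apply propext
      exact ⟨fun h => hE i j (ho.1.1 i j h), False.elim⟩
    have hNE : IsAcyclicOrientation G (fun _ _ => False) := by
      refine ⟨⟨fun i j h => h.elim, fun i j h => absurd h (hE i j)⟩, ?_⟩
      intro i h
      cases h with
      | single h => exact h
      | tail _ h => exact h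
    haveI : Nonempty {o : V → V → Prop // IsAcyclicOrientation G o} := ⟨⟨_, hNE⟩⟩
    haveI : Subsingleton {o : V → V → Prop // IsAcyclicOrientation G o} :=
      ⟨fun x y => Subtype.ext ((hU _ x.2).trans (hU _ y.2).symm)⟩
    rw [Nat.card_unique (α := {o : V → V → Prop // IsAcyclicOrientation G o})]
    rw [Polynomial.eval_pow, Polynomial.eval_X, ← mul_pow]
    norm_num

lemma key (n : ℕ) : ∀ (V : Type u) [Finite V] (G : SimpleGraph V),
    Nat.card V + Nat.card {p : V × V // G.Adj p.1 p.2} ≤ n →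
    ∃ q : Polynomial ℤ,
      (∀ t : ℕ, 0 < t → q.eval (t : ℤ)
          = (Nat.card {x : V → Fin t // ∀ i j, G.Adj i j → x i ≠ x j} : ℤ)) ∧
      (-1) ^ (Nat.card V) * q.eval (-1)
          = (Nat.card {o : V → V → Prop // IsAcyclicOrientation G o} : ℤ) := by
  induction n with
  | zero =>
    intro V _ G hm
    refine key_noedge V G (fun i j h => ?_)
    have h0 : Nat.card V = 0 := by omega
    rcases Nat.card_eq_zero.mp h0 with h1 | h1
    · exact h1.elim i
    · exact absurd ‹Finite V› (by rw [not_finite_iff_infinite]; exact h1)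
  | succ n ih =>
    intro V _ G hm
    by_cases hE : ∀ i j, ¬ G.Adj i j
    · exact key_noedge V G hE
    · push_neg at hE
      obtain ⟨a, b, hab⟩ := hE
      have hdel : Nat.card V + Nat.card {p : V × V // (Gdel G a b).Adj p.1 p.2} ≤ n := by
        have := pairs_del_lt hab
        omega
      have hcon : Nat.card {x : V // x ≠ b}
          + Nat.card {p : {x : V // x ≠ b} × {x : V // x ≠ b} //
              (Gcon G a b).Adj p.1 p.2} ≤ n := by
        have h1 := pairs_con_le G a b
        have h2 := card_vertex b
        omega
      obtain ⟨qd, hqd1, hqd2⟩ := ih V (Gdel G a b) hdel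
      obtain ⟨qc, hqc1, hqc2⟩ := ih {x : V // x ≠ b} (Gcon G a b) hcon
      refine ⟨qd - qc, ?_, ?_⟩
      · intro t ht
        rw [Polynomial.eval_sub, hqd1 t ht, hqc1 t ht, coloring_count hab t]
        push_cast
        ring
      · have hcV : Nat.card V = Nat.card {x : V // x ≠ b} + 1 := (card_vertex b).symm
        have esign : (-1 : ℤ) ^ (Nat.card V)
            = -((-1 : ℤ) ^ (Nat.card {x : V // x ≠ b})) := by
          rw [hcV, pow_succ]
          ring
        rw [Polynomial.eval_sub, mul_sub, hqd2, orient_count hab, esign]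
        have : -(-1 : ℤ) ^ Nat.card {x : V // x ≠ b} * Polynomial.eval (-1) qc
            = -((-1 : ℤ) ^ Nat.card {x : V // x ≠ b} * Polynomial.eval (-1) qc) := by ring
        rw [this, hqc2]
        push_cast
        ring

end

/-- **Stanley's theorem on acyclic orientations.** If `c_G` is the chromatic polynomial of a
finite simple graph `G = (V,E)`, then `(-1)^{|V|} c_G(-1)` is the number of acyclic
orientations of `G`. -/
theorem acyclic_orientations_count {V : Type*} [Fintype V] (G : SimpleGraph V)
    (c : Polynomial ℤ)
    (hc : ∀ t : ℕ, 0 < t → c.eval (t : ℤ)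
      = (Nat.card {x : V → Fin t // ∀ i j, G.Adj i j → x i ≠ x j} : ℤ)) :
    (-1) ^ (Fintype.card V) * c.eval (-1)
      = (Nat.card {o : V → V → Prop // IsAcyclicOrientation G o} : ℤ) := by

  obtain ⟨q, hq1, hq2⟩ := key (Nat.card V + Nat.card {p : V × V // G.Adj p.1 p.2}) V G le_rfl
  have hcq : c = q := by
    apply Polynomial.eq_of_infinite_eval_eq
    refine Set.Infinite.mono ?_ (Set.Ici_infinite (1 : ℤ))
    intro x hx
    have hx1 : (1 : ℤ) ≤ x := hx
    have hxt : ((x.toNat : ℕ) : ℤ) = x := Int.toNat_of_nonneg (by omega)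
    have hpos : 0 < x.toNat := by omega
    rw [Set.mem_setOf_eq, ← hxt, hc x.toNat hpos, hq1 x.toNat hpos]
  rw [hcq, show Fintype.card V = Nat.card V from Nat.card_eq_fintype_card.symm]
  exact hq2
end

section
/- Let Π be a finite poset with d elements. Let A(z) := (Σ_{t≥0} p_Π(t) z^t) · Π_{i=1}^d (1−z^i) and B(z) := (Σ_{t≥0} p_Π°(t) z^t) · Π_{i=1}^d (1−z^i); then A and B are polynomials in z with integer coefficients of degree at most d(d−1)/2, and B(z) = z^{d(d−1)/2} · A(1/z), i.e., for every k the coefficient of z^k in B equals the coefficient of z^{d(d−1)/2 − k} in A. (This is the precise form of the reciprocity P_Π(1/z) = (−z)^{|Π|} P_Π°(z) between the generating functions of Π-partitions and strict Π-partitions.) -/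
open Finset PowerSeries

set_option linter.unusedSectionVars false

namespace PPRec

/-! ### Finiteness helpers -/

lemma finite_aux {β : Type*} [Fintype β] (t : ℕ) (Q : (β → ℕ) → Prop)
    (hQ : ∀ x, Q x → ∀ b, x b ≤ t) : Finite {x : β → ℕ // Q x} := by
  have : Function.Injective (fun (x : {x : β → ℕ // Q x}) (b : β) =>
      (⟨x.1 b, Nat.lt_succ_of_le (hQ x.1 x.2 b)⟩ : Fin (t+1))) := by
    intro x y h
    ext b
    exact congrArg Fin.val (congrFun h b)
  exact Finite.of_injective _ this

lemma finite_sum {β : Type*} [Fintype β] (t : ℕ) (P : (β → ℕ) → Prop) :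
    Finite {x : β → ℕ // P x ∧ ∑ b, x b = t} := by
  apply finite_aux t
  rintro x ⟨-, hx⟩ b
  calc x b ≤ ∑ b, x b := Finset.single_le_sum (fun i _ => Nat.zero_le _) (mem_univ b)
  _ = t := hx

/-! ### The series `q` counting `∑ (i+1) yᵢ = t` -/

noncomputable def q (d t : ℕ) : ℕ := Nat.card {y : Fin d → ℕ // ∑ i : Fin d, ((i : ℕ) + 1) * y i = t}

instance q_finite (d t : ℕ) : Finite {y : Fin d → ℕ // ∑ i : Fin d, ((i : ℕ) + 1) * y i = t} := by
  apply finite_aux t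
  intro y hy b
  calc y b ≤ ((b : ℕ) + 1) * y b := by nlinarith
  _ ≤ ∑ i : Fin d, ((i : ℕ) + 1) * y i := Finset.single_le_sum
      (f := fun i : Fin d => ((i : ℕ) + 1) * y i) (fun i _ => Nat.zero_le _) (mem_univ b)
  _ = t := hy

lemma q_zero (t : ℕ) : q 0 t = if t = 0 then 1 else 0 := by
  unfold q
  split
  · subst_vars
    rw [Nat.card_eq_one_iff_unique]
    constructor
    · constructor
      intro a b
      ext i
      exact absurd i.2 (Nat.not_lt_zero _)
    · exact ⟨⟨fun i => 0, by simp⟩⟩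
  · rw [Nat.card_eq_zero]
    left
    constructor
    intro ⟨y, hy⟩
    simp at hy
    omega

lemma sum_succ_eq {d : ℕ} (y : Fin (d+1) → ℕ) :
    ∑ i : Fin (d+1), ((i : ℕ) + 1) * y i
      = (∑ i : Fin d, ((i : ℕ) + 1) * y i.castSucc) + (d+1) * y (Fin.last d) := by
  rw [Fin.sum_univ_castSucc]; simp

lemma sum_update_last {d : ℕ} (y : Fin (d+1) → ℕ) (c : ℕ) :
    ∑ i : Fin (d+1), ((i : ℕ) + 1) * (Function.update y (Fin.last d) c) i
      = (∑ i : Fin d, ((i : ℕ) + 1) * y i.castSucc) + (d+1) * c := by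
  rw [sum_succ_eq]
  congr 1
  · apply Finset.sum_congr rfl
    intro i _
    rw [Function.update_of_ne (Fin.ne_of_lt (Fin.castSucc_lt_last i))]
  · rw [Function.update_self]

lemma q_succ_lt (d t : ℕ) (h : t < d + 1) : q (d+1) t = q d t := by
  unfold q
  symm
  apply Nat.card_eq_of_bijective
    (f := fun y => (⟨Fin.snoc y.1 0, by
      rw [sum_succ_eq]; simpa using y.2⟩ :
      {y : Fin (d+1) → ℕ // ∑ i : Fin (d+1), ((i : ℕ) + 1) * y i = t}))
  constructor
  · intro y z hyz
    ext i
    have := congrFun (congrArg Subtype.val hyz) i.castSucc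
    simpa using this
  · rintro ⟨y, hy⟩
    have hlast : y (Fin.last d) = 0 := by
      by_contra h0
      have h1 : d + 1 ≤ (d+1) * y (Fin.last d) := Nat.le_mul_of_pos_right _ (Nat.pos_of_ne_zero h0)
      rw [sum_succ_eq] at hy
      omega
    refine ⟨⟨Fin.init y, ?_⟩, ?_⟩
    · rw [sum_succ_eq, hlast] at hy
      simpa [Fin.init] using hy
    · ext i
      simp only
      rw [← hlast]
      exact congrFun (Fin.snoc_init_self y) i

lemma q_succ_ge (d t : ℕ) (h : d + 1 ≤ t) :
    q (d+1) t = q d t + q (d+1) (t - (d+1)) := by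
  classical
  unfold q
  rw [← Nat.card_sum]
  symm
  apply Nat.card_eq_of_bijective (f := fun p => match p with
    | Sum.inl y => (⟨Fin.snoc y.1 0, by rw [sum_succ_eq]; simpa using y.2⟩ :
        {y : Fin (d+1) → ℕ // ∑ i : Fin (d+1), ((i : ℕ) + 1) * y i = t})
    | Sum.inr y => ⟨Function.update y.1 (Fin.last d) (y.1 (Fin.last d) + 1), by
        rw [sum_update_last]
        have h2 := y.2
        rw [sum_succ_eq y.1] at h2
        rw [Nat.mul_add]
        omega⟩)
  constructor
  · rintro (y | y) (z | z) hyz <;>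
      have hv := congrArg Subtype.val hyz
    · apply congrArg Sum.inl
      apply Subtype.ext
      funext i
      have := congrFun hv i.castSucc
      simpa using this
    · exfalso
      have := congrFun hv (Fin.last d)
      simp at this
    · exfalso
      have := congrFun hv (Fin.last d)
      simp at this
    · apply congrArg Sum.inr
      apply Subtype.ext
      funext i
      have hl := congrFun hv (Fin.last d)
      simp at hl
      rcases eq_or_ne i (Fin.last d) with rfl | hi
      · exact hl
      · have := congrFun hv i
        simp only at this
        rwa [Function.update_of_ne hi, Function.update_of_ne hi] at this
  · rintro ⟨y, hy⟩
    rcases Nat.eq_zero_or_pos (y (Fin.last d)) with h0 | h0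
    · refine ⟨Sum.inl ⟨Fin.init y, ?_⟩, ?_⟩
      · rw [sum_succ_eq, h0] at hy
        simpa [Fin.init] using hy
      · ext i
        simp only
        rw [← h0]
        exact congrFun (Fin.snoc_init_self y) i
    · refine ⟨Sum.inr ⟨Function.update y (Fin.last d) (y (Fin.last d) - 1), ?_⟩, ?_⟩
      · rw [sum_update_last]
        rw [sum_succ_eq] at hy
        have h1 : d + 1 ≤ (d+1) * y (Fin.last d) := Nat.le_mul_of_pos_right _ h0
        rw [Nat.mul_sub, Nat.mul_one]
        omega
      · ext i
        simp only [Function.update_self]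
        rcases eq_or_ne i (Fin.last d) with rfl | hi
        · rw [Function.update_self]
          omega
        · rw [Function.update_of_ne hi, Function.update_of_ne hi]

lemma q_succ (d t : ℕ) :
    q (d+1) t = q d t + (if d + 1 ≤ t then q (d+1) (t - (d+1)) else 0) := by
  split_ifs with h
  · exact q_succ_ge d t h
  · rw [q_succ_lt d t (by omega), add_zero]

lemma mkq_step (d : ℕ) :
    (PowerSeries.mk fun s => (q (d+1) s : ℤ)) * (1 - X ^ (d+1))
      = PowerSeries.mk fun s => (q d s : ℤ) := by
  ext t
  have hq := q_succ d t
  rw [mul_sub, mul_one, map_sub, PowerSeries.coeff_mul_X_pow']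
  simp only [coeff_mk]
  split_ifs with h <;> rw [hq] <;> simp [h]

lemma mkq_prod (d : ℕ) :
    (PowerSeries.mk fun s => (q d s : ℤ)) * ∏ i ∈ range d, (1 - X ^ (i+1)) = 1 := by
  induction d with
  | zero =>
    rw [Finset.range_zero, Finset.prod_empty, mul_one]
    ext t
    rw [coeff_mk, q_zero]
    simp [PowerSeries.coeff_one]
  | succ d ih =>
    rw [Finset.prod_range_succ, show ∀ a b c : PowerSeries ℤ, a * (b * c) = a * c * b by
      intros; ring, mkq_step, ih]

/-! ### Chain conditions -/

variable {d : ℕ}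

/-- chain condition with strictness at positions in `S`. -/
def condS (S : Finset (Fin d)) (v : Fin d → ℕ) : Prop :=
  ∀ (i : Fin d) (h : (i : ℕ) + 1 < d), v ⟨(i : ℕ) + 1, h⟩ + (if i ∈ S then 1 else 0) ≤ v i

/-- extend a tuple by zero. -/
def ext0 (v : Fin d → ℕ) (k : ℕ) : ℕ := if h : k < d then v ⟨k, h⟩ else 0

lemma ext0_lt (v : Fin d → ℕ) {k : ℕ} (h : k < d) : ext0 v k = v ⟨k, h⟩ := dif_pos h

noncomputable def chi (S : Finset (Fin d)) (k : ℕ) : ℕ :=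
  if h : k < d then (if (⟨k, h⟩ : Fin d) ∈ S then 1 else 0) else 0

lemma sum_fin_eq_sum_range (v : Fin d → ℕ) : ∑ i : Fin d, v i = ∑ k ∈ range d, ext0 v k := by
  rw [← Fin.sum_univ_eq_sum_range (ext0 v) d]
  exact Finset.sum_congr rfl fun i _ => by rw [ext0_lt v i.2]

lemma sum_Ico_weight (g : ℕ → ℕ) :
    ∑ i ∈ range d, ∑ j ∈ Ico i d, g j = ∑ j ∈ range d, (j + 1) * g j := by
  have h1 : ∀ i ∈ range d, ∑ j ∈ Ico i d, g j = ∑ j ∈ range d, if i ≤ j then g j else 0 := by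
    intro i _
    rw [Finset.sum_ite, Finset.sum_const_zero, add_zero]
    apply Finset.sum_congr _ (fun _ _ => rfl)
    ext j
    simp only [mem_Ico, mem_filter, mem_range]
    omega
  rw [Finset.sum_congr rfl h1, Finset.sum_comm]
  apply Finset.sum_congr rfl
  intro j hj
  rw [Finset.sum_ite, Finset.sum_const_zero, add_zero, Finset.sum_const, smul_eq_mul]
  have : (range d).filter (fun i => i ≤ j) = range (j + 1) := by
    ext i
    simp only [mem_filter, mem_range]
    simp only [mem_range] at hj
    omega
  rw [this, Finset.card_range]

/-- suffix-sum construction. -/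
noncomputable def Gmap (S : Finset (Fin d)) (y : Fin d → ℕ) : Fin d → ℕ :=
  fun i => ∑ j ∈ Ico (i : ℕ) d, (ext0 y j + chi S j)

lemma Gmap_rec (S : Finset (Fin d)) (y : Fin d → ℕ) (i : Fin d) :
    Gmap S y i = (ext0 y i + chi S i)
      + (if h : (i : ℕ) + 1 < d then Gmap S y ⟨(i : ℕ) + 1, h⟩ else 0) := by
  by_cases h : (i : ℕ) + 1 < d
  · rw [dif_pos h]
    exact Finset.sum_eq_sum_Ico_succ_bot i.2 _
  · rw [dif_neg h]
    have hIco : Ico (i : ℕ) d = {(i : ℕ)} := by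
      ext k
      simp only [mem_Ico, mem_singleton]
      have := i.2
      omega
    unfold Gmap
    rw [hIco, Finset.sum_singleton, add_zero]

lemma Gmap_condS (S : Finset (Fin d)) (y : Fin d → ℕ) : condS S (Gmap S y) := by
  intro i h
  rw [Gmap_rec S y i, dif_pos h]
  have : (if i ∈ S then 1 else 0) ≤ ext0 y i + chi S i := by
    unfold chi
    rw [dif_pos i.2]
    simp only [Fin.eta]
    split_ifs <;> omega
  omega

lemma Gmap_sum (S : Finset (Fin d)) (y : Fin d → ℕ) :
    ∑ i : Fin d, Gmap S y i
      = (∑ i : Fin d, ((i : ℕ) + 1) * y i) + ∑ i ∈ S, ((i : ℕ) + 1) := by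
  have h0 : ∑ i : Fin d, Gmap S y i
      = ∑ k ∈ range d, ∑ j ∈ Ico k d, (ext0 y j + chi S j) :=
    Fin.sum_univ_eq_sum_range (fun k => ∑ j ∈ Ico k d, (ext0 y j + chi S j)) d
  rw [h0, sum_Ico_weight]
  have h1 : ∀ j ∈ range d, (j+1) * (ext0 y j + chi S j)
      = (j+1) * ext0 y j + (j+1) * chi S j := fun j _ => Nat.mul_add _ _ _
  rw [Finset.sum_congr rfl h1, Finset.sum_add_distrib]
  congr 1
  · rw [← Fin.sum_univ_eq_sum_range (fun k => (k+1) * ext0 y k) d]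
    exact Finset.sum_congr rfl fun i _ => by rw [ext0_lt y i.2]
  · rw [← Fin.sum_univ_eq_sum_range (fun k => (k+1) * chi S k) d]
    have h2 : ∀ i : Fin d, ((i:ℕ)+1) * chi S i = if i ∈ S then ((i:ℕ)+1) else 0 := by
      intro i
      unfold chi
      rw [dif_pos i.2]
      simp only [Fin.eta]
      split_ifs <;> omega
    rw [Finset.sum_congr rfl (fun i _ => h2 i)]
    rw [← Finset.sum_filter]
    apply Finset.sum_congr _ (fun _ _ => rfl)
    simp

lemma Gmap_injective (S : Finset (Fin d)) : Function.Injective (Gmap S) := by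
  intro y y' h
  funext i
  have h1 := Gmap_rec S y i
  have h2 := Gmap_rec S y' i
  rw [h] at h1
  rw [h1] at h2
  have : ext0 y i = ext0 y' i := by
    by_cases hh : (i : ℕ) + 1 < d <;> simp [hh] at h2 <;> omega
  rw [ext0_lt y i.2, ext0_lt y' i.2] at this
  simpa using this

section CondS
variable {S : Finset (Fin d)} {v : Fin d → ℕ}

/-- the candidate preimage under `Gmap`. -/
noncomputable def ymap (S : Finset (Fin d)) (v : Fin d → ℕ) : Fin d → ℕ :=
  fun i => v i - (if h : (i : ℕ) + 1 < d then v ⟨(i : ℕ) + 1, h⟩ else 0)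
    - (if i ∈ S then 1 else 0)

lemma condS_consec (hv : condS S v) {k : ℕ} (h : k + 1 < d) :
    v ⟨k + 1, h⟩ ≤ v ⟨k, by omega⟩ := by
  have h1 := hv ⟨k, by omega⟩ (by simpa using h)
  calc v ⟨k+1, h⟩ ≤ v ⟨k+1, h⟩ + (if (⟨k, by omega⟩ : Fin d) ∈ S then 1 else 0) :=
        Nat.le_add_right _ _
    _ ≤ v ⟨k, by omega⟩ := h1

lemma condS_antitone (hv : condS S v) :
    ∀ (n k : ℕ) (h : k + n < d), v ⟨k + n, h⟩ ≤ v ⟨k, by omega⟩ := by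
  intro n
  induction n with
  | zero => intro k h; exact le_refl _
  | succ n ih =>
    intro k h
    exact le_trans (condS_consec hv h) (ih k (by omega))

lemma condS_antitone' (hv : condS S v) {i j : Fin d} (hij : i ≤ j) : v j ≤ v i := by
  obtain ⟨n, hn⟩ := Nat.exists_eq_add_of_le (Fin.le_iff_val_le_val.1 hij)
  have h2 : (i : ℕ) + n < d := by have := j.2; omega
  calc v j = v ⟨(i : ℕ) + n, h2⟩ := congrArg v (Fin.ext hn)
    _ ≤ v ⟨(i : ℕ), by omega⟩ := condS_antitone hv n (i : ℕ) h2
    _ = v i := congrArg v (Fin.eta i i.2)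

lemma condS_strict (hv : condS S v) {i j k : Fin d} (h1 : i ≤ k) (h2 : (k : ℕ) + 1 ≤ (j : ℕ))
    (hk : k ∈ S) : v j < v i := by
  have hkd : (k : ℕ) + 1 < d := by have := j.2; omega
  have ha := hv k hkd
  rw [if_pos hk] at ha
  have hb : v j ≤ v ⟨(k : ℕ) + 1, hkd⟩ := condS_antitone' hv (by
    rw [Fin.le_iff_val_le_val]; exact h2)
  have hc : v k ≤ v i := condS_antitone' hv h1
  omega

lemma ext0_mono (hv : condS S v) {k : ℕ} (h : k + 1 < d) : ext0 v (k+1) ≤ ext0 v k := by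
  rw [ext0_lt v (by omega : k < d), ext0_lt v h]
  exact condS_consec hv h

lemma ymap_pw (hv : condS S v) (hS : ∀ i ∈ S, (i : ℕ) + 1 < d) (k : ℕ) (hk : k < d) :
    ext0 (ymap S v) k + chi S k
      = ext0 v k - (if k + 1 < d then ext0 v (k+1) else 0) := by
  rw [ext0_lt _ hk, ext0_lt _ hk]
  unfold ymap chi
  rw [dif_pos hk]
  simp only [Fin.eta]
  by_cases h1 : k + 1 < d
  · have := hv ⟨k, hk⟩ h1
    simp only [Fin.eta] at this ⊢
    rw [if_pos h1, dif_pos h1, ext0_lt v h1]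
    split_ifs at this ⊢ <;> omega
  · have hmem : (⟨k, hk⟩ : Fin d) ∉ S := fun hm => h1 (hS _ hm)
    rw [if_neg h1, dif_neg h1, if_neg hmem]
    omega

lemma tel (hv : condS S v) :
    ∀ (n k : ℕ), k + n + 1 = d →
      ∑ j ∈ Ico k d, (ext0 v j - (if j + 1 < d then ext0 v (j+1) else 0)) = ext0 v k := by
  intro n
  induction n with
  | zero =>
    intro k hk
    have hIco : Ico k d = {k} := by ext j; simp only [mem_Ico, mem_singleton]; omega
    rw [hIco, Finset.sum_singleton, if_neg (by omega)]
    omega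
  | succ n ih =>
    intro k hk
    rw [Finset.sum_eq_sum_Ico_succ_bot (by omega : k < d)]
    rw [ih (k+1) (by omega)]
    rw [if_pos (by omega)]
    have := ext0_mono hv (show k + 1 < d by omega)
    omega

lemma Gmap_ymap (hv : condS S v) (hS : ∀ i ∈ S, (i : ℕ) + 1 < d) : Gmap S (ymap S v) = v := by
  funext i
  unfold Gmap
  rw [Finset.sum_congr rfl (fun j hj => ymap_pw hv hS j (mem_Ico.1 hj).2)]
  rw [tel hv (d - 1 - (i : ℕ)) (i : ℕ) (by have := i.2; omega)]
  exact ext0_lt v i.2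

end CondS

/-- The key count: chains with prescribed strictness positions. -/
lemma card_condS (S : Finset (Fin d)) (hS : ∀ i ∈ S, (i : ℕ) + 1 < d) (t : ℕ) :
    Nat.card {v : Fin d → ℕ // condS S v ∧ ∑ i, v i = t}
      = if (∑ i ∈ S, ((i : ℕ) + 1)) ≤ t then q d (t - ∑ i ∈ S, ((i : ℕ) + 1)) else 0 := by
  haveI := finite_sum t (condS S)
  set m := ∑ i ∈ S, ((i : ℕ) + 1) with hm
  split_ifs with hmt
  · unfold q
    symm
    apply Nat.card_eq_of_bijective (f := fun y =>
      (⟨Gmap S y.1, Gmap_condS S y.1, by rw [Gmap_sum, y.2]; omega⟩ :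
        {v : Fin d → ℕ // condS S v ∧ ∑ i, v i = t}))
    constructor
    · intro y z hyz
      exact Subtype.ext (Gmap_injective S (congrArg Subtype.val hyz))
    · rintro ⟨v, hv, hvt⟩
      have hG := Gmap_ymap hv hS
      refine ⟨⟨ymap S v, ?_⟩, Subtype.ext hG⟩
      have := Gmap_sum S (ymap S v)
      rw [hG, hvt] at this
      omega
  · rw [Nat.card_eq_zero]
    left
    constructor
    rintro ⟨v, hv, hvt⟩
    have hG := Gmap_ymap hv hS
    have := Gmap_sum S (ymap S v)
    rw [hG, hvt] at this
    omega

lemma strictMono_of_consec {β : Type*} [Preorder β] {f : Fin d → β}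
    (hf : ∀ (k : ℕ) (h : k + 1 < d), f ⟨k, by omega⟩ < f ⟨k + 1, h⟩) : StrictMono f := by
  have main : ∀ (n k : ℕ) (h : k + n + 1 < d), f ⟨k, by omega⟩ < f ⟨k + n + 1, h⟩ := by
    intro n
    induction n with
    | zero => exact fun k h => hf k h
    | succ n ih =>
      intro k h
      exact lt_trans (ih k (by omega)) (hf (k + n + 1) h)
  intro i j hij
  have hij' : (i : ℕ) < (j : ℕ) := hij
  have h1 : (i : ℕ) + ((j : ℕ) - (i : ℕ) - 1) + 1 = (j : ℕ) := by omega
  calc f i = f ⟨(i : ℕ), i.2⟩ := by rw [Fin.eta]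
    _ < f ⟨(i : ℕ) + ((j : ℕ) - (i : ℕ) - 1) + 1, by omega⟩ :=
        main ((j : ℕ) - (i : ℕ) - 1) (i : ℕ) (by omega)
    _ = f j := congrArg f (Fin.ext h1)

section Sorting
variable {α : Type*} [Fintype α] [PartialOrder α]

def desc (L : α → ℕ) (w : Fin d ≃ α) (i : Fin d) : Prop :=
  ∃ h : (i : ℕ) + 1 < d, L (w ⟨(i : ℕ) + 1, h⟩) < L (w i)

open scoped Classical in
noncomputable def DSet (L : α → ℕ) (w : Fin d ≃ α) : Finset (Fin d) :=
  univ.filter (desc L w)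

lemma mem_DSet {L : α → ℕ} {w : Fin d ≃ α} {i : Fin d} : i ∈ DSet L w ↔ desc L w i := by
  simp [DSet]

lemma DSet_lt {L : α → ℕ} {w : Fin d ≃ α} : ∀ i ∈ DSet L w, (i : ℕ) + 1 < d :=
  fun _ hi => (mem_DSet.1 hi).1

def key (L : α → ℕ) (x : α → ℕ) (t : ℕ) (a : α) : ℕ ×ₗ ℕ := toLex (t - x a, L a)

lemma key_lt_iff {L x : α → ℕ} {t : ℕ} {a b : α} (hxa : x a ≤ t) (hxb : x b ≤ t) :
    key L x t a < key L x t b ↔ x b < x a ∨ (x a = x b ∧ L a < L b) := by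
  rw [key, key, Prod.Lex.lt_iff]
  simp only [ofLex_toLex]
  constructor <;> intro h <;> omega

lemma key_injective {L x : α → ℕ} {t : ℕ} (hL : Function.Injective L) :
    Function.Injective (key L x t) := by
  intro a b hab
  unfold key at hab
  have := toLex.injective hab
  exact hL (congrArg Prod.snd this)

lemma condS_iff_strictMono {L : α → ℕ} (hL : Function.Injective L) (w : Fin d ≃ α)
    (x : α → ℕ) (t : ℕ) (hx : ∀ a, x a ≤ t) :
    condS (DSet L w) (x ∘ w) ↔ StrictMono (key L x t ∘ w) := by
  constructor
  · intro hc
    apply strictMono_of_consec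
    intro k h
    have h1 := hc ⟨k, by omega⟩ h
    simp only [Function.comp_apply] at h1 ⊢
    rw [key_lt_iff (hx _) (hx _)]
    rcases lt_or_eq_of_le (le_trans (Nat.le_add_right _ _) h1 :
        x (w ⟨k+1, h⟩) ≤ x (w ⟨k, by omega⟩)) with hlt | heq
    · exact Or.inl hlt
    · right
      refine ⟨heq.symm, ?_⟩
      have hnd : ¬ desc L w ⟨k, by omega⟩ := by
        intro hdes
        rw [if_pos (mem_DSet.2 hdes)] at h1
        omega
      have hne : L (w ⟨k, by omega⟩) ≠ L (w ⟨k+1, h⟩) := by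
        intro he
        have := w.injective (hL he)
        simp [Fin.ext_iff] at this
      have hle : ¬ (L (w ⟨k+1, h⟩) < L (w ⟨k, by omega⟩)) := fun hlt => hnd ⟨h, hlt⟩
      omega
  · intro hm i h
    have hlt : (⟨(i : ℕ), i.2⟩ : Fin d) < ⟨(i : ℕ) + 1, h⟩ := by
      simp [Fin.lt_def]
    have h1 := hm hlt
    simp only [Function.comp_apply, Fin.eta] at h1
    rw [key_lt_iff (hx _) (hx _)] at h1
    simp only [Function.comp_apply]
    rcases h1 with hlt' | ⟨heq, hL'⟩
    · have : (if i ∈ DSet L w then 1 else 0) ≤ 1 := by split_ifs <;> omega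
      omega
    · have hnd : i ∉ DSet L w := by
        rw [mem_DSet]
        rintro ⟨h', hlt''⟩
        have : L (w ⟨(i : ℕ) + 1, h'⟩) = L (w ⟨(i : ℕ) + 1, h⟩) := rfl
        omega
      rw [if_neg hnd]
      omega

lemma sort_exists (hd : Fintype.card α = d) (K : α → ℕ ×ₗ ℕ) (hK : Function.Injective K) :
    ∃ w : Fin d ≃ α, StrictMono (K ∘ w) := by
  let e : Fin d ≃ α := (Fintype.equivFinOfCardEq hd).symm
  refine ⟨(Tuple.sort (K ∘ e)).trans e, ?_⟩
  have hmono : Monotone ((K ∘ e) ∘ (Tuple.sort (K ∘ e))) := Tuple.monotone_sort (K ∘ e)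
  exact hmono.strictMono_of_injective
    (hK.comp (e.injective.comp (Tuple.sort (K ∘ e)).injective))

lemma sort_unique {K : α → ℕ ×ₗ ℕ} (hK : Function.Injective K) {w w' : Fin d ≃ α}
    (h1 : StrictMono (K ∘ w)) (h2 : StrictMono (K ∘ w')) : w = w' := by
  have hr : Set.range (K ∘ w) = Set.range (K ∘ w') := by
    rw [Set.range_comp, Set.range_comp, Equiv.range_eq_univ, Equiv.range_eq_univ]
  haveI : WellFoundedLT (Fin d) := inferInstance
  have := (StrictMono.range_inj h1 h2).1 hr
  ext i
  exact hK (congrFun this i)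

end Sorting

section Master
variable {α : Type*} [Fintype α] [PartialOrder α]

/-- `w` is a linear extension listing. -/
def Ew (w : Fin d ≃ α) : Prop := ∀ a b : α, a < b → w.symm a < w.symm b

open scoped Classical in
noncomputable def EwSet (α : Type*) [Fintype α] [PartialOrder α] (d : ℕ) :
    Finset (Fin d ≃ α) := univ.filter Ew

lemma mem_EwSet {w : Fin d ≃ α} : w ∈ EwSet α d ↔ Ew w := by simp [EwSet]

lemma sum_comp_symm (w : Fin d ≃ α) (v : Fin d → ℕ) :
    ∑ a, (v ∘ w.symm) a = ∑ i, v i := by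
  simp only [Function.comp_apply]
  exact Equiv.sum_comp w.symm v

lemma master (hd : Fintype.card α = d) (L : α → ℕ) (hL : Function.Injective L)
    (P : (α → ℕ) → Prop) (t : ℕ)
    (H1 : ∀ (x : α → ℕ) (w : Fin d ≃ α), P x → condS (DSet L w) (x ∘ w) → Ew w)
    (H2 : ∀ (x : α → ℕ) (w : Fin d ≃ α), Ew w → condS (DSet L w) (x ∘ w) → P x) :
    Nat.card {x : α → ℕ // P x ∧ ∑ a, x a = t}
      = ∑ w ∈ EwSet α d, (if (∑ i ∈ DSet L w, ((i : ℕ) + 1)) ≤ t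
          then q d (t - ∑ i ∈ DSet L w, ((i : ℕ) + 1)) else 0) := by
  classical
  haveI : Finite {x : α → ℕ // P x ∧ ∑ a, x a = t} := finite_sum t P
  let T : (Fin d ≃ α) → Type _ :=
    fun w => {v : Fin d → ℕ // condS (DSet L w) v ∧ ∑ i, v i = t}
  haveI hTf : ∀ w, Finite (T w) := fun w => finite_sum t _
  have key1 : Nat.card ((w : {w : Fin d ≃ α // Ew w}) × T w.1)
      = Nat.card {x : α → ℕ // P x ∧ ∑ a, x a = t} := by
    apply Nat.card_eq_of_bijective (f := fun p =>
      ⟨p.2.1 ∘ p.1.1.symm, by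
          apply H2 _ p.1.1 p.1.2
          have : (p.2.1 ∘ p.1.1.symm) ∘ p.1.1 = p.2.1 := by
            funext i; simp
          rw [this]
          exact p.2.2.1, by
          rw [sum_comp_symm p.1.1 p.2.1]
          exact p.2.2.2⟩)
    constructor
    · rintro ⟨⟨w1, hw1⟩, v1, hv1, hs1⟩ ⟨⟨w2, hw2⟩, v2, hv2, hs2⟩ h
      have hfx : v1 ∘ w1.symm = v2 ∘ w2.symm := congrArg Subtype.val h
      have hxw1 : (v1 ∘ w1.symm) ∘ w1 = v1 := by funext i; simp
      have hxw2 : (v1 ∘ w1.symm) ∘ w2 = v2 := by rw [hfx]; funext i; simp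
      have hsum : ∑ a, (v1 ∘ w1.symm) a = t := by
        rw [sum_comp_symm w1 v1]; exact hs1
      have hx : ∀ a, (v1 ∘ w1.symm) a ≤ t := by
        intro a
        rw [← hsum]
        exact Finset.single_le_sum (f := fun a => (v1 ∘ w1.symm) a)
          (fun _ _ => Nat.zero_le _) (mem_univ a)
      have hc1 : condS (DSet L w1) ((v1 ∘ w1.symm) ∘ w1) := by rw [hxw1]; exact hv1
      have hc2 : condS (DSet L w2) ((v1 ∘ w1.symm) ∘ w2) := by rw [hxw2]; exact hv2
      have hm1 := (condS_iff_strictMono hL w1 (v1 ∘ w1.symm) t hx).1 hc1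
      have hm2 := (condS_iff_strictMono hL w2 (v1 ∘ w1.symm) t hx).1 hc2
      have hw : w1 = w2 := sort_unique (key_injective hL) hm1 hm2
      subst hw
      have hv : v1 = v2 := by rw [← hxw1, ← hxw2]
      subst hv
      rfl
    · rintro ⟨x, hP, hsum⟩
      have hx : ∀ a, x a ≤ t := by
        intro a
        rw [← hsum]
        exact Finset.single_le_sum (f := fun a => x a) (fun _ _ => Nat.zero_le _) (mem_univ a)
      obtain ⟨w, hsm⟩ := sort_exists hd (key L x t) (key_injective hL)
      have hcond : condS (DSet L w) (x ∘ w) := (condS_iff_strictMono hL w x t hx).2 hsm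
      refine ⟨⟨⟨w, H1 x w hP hcond⟩, ⟨x ∘ w, hcond, ?_⟩⟩, ?_⟩
      · rw [show ∑ i, (x ∘ w) i = ∑ a, x a by
              simp only [Function.comp_apply]; exact Equiv.sum_comp w x]
        exact hsum
      · apply Subtype.ext
        funext a
        simp
  rw [← key1]
  haveI : ∀ w : {w : Fin d ≃ α // Ew w}, Fintype (T w.1) := fun w => Fintype.ofFinite _
  rw [Nat.card_eq_fintype_card, Fintype.card_sigma]
  rw [Finset.sum_subtype (EwSet α d) (fun w => mem_EwSet) (fun w =>
    (if (∑ i ∈ DSet L w, ((i : ℕ) + 1)) ≤ t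
          then q d (t - ∑ i ∈ DSet L w, ((i : ℕ) + 1)) else 0))]
  apply Finset.sum_congr rfl
  intro w _
  rw [← card_condS (DSet L w.1) DSet_lt t, Nat.card_eq_fintype_card]

end Master


section Chains
variable {α : Type*} [Fintype α] [PartialOrder α] {L : α → ℕ} {w : Fin d ≃ α} {v : Fin d → ℕ}

/-- `ℕ`-indexed version of the label sequence. -/
lemma nodesc_step (hL : Function.Injective L) {k : ℕ} (h : k + 1 < d)
    (hnd : ¬ desc L w ⟨k, by omega⟩) :
    ext0 (fun i => L (w i)) k < ext0 (fun i => L (w i)) (k + 1) := by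
  rw [ext0_lt _ (by omega : k < d), ext0_lt _ h]
  have h1 : ¬ (L (w ⟨k + 1, h⟩) < L (w ⟨k, by omega⟩)) := fun hlt => hnd ⟨h, hlt⟩
  have hne : L (w ⟨k, by omega⟩) ≠ L (w ⟨k + 1, h⟩) := by
    intro he
    have := w.injective (hL he)
    simp [Fin.ext_iff] at this
  omega

lemma nodesc_chain_nat (hL : Function.Injective L) :
    ∀ (n k : ℕ), k + n + 1 < d →
      (∀ (m : ℕ) (hm : m < d), k ≤ m → m < k + n + 1 → ¬ desc L w ⟨m, hm⟩) →
      ext0 (fun i => L (w i)) k < ext0 (fun i => L (w i)) (k + n + 1) := by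
  intro n
  induction n with
  | zero =>
    intro k h hnd
    exact nodesc_step hL h (hnd k (by omega) le_rfl (by omega))
  | succ n ih =>
    intro k h hnd
    have h1 := ih k (by omega) (fun m hm hm1 hm2 => hnd m hm hm1 (by omega))
    have h2 := nodesc_step (w := w) hL (show (k + n + 1) + 1 < d by omega)
      (hnd (k + n + 1) (by omega) (by omega) (by omega))
    have he : k + n + 1 + 1 = k + (n + 1) + 1 := by omega
    rw [he] at h2
    omega

/-- if there is no descent in `[i, j)` then the labels increase. -/
lemma nodesc_chain (hL : Function.Injective L) {i j : Fin d} (hij : i < j)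
    (hnd : ∀ k : Fin d, i ≤ k → (k : ℕ) < (j : ℕ) → ¬ desc L w k) :
    L (w i) < L (w j) := by
  have hij' : (i : ℕ) < (j : ℕ) := hij
  have h1 := nodesc_chain_nat (w := w) hL ((j : ℕ) - (i : ℕ) - 1) (i : ℕ)
    (by have := j.2; omega)
    (by
      intro m hm hm1 hm2
      exact hnd ⟨m, hm⟩ (by rw [Fin.le_def]; exact hm1) (by show m < (j : ℕ); omega))
  have he : (i : ℕ) + ((j : ℕ) - (i : ℕ) - 1) + 1 = (j : ℕ) := by omega
  rw [he, ext0_lt _ i.2, ext0_lt _ j.2] at h1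
  simpa using h1

/-- if two entries of a chain are equal then the labels increase in between. -/
lemma eq_chain (hL : Function.Injective L) (hv : condS (DSet L w) v) {i j : Fin d}
    (hij : i < j) (heq : v i = v j) : L (w i) < L (w j) := by
  apply nodesc_chain hL hij
  intro k hk1 hk2 hdes
  have := condS_strict hv hk1 hk2 (mem_DSet.2 hdes)
  omega

end Chains

section Hyps
variable {α : Type*} [Fintype α] [PartialOrder α]

lemma H1_weak {ℓ : α → ℕ} (hinj : Function.Injective ℓ) (hnat : ∀ a b : α, a < b → ℓ a < ℓ b)
    (x : α → ℕ) (w : Fin d ≃ α) (hP : ∀ a b : α, a ≤ b → x b ≤ x a)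
    (hc : condS (DSet ℓ w) (x ∘ w)) : Ew w := by
  intro a b hab
  have hla : ℓ a < ℓ b := hnat a b hab
  have hne : w.symm a ≠ w.symm b := fun he => absurd (w.symm.injective he) (ne_of_lt hab)
  rcases lt_trichotomy (w.symm a) (w.symm b) with h | h | h
  · exact h
  · exact absurd h hne
  · exfalso
    have h1 : (x ∘ w) (w.symm a) ≤ (x ∘ w) (w.symm b) := condS_antitone' hc (le_of_lt h)
    simp only [Function.comp_apply, Equiv.apply_symm_apply] at h1
    have h2 : x b ≤ x a := hP a b (le_of_lt hab)
    have heq : (x ∘ w) (w.symm b) = (x ∘ w) (w.symm a) := by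
      simp only [Function.comp_apply, Equiv.apply_symm_apply]
      omega
    have := eq_chain hinj hc h heq
    simp only [Equiv.apply_symm_apply] at this
    omega

lemma H2_weak {ℓ : α → ℕ} (x : α → ℕ) (w : Fin d ≃ α) (hEw : Ew w)
    (hc : condS (DSet ℓ w) (x ∘ w)) : ∀ a b : α, a ≤ b → x b ≤ x a := by
  intro a b hab
  rcases eq_or_lt_of_le hab with rfl | hab'
  · exact le_refl _
  · have h1 : (x ∘ w) (w.symm b) ≤ (x ∘ w) (w.symm a) :=
      condS_antitone' hc (le_of_lt (hEw a b hab'))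
    simpa using h1

lemma H1_strict {L' : α → ℕ} (x : α → ℕ) (w : Fin d ≃ α)
    (hP : ∀ a b : α, a < b → x b < x a) (hc : condS (DSet L' w) (x ∘ w)) : Ew w := by
  intro a b hab
  have hne : w.symm a ≠ w.symm b := fun he => absurd (w.symm.injective he) (ne_of_lt hab)
  rcases lt_trichotomy (w.symm a) (w.symm b) with h | h | h
  · exact h
  · exact absurd h hne
  · exfalso
    have h1 : (x ∘ w) (w.symm a) ≤ (x ∘ w) (w.symm b) := condS_antitone' hc (le_of_lt h)
    simp only [Function.comp_apply, Equiv.apply_symm_apply] at h1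
    have h2 : x b < x a := hP a b hab
    omega

lemma H2_strict {ℓ L' : α → ℕ} (hinj' : Function.Injective L')
    (hnat : ∀ a b : α, a < b → ℓ a < ℓ b) (M : ℕ) (hM : ∀ a, ℓ a ≤ M)
    (hLdef : ∀ a, L' a = M - ℓ a)
    (x : α → ℕ) (w : Fin d ≃ α) (hEw : Ew w)
    (hc : condS (DSet L' w) (x ∘ w)) : ∀ a b : α, a < b → x b < x a := by
  intro a b hab
  have hij : w.symm a < w.symm b := hEw a b hab
  by_cases hex : ∃ k : Fin d, w.symm a ≤ k ∧ (k : ℕ) + 1 ≤ ((w.symm b : Fin d) : ℕ)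
      ∧ k ∈ DSet L' w
  · obtain ⟨k, hk1, hk2, hk3⟩ := hex
    have := condS_strict hc hk1 hk2 hk3
    simpa using this
  · exfalso
    push_neg at hex
    have h1 : L' (w (w.symm a)) < L' (w (w.symm b)) := by
      apply nodesc_chain hinj' hij
      intro k hk1 hk2 hdes
      exact hex k hk1 (by omega) (mem_DSet.2 hdes)
    simp only [Equiv.apply_symm_apply] at h1
    rw [hLdef a, hLdef b] at h1
    have h2 := hnat a b hab
    have h3 := hM a
    have h4 := hM b
    omega

end Hyps

section Labeling
variable (α : Type*) [Fintype α] [PartialOrder α]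

lemma exists_labeling :
    ∃ ℓ : α → ℕ, Function.Injective ℓ ∧ ∀ a b : α, a < b → ℓ a < ℓ b := by
  classical
  haveI : Fintype (LinearExtension α) := ‹Fintype α›
  let e := (monoEquivOfFin (LinearExtension α) rfl).symm
  refine ⟨fun a => (e (toLinearExtension a) : ℕ), ?_, ?_⟩
  · intro a b hab
    have h1 : e (toLinearExtension a) = e (toLinearExtension b) := Fin.ext hab
    exact e.injective h1
  · intro a b hab
    have h1 : toLinearExtension (α := α) a ≤ toLinearExtension b :=
      toLinearExtension.monotone' (le_of_lt hab)
    have h2 : toLinearExtension (α := α) a ≠ toLinearExtension b := by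
      intro he
      exact absurd (show a = b from he) (ne_of_lt hab)
    have h3 : toLinearExtension (α := α) a < toLinearExtension b := lt_of_le_of_ne h1 h2
    exact e.strictMono h3

end Labeling

section MajArith
variable {α : Type*} [Fintype α] [PartialOrder α]

open scoped Classical in
noncomputable def NonLast (d : ℕ) : Finset (Fin d) := univ.filter (fun i => (i : ℕ) + 1 < d)

lemma sum_nonlast (d : ℕ) : ∑ i ∈ NonLast d, ((i : ℕ) + 1) = d * (d - 1) / 2 := by
  classical
  have h1 : ∑ i ∈ NonLast d, ((i : ℕ) + 1)
      = ∑ i : Fin d, (if (i : ℕ) + 1 < d then (i : ℕ) + 1 else 0) := by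
    rw [NonLast, Finset.sum_filter]
  rw [h1, Fin.sum_univ_eq_sum_range (fun k => if k + 1 < d then k + 1 else 0) d]
  rcases Nat.eq_zero_or_pos d with rfl | hd
  · simp
  · obtain ⟨e, rfl⟩ := Nat.exists_eq_succ_of_ne_zero (by omega : d ≠ 0)
    rw [Finset.sum_range_succ, if_neg (by omega)]
    rw [Finset.sum_congr rfl (fun k hk => if_pos (by simp only [mem_range] at hk; omega))]
    rw [add_zero]
    have h2 : ∑ k ∈ range e, (k + 1) = ∑ k ∈ range (e + 1), k := by
      rw [Finset.sum_range_succ']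
      simp
    rw [h2, Finset.sum_range_id]

lemma DSet_subset_nonlast (L : α → ℕ) (w : Fin d ≃ α) : DSet L w ⊆ NonLast d := by
  intro i hi
  simp only [NonLast, mem_filter, mem_univ, true_and]
  exact DSet_lt i hi

lemma maj_le (L : α → ℕ) (w : Fin d ≃ α) :
    ∑ i ∈ DSet L w, ((i : ℕ) + 1) ≤ d * (d - 1) / 2 := by
  rw [← sum_nonlast d]
  exact Finset.sum_le_sum_of_subset (DSet_subset_nonlast L w)

lemma DSet_compl {ℓ L' : α → ℕ} (hinj : Function.Injective ℓ) (M : ℕ) (hM : ∀ a, ℓ a ≤ M)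
    (hLdef : ∀ a, L' a = M - ℓ a) (w : Fin d ≃ α) :
    DSet L' w = NonLast d \ DSet ℓ w := by
  ext i
  simp only [mem_DSet, mem_sdiff, NonLast, mem_filter, mem_univ, true_and]
  constructor
  · rintro ⟨h, hlt⟩
    rw [hLdef, hLdef] at hlt
    have h1 := hM (w ⟨(i : ℕ) + 1, h⟩)
    have h2 := hM (w i)
    have h3 : ℓ (w i) < ℓ (w ⟨(i : ℕ) + 1, h⟩) := by omega
    refine ⟨h, ?_⟩
    rintro ⟨h', hlt'⟩
    omega
  · rintro ⟨h, hnd⟩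
    refine ⟨h, ?_⟩
    have h1 : ¬ (ℓ (w ⟨(i : ℕ) + 1, h⟩) < ℓ (w i)) := fun hlt => hnd ⟨h, hlt⟩
    have hne : ℓ (w i) ≠ ℓ (w ⟨(i : ℕ) + 1, h⟩) := by
      intro he
      have := w.injective (hinj he)
      simp [Fin.ext_iff] at this
    rw [hLdef, hLdef]
    have h2 := hM (w ⟨(i : ℕ) + 1, h⟩)
    have h3 := hM (w i)
    omega

lemma comaj_eq {ℓ L' : α → ℕ} (hinj : Function.Injective ℓ) (M : ℕ) (hM : ∀ a, ℓ a ≤ M)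
    (hLdef : ∀ a, L' a = M - ℓ a) (w : Fin d ≃ α) :
    ∑ i ∈ DSet L' w, ((i : ℕ) + 1)
      = d * (d - 1) / 2 - ∑ i ∈ DSet ℓ w, ((i : ℕ) + 1) := by
  rw [DSet_compl hinj M hM hLdef w]
  have h1 : ∑ i ∈ NonLast d \ DSet ℓ w, ((i : ℕ) + 1) + ∑ i ∈ DSet ℓ w, ((i : ℕ) + 1)
      = d * (d - 1) / 2 := by
    rw [← sum_nonlast d]
    exact Finset.sum_sdiff (f := fun i : Fin d => ((i : ℕ) + 1)) (DSet_subset_nonlast ℓ w)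
  omega

end MajArith

section Series
variable {α : Type*} [Fintype α] [PartialOrder α]

lemma series_eq (hd : Fintype.card α = d) (L : α → ℕ) (hL : Function.Injective L)
    (P : (α → ℕ) → Prop)
    (H1 : ∀ (x : α → ℕ) (w : Fin d ≃ α), P x → condS (DSet L w) (x ∘ w) → Ew w)
    (H2 : ∀ (x : α → ℕ) (w : Fin d ≃ α), Ew w → condS (DSet L w) (x ∘ w) → P x) :
    (PowerSeries.mk fun t => (Nat.card {x : α → ℕ // P x ∧ ∑ a, x a = t} : ℤ))
      = (∑ w ∈ EwSet α d, (X : PowerSeries ℤ) ^ (∑ i ∈ DSet L w, ((i : ℕ) + 1)))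
        * PowerSeries.mk (fun s => (q d s : ℤ)) := by
  ext t
  rw [coeff_mk, master hd L hL P t H1 H2, Finset.sum_mul, map_sum]
  push_cast
  apply Finset.sum_congr rfl
  intro w _
  rw [mul_comm, PowerSeries.coeff_mul_X_pow', coeff_mk]

lemma poly_eq (hd : Fintype.card α = d) (L : α → ℕ) (hL : Function.Injective L)
    (P : (α → ℕ) → Prop)
    (H1 : ∀ (x : α → ℕ) (w : Fin d ≃ α), P x → condS (DSet L w) (x ∘ w) → Ew w)
    (H2 : ∀ (x : α → ℕ) (w : Fin d ≃ α), Ew w → condS (DSet L w) (x ∘ w) → P x) :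
    (PowerSeries.mk fun t => (Nat.card {x : α → ℕ // P x ∧ ∑ a, x a = t} : ℤ))
        * ∏ i ∈ range d, (1 - (X : PowerSeries ℤ) ^ (i + 1))
      = ∑ w ∈ EwSet α d, (X : PowerSeries ℤ) ^ (∑ i ∈ DSet L w, ((i : ℕ) + 1)) := by
  rw [series_eq hd L hL P H1 H2, mul_assoc, mkq_prod, mul_one]

lemma coeff_powsum (k : ℕ) (m : (Fin d ≃ α) → ℕ) :
    (PowerSeries.coeff k) (∑ w ∈ EwSet α d, (X : PowerSeries ℤ) ^ (m w))
      = ∑ w ∈ EwSet α d, (if k = m w then 1 else 0) := by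
  rw [map_sum]
  apply Finset.sum_congr rfl
  intro w _
  rw [PowerSeries.coeff_X_pow]

end Series

end PPRec

open PPRec in
/-- **Stanley's P-partition reciprocity.** Let `Π` be a finite poset with `d` elements,
`p_Π(t)` the number of `Π`-partitions of `t` (order-reversing maps `Π → ℤ_{≥0}` with entry
sum `t`), and `p_Π°(t)` the number of strict `Π`-partitions of `t`. Setting
`A(z) = P_Π(z) ∏_{i=1}^d (1-z^i)` and `B(z) = P_Π°(z) ∏_{i=1}^d (1-z^i)`, both `A` and `B`
are polynomials of degree at most `d(d-1)/2`, and `B(z) = z^{d(d-1)/2} A(1/z)`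
coefficientwise. This is the reciprocity `P_Π(1/z) = (-z)^{|Π|} P_Π°(z)`. -/
theorem ppartition_reciprocity {α : Type*} [Fintype α] [PartialOrder α]
    (d : ℕ) (hd : Fintype.card α = d)
    (A B : PowerSeries ℤ)
    (hA : A = (PowerSeries.mk fun t =>
        (Nat.card {x : α → ℕ // (∀ a b : α, a ≤ b → x b ≤ x a) ∧ ∑ a, x a = t} : ℤ))
      * ∏ i ∈ Finset.range d, (1 - PowerSeries.X ^ (i + 1)))
    (hB : B = (PowerSeries.mk fun t =>
        (Nat.card {x : α → ℕ // (∀ a b : α, a < b → x b < x a) ∧ ∑ a, x a = t} : ℤ))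
      * ∏ i ∈ Finset.range d, (1 - PowerSeries.X ^ (i + 1))) :
    (∀ k : ℕ, d * (d - 1) / 2 < k →
      PowerSeries.coeff k A = 0 ∧ PowerSeries.coeff k B = 0) ∧
    (∀ k : ℕ, k ≤ d * (d - 1) / 2 →
      PowerSeries.coeff k B = PowerSeries.coeff (d * (d - 1) / 2 - k) A) := by
  classical
  obtain ⟨ℓ, hinj, hnat⟩ := exists_labeling α
  set M := ∑ a, ℓ a with hMdef
  have hM : ∀ a, ℓ a ≤ M :=
    fun a => Finset.single_le_sum (f := fun a => ℓ a) (fun _ _ => Nat.zero_le _)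
      (Finset.mem_univ a)
  set L' := fun a => M - ℓ a with hL'def
  have hLdef : ∀ a, L' a = M - ℓ a := fun a => rfl
  have hinj' : Function.Injective L' := by
    intro a b hab
    apply hinj
    have h1 := hM a
    have h2 := hM b
    simp only [hL'def] at hab
    omega
  have hAW : A = ∑ w ∈ EwSet α d, (PowerSeries.X : PowerSeries ℤ)
      ^ (∑ i ∈ DSet ℓ w, ((i : ℕ) + 1)) := by
    rw [hA]
    exact poly_eq hd ℓ hinj _ (fun x w hP hc => H1_weak hinj hnat x w hP hc)
      (fun x w hE hc => H2_weak x w hE hc)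
  have hBW : B = ∑ w ∈ EwSet α d, (PowerSeries.X : PowerSeries ℤ)
      ^ (∑ i ∈ DSet L' w, ((i : ℕ) + 1)) := by
    rw [hB]
    exact poly_eq hd L' hinj' _ (fun x w hP hc => H1_strict x w hP hc)
      (fun x w hE hc => H2_strict hinj' hnat M hM hLdef x w hE hc)
  have hBW' : B = ∑ w ∈ EwSet α d, (PowerSeries.X : PowerSeries ℤ)
      ^ (d * (d - 1) / 2 - ∑ i ∈ DSet ℓ w, ((i : ℕ) + 1)) := by
    rw [hBW]
    exact Finset.sum_congr rfl (fun w _ => by rw [comaj_eq hinj M hM hLdef w])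
  constructor
  · intro k hk
    constructor
    · rw [hAW, coeff_powsum k (fun w => ∑ i ∈ DSet ℓ w, ((i : ℕ) + 1))]
      apply Finset.sum_eq_zero
      intro w _
      rw [if_neg]
      have := maj_le ℓ w
      omega
    · rw [hBW', coeff_powsum k
        (fun w => d * (d - 1) / 2 - ∑ i ∈ DSet ℓ w, ((i : ℕ) + 1))]
      apply Finset.sum_eq_zero
      intro w _
      rw [if_neg]
      have := maj_le ℓ w
      omega
  · intro k hk
    rw [hAW, hBW',
      coeff_powsum k (fun w => d * (d - 1) / 2 - ∑ i ∈ DSet ℓ w, ((i : ℕ) + 1)),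
      coeff_powsum (d * (d - 1) / 2 - k) (fun w => ∑ i ∈ DSet ℓ w, ((i : ℕ) + 1))]
    apply Finset.sum_congr rfl
    intro w _
    have hle := maj_le ℓ w
    have hiff : (k = d * (d - 1) / 2 - ∑ i ∈ DSet ℓ w, ((i : ℕ) + 1))
        ↔ (d * (d - 1) / 2 - k = ∑ i ∈ DSet ℓ w, ((i : ℕ) + 1)) := by omega
    rw [if_congr hiff rfl rfl]
end

section
/- Let G = (V,E) be a finite simple graph and let H_G = {x ∈ ℝ^V : x_i = x_j}_{ij ∈ E} be its graphical arrangement. Then there is a bijection between the regions of H_G (connected components of ℝ^V \ ⋃H_G) and the acyclic orientations of G: each region R corresponds to the orientation that directs each edge ij ∈ E from i to j exactly when x_i < x_j holds for all x ∈ R, and this correspondence is a bijection onto the set of acyclic orientations of G. -/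
section Aux

variable {V : Type*} [Fintype V] (G : SimpleGraph V)

/-- The complement of the graphical arrangement. -/
private def greeneS : Set (V → ℝ) := {x : V → ℝ | ∀ i j, G.Adj i j → x i ≠ x j}

omit [Fintype V] in
private lemma greene_sign_const {y : V → ℝ} (hy : y ∈ greeneS G) {i j : V}
    (hadj : G.Adj i j) (hij : y i < y j) :
    ∀ x ∈ connectedComponentIn (greeneS G) y, x i < x j := by
  intro x hx
  by_contra hcon
  push_neg at hcon
  set R := connectedComponentIn (greeneS G) y with hR
  have hRpre : IsPreconnected R := isPreconnected_connectedComponentIn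
  have hRsub : R ⊆ greeneS G := connectedComponentIn_subset _ _
  have hyR : y ∈ R := mem_connectedComponentIn hy
  have hg : Continuous fun z : V → ℝ => z j - z i :=
    (continuous_apply j).sub (continuous_apply i)
  have himg : IsPreconnected ((fun z : V → ℝ => z j - z i) '' R) :=
    hRpre.image _ hg.continuousOn
  have h0 : (0 : ℝ) ∈ Set.Icc (x j - x i) (y j - y i) := by
    constructor <;> linarith
  have := himg.Icc_subset ⟨x, hx, rfl⟩ ⟨y, hyR, rfl⟩ h0
  obtain ⟨z, hzR, hz0⟩ := this
  have : z i = z j := by linarith [sub_eq_zero.mp hz0]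
  exact hRsub hzR i j hadj this

private lemma greene_combo_lt {xi xj zi zj a b : ℝ} (ha : 0 ≤ a) (hb : 0 ≤ b)
    (hab : a + b = 1) (h1 : xi < xj) (h2 : zi < zj) :
    a * xi + b * zi < a * xj + b * zj := by
  rcases ha.eq_or_lt with rfl | ha'
  · have hb1 : b = 1 := by linarith
    subst hb1; linarith
  · have h3 := mul_lt_mul_of_pos_left h1 ha'
    have h4 := mul_le_mul_of_nonneg_left h2.le hb
    linarith

end Aux


/-- **Greene's lemma.** The regions of the graphical arrangement `H_G` of a finite simple
graph `G` (connected components of `ℝ^V ∖ ⋃ H_G`) are in bijection with the acyclic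
orientations of `G`, where a region `R` corresponds to the orientation that directs the edge
`ij` from `i` to `j` exactly when `x_i < x_j` for all `x ∈ R`. -/
theorem greene_regions_acyclic_orientations {V : Type*} [Fintype V] (G : SimpleGraph V) :
    Set.BijOn (fun R : Set (V → ℝ) => fun i j : V => G.Adj i j ∧ ∀ x ∈ R, x i < x j)
      {R : Set (V → ℝ) | ∃ y ∈ {x : V → ℝ | ∀ i j, G.Adj i j → x i ≠ x j},
        R = connectedComponentIn {x : V → ℝ | ∀ i j, G.Adj i j → x i ≠ x j} y}
      {o : V → V → Prop | IsAcyclicOrientation G o} := by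
  set S := {x : V → ℝ | ∀ i j, G.Adj i j → x i ≠ x j} with hSdef
  have hSeq : S = greeneS G := rfl
  set Φ := fun R : Set (V → ℝ) => fun i j : V => G.Adj i j ∧ ∀ x ∈ R, x i < x j with hΦ
  -- characterization of Φ on a region in terms of the base point
  have hchar : ∀ y ∈ S, ∀ i j : V, G.Adj i j →
      (Φ (connectedComponentIn S y) i j ↔ y i < y j) := by
    intro y hy i j hadj
    constructor
    · rintro ⟨-, hall⟩
      exact hall y (mem_connectedComponentIn hy)
    · intro hlt
      exact ⟨hadj, greene_sign_const G hy hadj hlt⟩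
  refine ⟨?_, ?_, ?_⟩
  · -- MapsTo
    rintro R ⟨y, hy, rfl⟩
    have hyR : y ∈ connectedComponentIn S y := mem_connectedComponentIn hy
    have hkey : ∀ i j : V, Φ (connectedComponentIn S y) i j → y i < y j := by
      rintro i j ⟨-, hall⟩; exact hall y hyR
    refine ⟨⟨fun i j h => h.1, ?_⟩, ?_⟩
    · intro i j hadj
      rw [hchar y hy i j hadj, hchar y hy j i hadj.symm]
      have hne : y i ≠ y j := hy i j hadj
      exact ⟨fun h => not_lt.mpr h.le, fun h => (hne.lt_or_gt).resolve_right h⟩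
    · intro i hi
      have : ∀ a b, Relation.TransGen (Φ (connectedComponentIn S y)) a b → y a < y b := by
        intro a b h
        induction h with
        | single h => exact hkey _ _ h
        | tail _ h ih => exact ih.trans (hkey _ _ h)
      exact lt_irrefl _ (this i i hi)
  · -- InjOn
    rintro R1 ⟨y1, hy1, rfl⟩ R2 ⟨y2, hy2, rfl⟩ heq
    have hiff : ∀ i j : V, G.Adj i j → (y1 i < y1 j ↔ y2 i < y2 j) := by
      intro i j hadj
      rw [← hchar y1 hy1 i j hadj, ← hchar y2 hy2 i j hadj]
      rw [hΦ] at heq ⊢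
      exact iff_of_eq (congrFun (congrFun heq i) j)
    set C : Set (V → ℝ) := {x | ∀ i j : V, G.Adj i j → y1 i < y1 j → x i < x j} with hC
    have hCconv : Convex ℝ C := by
      intro x hx z hz a b ha hb hab
      intro i j hadj hlt
      have h1 := hx i j hadj hlt
      have h2 := hz i j hadj hlt
      simpa [smul_eq_mul] using greene_combo_lt ha hb hab h1 h2
    have hCS : C ⊆ S := by
      intro x hx i j hadj
      rcases (hy1 i j hadj).lt_or_gt with h | h
      · exact (hx i j hadj h).ne
      · exact (hx j i hadj.symm h).ne'
    have hy1C : y1 ∈ C := fun i j _ h => h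
    have hy2C : y2 ∈ C := fun i j hadj h => (hiff i j hadj).mp h
    have hsub : C ⊆ connectedComponentIn S y1 :=
      hCconv.isPreconnected.subset_connectedComponentIn hy1C hCS
    exact (connectedComponentIn_eq (hsub hy2C)).symm ▸ rfl
  · -- SurjOn
    rintro o ⟨⟨ho1, ho2⟩, ho3⟩
    have hirr : ∀ i, ¬ Relation.TransGen o i i := ho3
    set f : V → ℕ := fun i => (Set.toFinite {k | Relation.TransGen o k i}).toFinset.card with hf
    have hmono : ∀ i j, o i j → f i < f j := by
      intro i j hij
      apply Finset.card_lt_card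
      constructor
      · intro k hk
        simp only [Set.Finite.mem_toFinset, Set.mem_setOf_eq] at hk ⊢
        exact hk.tail hij
      · intro hsub
        have : i ∈ (Set.toFinite {k | Relation.TransGen o k j}).toFinset := by
          simp only [Set.Finite.mem_toFinset, Set.mem_setOf_eq]
          exact Relation.TransGen.single hij
        have := hsub this
        simp only [Set.Finite.mem_toFinset, Set.mem_setOf_eq] at this
        exact hirr i this
    set y : V → ℝ := fun i => (f i : ℝ) with hy
    have hylt : ∀ i j, o i j → y i < y j := by
      intro i j h; simp only [hy]; exact_mod_cast hmono i j h
    have hyS : y ∈ S := by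
      intro i j hadj
      by_cases h : o i j
      · exact (hylt i j h).ne
      · have : o j i := by
          have := ho2 j i hadj.symm
          tauto
        exact (hylt j i this).ne'
    refine ⟨connectedComponentIn S y, ⟨y, hyS, rfl⟩, ?_⟩
    funext i j
    apply propext
    constructor
    · rintro ⟨hadj, hall⟩
      have hlt := hall y (mem_connectedComponentIn hyS)
      by_contra h
      have hji : o j i := by have := ho2 i j hadj; tauto
      exact absurd hlt (not_lt.mpr (hylt j i hji).le)
    · intro h
      exact ⟨ho1 i j h, greene_sign_const G hyS (ho1 i j h) (hylt i j h)⟩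
end
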